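/- arXiv:1410.3335 — 11 statements merged into one kernel-verified Lean document; each statement's English description precedes it below -/
import Mathlib

section
/- Under these assumptions, the integral ∫₀^∞ ‖y(t)‖² dt converges and equals tr X, the trace of the solution of the Lyapunov equation AX + XAᵀ = −y₀y₀ᵀ. -/
open Matrix MeasureTheory
open scoped Kronecker

/-- Matrix exponential over ℝ. -/
noncomputable def mexp {k : ℕ} (M : Matrix (Fin k) (Fin k) ℝ) : Matrix (Fin k) (Fin k) ℝ :=
  NormedSpace.exp M

/-- A real square matrix is stable if every complex eigenvalue has negative real part. -/
def IsStableMat {k : ℕ} (M : Matrix (Fin k) (Fin k) ℝ) : Prop :=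
  ∀ μ ∈ spectrum ℂ (M.map (algebraMap ℝ ℂ)), μ.re < 0

/-- Frobenius norm of a real matrix. -/
noncomputable def frobNorm {m l : Type*} [Fintype m] [Fintype l] (M : Matrix m l ℝ) : ℝ :=
  Real.sqrt (∑ i, ∑ j, (M i j) ^ 2)

/-- Euclidean norm of a real vector. -/
noncomputable def euclNorm {m : Type*} [Fintype m] (v : m → ℝ) : ℝ :=
  Real.sqrt (∑ i, (v i) ^ 2)

section AuxLyap

open NormedSpace Polynomial

attribute [local instance] Matrix.linftyOpSemiNormedRing Matrix.linftyOpNormedRing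
  Matrix.linftyOpNormedAlgebra Matrix.linfty_opNormOneClass

variable {N : ℕ}

lemma norm_entry_le_linfty {R : Type*} [NormedRing R] (M : Matrix (Fin N) (Fin N) R) (i j : Fin N) :
    ‖M i j‖ ≤ ‖M‖ := by
  rw [Matrix.linfty_opNorm_def]
  have h1 : ‖M i j‖ ≤ ∑ k, ‖M i k‖ :=
    Finset.single_le_sum (f := fun k => ‖M i k‖) (fun k _ => norm_nonneg _) (Finset.mem_univ j)
  refine h1.trans ?_
  have : (∑ k, ‖M i k‖₊ : NNReal) ≤ Finset.univ.sup fun i => ∑ j, ‖M i j‖₊ :=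
    Finset.le_sup (f := fun i => ∑ j, ‖M i j‖₊) (Finset.mem_univ i)
  calc ∑ k, ‖M i k‖ = ((∑ k, ‖M i k‖₊ : NNReal) : ℝ) := by push_cast; rfl
    _ ≤ _ := by exact_mod_cast this

lemma eig_exists {M : Matrix (Fin N) (Fin N) ℂ} {μ : ℂ} (hμ : μ ∈ spectrum ℂ M) :
    ∃ v : Fin N → ℂ, v ≠ 0 ∧ M *ᵥ v = μ • v := by
  rw [spectrum.mem_iff] at hμ
  have hdet : (algebraMap ℂ (Matrix (Fin N) (Fin N) ℂ) μ - M).det = 0 := by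
    by_contra h
    exact hμ ((Matrix.isUnit_iff_isUnit_det _).mpr (isUnit_iff_ne_zero.mpr h))
  obtain ⟨v, hv, hv0⟩ := (Matrix.exists_mulVec_eq_zero_iff).mpr hdet
  refine ⟨v, hv, ?_⟩
  rw [Matrix.sub_mulVec] at hv0
  have halg : (algebraMap ℂ (Matrix (Fin N) (Fin N) ℂ) μ) *ᵥ v = μ • v := by
    rw [Algebra.algebraMap_eq_smul_one, Matrix.smul_mulVec, Matrix.one_mulVec]
  rw [halg, sub_eq_zero] at hv0
  exact hv0.symm

lemma pow_mulVec {M : Matrix (Fin N) (Fin N) ℂ} {μ : ℂ} {v : Fin N → ℂ}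
    (h : M *ᵥ v = μ • v) (k : ℕ) : (M ^ k) *ᵥ v = (μ ^ k) • v := by
  induction k with
  | zero => simp [Matrix.one_mulVec]
  | succ k ih =>
      rw [pow_succ', pow_succ', ← Matrix.mulVec_mulVec, ih, Matrix.mulVec_smul, h,
        smul_smul, mul_comm μ]

lemma aeval_mulVec {M : Matrix (Fin N) (Fin N) ℂ} {μ : ℂ} {v : Fin N → ℂ}
    (h : M *ᵥ v = μ • v) (q : ℂ[X]) : (aeval M q) *ᵥ v = (q.eval μ) • v := by
  induction q using Polynomial.induction_on' with
  | add p q hp hq => rw [map_add, Matrix.add_mulVec, hp, hq, eval_add, add_smul]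
  | monomial k c =>
      rw [aeval_monomial, eval_monomial, Algebra.algebraMap_eq_smul_one, smul_mul_assoc,
        one_mul, Matrix.smul_mulVec, pow_mulVec h, smul_smul]

lemma exp_mulVec {M : Matrix (Fin N) (Fin N) ℂ} {μ : ℂ} {v : Fin N → ℂ}
    (h : M *ᵥ v = μ • v) : (exp M) *ᵥ v = (Complex.exp μ) • v := by
  classical
  let L : Matrix (Fin N) (Fin N) ℂ →ₗ[ℂ] (Fin N → ℂ) :=
    { toFun := fun P => P *ᵥ v
      map_add' := fun P Q => Matrix.add_mulVec P Q v
      map_smul' := fun c P => Matrix.smul_mulVec c P v }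
  have hL : Continuous L := LinearMap.continuous_of_finiteDimensional L
  have hs : HasSum (fun k : ℕ => ((k.factorial : ℂ)⁻¹) • M ^ k) (exp M) := by
    rw [exp_eq_tsum ℂ]
    exact (expSeries_summable' (𝕂 := ℂ) M).hasSum
  have hs2 : HasSum (fun k : ℕ => L (((k.factorial : ℂ)⁻¹) • M ^ k)) (L (exp M)) :=
    hs.map L.toAddMonoidHom hL
  have hterm : ∀ k : ℕ, L (((k.factorial : ℂ)⁻¹) • M ^ k)
      = (((k.factorial : ℂ)⁻¹) * μ ^ k) • v := by
    intro k
    simp only [L, LinearMap.coe_mk, AddHom.coe_mk]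
    rw [Matrix.smul_mulVec, pow_mulVec h k, smul_smul]
  have hs3 : HasSum (fun k : ℕ => (((k.factorial : ℂ)⁻¹) * μ ^ k) • v) (L (exp M)) := by
    simpa only [hterm] using hs2
  have hsc : HasSum (fun k : ℕ => ((k.factorial : ℂ)⁻¹) * μ ^ k) (Complex.exp μ) := by
    have hsc' : HasSum (fun k : ℕ => ((k.factorial : ℂ)⁻¹) • μ ^ k) (exp μ) := by
      rw [exp_eq_tsum ℂ]
      exact (expSeries_summable' (𝕂 := ℂ) μ).hasSum
    simpa only [smul_eq_mul, ← Complex.exp_eq_exp_ℂ] using hsc'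
  exact hs3.unique (hsc.smul_const v)

lemma spec_exp_subset (hN : 0 < N) (M : Matrix (Fin N) (Fin N) ℂ) :
    ∀ ν ∈ spectrum ℂ (exp M), ∃ μ ∈ spectrum ℂ M, ν = Complex.exp μ := by
  classical
  haveI : Nonempty (Fin N) := Fin.pos_iff_nonempty.mp hN
  have hexp_mem : exp M ∈ Algebra.adjoin ℂ {M} := by
    have hc : IsClosed ((Subalgebra.toSubmodule (Algebra.adjoin ℂ {M}) :
        Submodule ℂ (Matrix (Fin N) (Fin N) ℂ)) : Set (Matrix (Fin N) (Fin N) ℂ)) :=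
      Submodule.closed_of_finiteDimensional _
    have hs : HasSum (fun k : ℕ => ((k.factorial : ℂ)⁻¹) • M ^ k) (exp M) := by
      rw [exp_eq_tsum ℂ]
      exact (expSeries_summable' (𝕂 := ℂ) M).hasSum
    rw [← Subalgebra.mem_toSubmodule]
    refine hc.mem_of_tendsto hs (Filter.Eventually.of_forall fun s => ?_)
    refine Submodule.sum_mem _ fun k _ => Submodule.smul_mem _ _ ?_
    rw [Subalgebra.mem_toSubmodule]
    exact Subalgebra.pow_mem _ (Algebra.self_mem_adjoin_singleton ℂ M) k
  rw [Algebra.adjoin_singleton_eq_range_aeval] at hexp_mem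
  obtain ⟨q, hq0⟩ := hexp_mem
  have hq : Polynomial.aeval M q = exp M := hq0
  intro ν hν
  rw [← hq, spectrum.map_polynomial_aeval_of_nonempty M q (spectrum.nonempty M)] at hν
  obtain ⟨μ, hμ, hqμ⟩ := hν
  refine ⟨μ, hμ, ?_⟩
  obtain ⟨v, hv0, hMv⟩ := eig_exists hμ
  have h1 : (aeval M q) *ᵥ v = (q.eval μ) • v := aeval_mulVec hMv q
  have h2 : (exp M) *ᵥ v = (Complex.exp μ) • v := exp_mulVec hMv
  rw [hq] at h1
  rw [h1] at h2
  have h3 := smul_left_injective ℂ hv0 h2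
  rw [← hqμ]
  exact h3

lemma exp_bounded (hN : 0 < N) (M : Matrix (Fin N) (Fin N) ℂ)
    (hspec : ∀ μ ∈ spectrum ℂ M, μ.re < 0) :
    ∃ K : ℝ, 0 ≤ K ∧ ∀ t : ℝ, 0 ≤ t → ‖exp (t • M)‖ ≤ K := by
  classical
  haveI : Nonempty (Fin N) := Fin.pos_iff_nonempty.mp hN
  set E := exp M with hE
  have hρ : spectralRadius ℂ E < 1 := by
    refine spectrum.spectralRadius_lt_of_forall_lt E ?_
    intro z hz
    obtain ⟨μ, hμ, rfl⟩ := spec_exp_subset hN M z hz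
    have h1 : ‖Complex.exp μ‖ < 1 := by
      rw [Complex.norm_exp]
      exact Real.exp_lt_one_iff.mpr (hspec μ hμ)
    exact_mod_cast h1
  have hg := spectrum.pow_nnnorm_pow_one_div_tendsto_nhds_spectralRadius E
  have hev : ∀ᶠ k : ℕ in Filter.atTop, (‖E ^ k‖₊ : ENNReal) ^ (1 / (k : ℝ)) < 1 :=
    hg.eventually_lt_const hρ
  obtain ⟨N₀, hN₀⟩ := Filter.eventually_atTop.mp hev
  have hbig : ∀ k : ℕ, N₀ ≤ k → 1 ≤ k → ‖E ^ k‖ ≤ 1 := by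
    intro k hk hk1
    have h1 := (hN₀ k hk).le
    have h2 : ((‖E ^ k‖₊ : ENNReal) ^ (1 / (k : ℝ))) ^ (k : ℝ) ≤ (1 : ENNReal) ^ (k : ℝ) :=
      ENNReal.rpow_le_rpow h1 (by positivity)
    have hk0 : (k : ℝ) ≠ 0 := Nat.cast_ne_zero.mpr (by omega)
    rw [← ENNReal.rpow_mul, one_div, inv_mul_cancel₀ hk0, ENNReal.rpow_one,
      ENNReal.one_rpow] at h2
    have h3 : ‖E ^ k‖₊ ≤ 1 := by exact_mod_cast h2
    exact_mod_cast h3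
  set K₁ : ℝ := 1 + ∑ j ∈ Finset.range (N₀ + 1), ‖E ^ j‖ with hK₁def
  have hK₁nonneg : 0 ≤ K₁ := by positivity
  have hK₁ : ∀ k : ℕ, ‖E ^ k‖ ≤ K₁ := by
    intro k
    rcases le_or_gt k N₀ with h | h
    · have : ‖E ^ k‖ ≤ ∑ j ∈ Finset.range (N₀ + 1), ‖E ^ j‖ :=
        Finset.single_le_sum (f := fun j => ‖E ^ j‖) (fun j _ => norm_nonneg _)
          (Finset.mem_range.mpr (by omega))
      linarith
    · have := hbig k (by omega) (by omega)
      have hsum : (0:ℝ) ≤ ∑ j ∈ Finset.range (N₀ + 1), ‖E ^ j‖ :=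
        Finset.sum_nonneg fun j _ => norm_nonneg _
      linarith
  have hcont : ContinuousOn (fun s : ℝ => exp (s • M)) (Set.Icc 0 1) :=
    (exp_continuous.comp (continuous_id.smul continuous_const)).continuousOn
  obtain ⟨D, hD⟩ := (isCompact_Icc (a := (0:ℝ)) (b := 1)).exists_bound_of_continuousOn hcont
  have hD0 : 0 ≤ D := le_trans (norm_nonneg _) (hD 0 (by norm_num))
  refine ⟨K₁ * D, mul_nonneg hK₁nonneg hD0, fun t ht => ?_⟩
  set k := ⌊t⌋₊ with hk
  set s := t - k with hsdef
  have hs0 : 0 ≤ s := by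
    have := Nat.floor_le ht
    simp only [hsdef]; linarith
  have hs1 : s ≤ 1 := by
    have := Nat.lt_floor_add_one t
    simp only [hsdef]; linarith
  have hsplit : exp (t • M) = E ^ k * exp (s • M) := by
    have h1 : t • M = (k : ℝ) • M + s • M := by
      rw [← add_smul]; congr 1; simp [hsdef]
    rw [h1, Matrix.exp_add_of_commute _ _ (((Commute.refl M).smul_left _).smul_right _),
      Nat.cast_smul_eq_nsmul, Matrix.exp_nsmul]
  rw [hsplit]
  calc ‖E ^ k * exp (s • M)‖ ≤ ‖E ^ k‖ * ‖exp (s • M)‖ := norm_mul_le _ _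
    _ ≤ K₁ * D := mul_le_mul (hK₁ k) (hD s ⟨hs0, hs1⟩) (norm_nonneg _) hK₁nonneg

lemma real_decay (A : Matrix (Fin N) (Fin N) ℝ)
    (hA : ∀ μ ∈ spectrum ℂ (A.map (algebraMap ℝ ℂ)), μ.re < 0) :
    ∃ c ε : ℝ, 0 < c ∧ 0 < ε ∧ ∀ t : ℝ, 0 ≤ t → ∀ i j : Fin N,
      |NormedSpace.exp (t • A) i j| ≤ c * Real.exp (-ε * t) := by
  classical
  rcases Nat.eq_zero_or_pos N with h0 | hN
  · subst h0
    exact ⟨1, 1, one_pos, one_pos, fun t ht i => i.elim0⟩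
  haveI : Nonempty (Fin N) := Fin.pos_iff_nonempty.mp hN
  set B := A.map (algebraMap ℝ ℂ) with hB
  obtain ⟨μ₀, hμ₀mem, hμ₀max⟩ := (spectrum.isCompact (𝕜 := ℂ) B).exists_isMaxOn
    (spectrum.nonempty B) Complex.continuous_re.continuousOn
  have hm : μ₀.re < 0 := hA μ₀ hμ₀mem
  set ε : ℝ := -μ₀.re / 2 with hεdef
  have hεpos : 0 < ε := by rw [hεdef]; linarith
  set B' : Matrix (Fin N) (Fin N) ℂ :=
    algebraMap ℂ (Matrix (Fin N) (Fin N) ℂ) (ε : ℂ) + B with hB'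
  have hspec' : ∀ μ ∈ spectrum ℂ B', μ.re < 0 := by
    intro μ hμ
    rw [← spectrum.singleton_add_eq] at hμ
    obtain ⟨x, hx, y, hy, rfl⟩ := Set.mem_add.mp hμ
    rw [Set.mem_singleton_iff] at hx
    subst hx
    have hyre : y.re ≤ μ₀.re := hμ₀max hy
    have : ((ε : ℂ) + y).re = ε + y.re := by simp
    rw [this, hεdef]
    linarith
  obtain ⟨K, hK0, hKb⟩ := exp_bounded hN B' hspec'
  have hmap : ∀ t : ℝ, (NormedSpace.exp (t • A)).map (algebraMap ℝ ℂ) = exp (t • B) := by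
    intro t
    have hcont : Continuous fun P : Matrix (Fin N) (Fin N) ℝ => P.map (algebraMap ℝ ℂ) :=
      Continuous.matrix_map continuous_id Complex.continuous_ofReal
    have hme := map_exp ((algebraMap ℝ ℂ).mapMatrix (m := Fin N)) hcont (t • A)
    have h2 : ((algebraMap ℝ ℂ).mapMatrix (m := Fin N)) (t • A) = t • B := by
      ext i j
      simp only [RingHom.mapMatrix_apply, Matrix.map_apply, Matrix.smul_apply, smul_eq_mul,
        Complex.real_smul, hB, Complex.coe_algebraMap, Complex.ofReal_mul]
    rw [RingHom.mapMatrix_apply] at hme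
    rw [h2] at hme
    exact hme
  have hdecay : ∀ t : ℝ, 0 ≤ t → ‖exp (t • B)‖ ≤ K * Real.exp (-ε * t) := by
    intro t ht
    have h1 : t • B = algebraMap ℂ (Matrix (Fin N) (Fin N) ℂ) (-(t * ε) : ℂ) + t • B' := by
      rw [hB', smul_add]
      ext i j
      by_cases h : i = j <;>
        simp [h, Algebra.algebraMap_eq_smul_one, Matrix.smul_apply, Matrix.add_apply,
          Matrix.one_apply, Complex.real_smul]
    have hsplit : exp (t • B)
        = algebraMap ℂ (Matrix (Fin N) (Fin N) ℂ) (Complex.exp (-(t * ε))) * exp (t • B') := by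
      rw [h1, Matrix.exp_add_of_commute _ _ (Algebra.commute_algebraMap_left _ _)]
      congr 1
      rw [Complex.exp_eq_exp_ℂ]
      exact (map_exp (algebraMap ℂ (Matrix (Fin N) (Fin N) ℂ)) (continuous_algebraMap _ _) _).symm
    rw [hsplit]
    calc ‖algebraMap ℂ (Matrix (Fin N) (Fin N) ℂ) (Complex.exp (-(t * ε))) * exp (t • B')‖
        ≤ ‖algebraMap ℂ (Matrix (Fin N) (Fin N) ℂ) (Complex.exp (-(t * ε)))‖ * ‖exp (t • B')‖ :=
          norm_mul_le _ _
      _ = Real.exp (-(t * ε)) * ‖exp (t • B')‖ := by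
          rw [norm_algebraMap', Complex.norm_exp]
          norm_num
      _ ≤ Real.exp (-ε * t) * K := by
          rw [show -(t * ε) = -ε * t by ring]
          exact mul_le_mul_of_nonneg_left (hKb t ht) (Real.exp_pos _).le
      _ = K * Real.exp (-ε * t) := mul_comm _ _
  refine ⟨K + 1, ε, by linarith, hεpos, fun t ht i j => ?_⟩
  have h1 : |NormedSpace.exp (t • A) i j| = ‖(exp (t • B)) i j‖ := by
    rw [← hmap t]
    simp [Matrix.map_apply]
  rw [h1]
  calc ‖(exp (t • B)) i j‖ ≤ ‖exp (t • B)‖ := norm_entry_le_linfty _ i j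
    _ ≤ K * Real.exp (-ε * t) := hdecay t ht
    _ ≤ (K + 1) * Real.exp (-ε * t) := by nlinarith [Real.exp_pos (-ε * t)]

lemma hasDerivAt_negTrace (A X : Matrix (Fin N) (Fin N) ℝ) (y₀ : Fin N → ℝ)
    (hX : A * X + X * Aᵀ = -Matrix.vecMulVec y₀ y₀) (t : ℝ) :
    HasDerivAt
      (fun u : ℝ => -((NormedSpace.exp (u • A)) * X * (NormedSpace.exp (u • A))ᵀ).trace)
      (∑ i, ((NormedSpace.exp (t • A)) *ᵥ y₀) i ^ 2) t := by
  classical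
  set E := NormedSpace.exp (t • A) with hEdef
  have hE : HasDerivAt (fun u : ℝ => NormedSpace.exp (u • A)) (A * E) t :=
    hasDerivAt_exp_smul_const' A t
  let TpL : Matrix (Fin N) (Fin N) ℝ →ₗ[ℝ] Matrix (Fin N) (Fin N) ℝ :=
    { toFun := Matrix.transpose
      map_add' := Matrix.transpose_add
      map_smul' := fun c M => Matrix.transpose_smul c M }
  let Tp : Matrix (Fin N) (Fin N) ℝ →L[ℝ] Matrix (Fin N) (Fin N) ℝ :=
    LinearMap.toContinuousLinearMap TpL
  have hET0 := Tp.hasFDerivAt.comp_hasDerivAt t hE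
  have hET : HasDerivAt (fun u : ℝ => (NormedSpace.exp (u • A))ᵀ) ((A * E)ᵀ) t := by
    simp only [Tp, TpL, Function.comp_def, LinearMap.coe_toContinuousLinearMap',
      LinearMap.coe_mk, AddHom.coe_mk] at hET0
    exact hET0
  have hprod := (hE.mul_const X).mul hET
  let TrL : Matrix (Fin N) (Fin N) ℝ →L[ℝ] ℝ :=
    LinearMap.toContinuousLinearMap (Matrix.traceLinearMap (Fin N) ℝ ℝ)
  have htr0 := TrL.hasFDerivAt.comp_hasDerivAt t hprod
  have htr : HasDerivAt
      (fun u : ℝ => ((NormedSpace.exp (u • A)) * X * (NormedSpace.exp (u • A))ᵀ).trace)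
      ((A * E * X * Eᵀ + E * X * (A * E)ᵀ).trace) t := by
    simp only [TrL, Function.comp_def, LinearMap.coe_toContinuousLinearMap',
      Matrix.traceLinearMap, LinearMap.coe_mk, AddHom.coe_mk] at htr0
    exact htr0
  have hcomm : A * E = E * A := by
    have h : Commute A (t • A) := (Commute.refl A).smul_right t
    exact h.exp_right
  have hkey : A * E * X * Eᵀ + E * X * (A * E)ᵀ = -(E * Matrix.vecMulVec y₀ y₀ * Eᵀ) := by
    have h2 : A * E * X * Eᵀ + E * X * (A * E)ᵀ = E * (A * X + X * Aᵀ) * Eᵀ := by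
      rw [hcomm, Matrix.transpose_mul]
      noncomm_ring
    rw [h2, hX]
    noncomm_ring
  have hvv : ∀ i j, (E * Matrix.vecMulVec y₀ y₀ * Eᵀ) i j = (E *ᵥ y₀) i * (E *ᵥ y₀) j := by
    intro i j
    have h3 : ∀ k, (E * Matrix.vecMulVec y₀ y₀) i k = (E *ᵥ y₀) i * y₀ k := by
      intro k
      rw [Matrix.mul_apply]
      have : (E *ᵥ y₀) i = ∑ l, E i l * y₀ l := rfl
      rw [this, Finset.sum_mul]
      exact Finset.sum_congr rfl fun l _ => by
        rw [Matrix.vecMulVec_apply]; ring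
    rw [Matrix.mul_apply]
    simp only [Matrix.transpose_apply, h3]
    have : (E *ᵥ y₀) j = ∑ k, E j k * y₀ k := rfl
    rw [this, Finset.mul_sum]
    exact Finset.sum_congr rfl fun k _ => by ring
  have hval : (A * E * X * Eᵀ + E * X * (A * E)ᵀ).trace
      = -∑ i, ((E *ᵥ y₀) i) ^ 2 := by
    rw [hkey, Matrix.trace_neg, Matrix.trace]
    congr 1
    refine Finset.sum_congr rfl fun i _ => ?_
    rw [Matrix.diag_apply, hvv i i, sq]
  have := (htr.neg)
  rw [hval, neg_neg] at this
  exact this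

theorem integral_norm_sq_traj_eq_trace_lyap {n : ℕ}
    (A X : Matrix (Fin n) (Fin n) ℝ) (y₀ : Fin n → ℝ)
    (hA : IsStableMat A)
    (hX : A * X + X * Aᵀ = -vecMulVec y₀ y₀) :
    IntegrableOn (fun t : ℝ => ∑ i, (mexp (t • A) *ᵥ y₀) i ^ 2) (Set.Ioi 0) ∧
      ∫ t in Set.Ioi (0 : ℝ), ∑ i, (mexp (t • A) *ᵥ y₀) i ^ 2 = X.trace := by
  classical
  set g : ℝ → ℝ := fun t => ∑ i, ((NormedSpace.exp (t • A)) *ᵥ y₀) i ^ 2 with hg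
  set F : ℝ → ℝ :=
    fun u => -((NormedSpace.exp (u • A)) * X * (NormedSpace.exp (u • A))ᵀ).trace with hF
  have hderiv : ∀ u : ℝ, HasDerivAt F (g u) u := fun u => hasDerivAt_negTrace A X y₀ hX u
  have hcont : ContinuousWithinAt F (Set.Ici 0) 0 := (hderiv 0).continuousAt.continuousWithinAt
  have hpos : ∀ u ∈ Set.Ioi (0:ℝ), 0 ≤ g u := fun u _ =>
    Finset.sum_nonneg fun i _ => sq_nonneg _
  obtain ⟨c, ε, hc, hε, hdec⟩ := real_decay A hA
  set S : ℝ := ∑ k : Fin n, ∑ j : Fin n, |X j k| with hS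
  have hS0 : 0 ≤ S := Finset.sum_nonneg fun k _ => Finset.sum_nonneg fun j _ => abs_nonneg _
  have hFb : ∀ t : ℝ, 0 ≤ t → ‖F t‖ ≤ (n * S * c ^ 2) * Real.exp (-(2 * ε) * t) := by
    intro t ht
    set E := NormedSpace.exp (t • A) with hEdef
    have hEb : ∀ i j : Fin n, |E i j| ≤ c * Real.exp (-ε * t) := hdec t ht
    have h1 : ‖F t‖ = |(E * X * Eᵀ).trace| := by
      rw [hF]; simp [Real.norm_eq_abs, abs_neg]
      rfl
    have h2 : ∀ i : Fin n, |(E * X * Eᵀ) i i| ≤ S * (c * Real.exp (-ε * t)) ^ 2 := by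
      intro i
      have hdiag : (E * X * Eᵀ) i i = ∑ k, (∑ j, E i j * X j k) * E i k := by
        rw [Matrix.mul_apply]
        exact Finset.sum_congr rfl fun k _ => by rw [Matrix.mul_apply, Matrix.transpose_apply]
      rw [hdiag]
      calc |∑ k, (∑ j, E i j * X j k) * E i k|
          ≤ ∑ k, |(∑ j, E i j * X j k) * E i k| := Finset.abs_sum_le_sum_abs _ _
        _ ≤ ∑ k, ∑ j, |E i j| * |X j k| * |E i k| := by
            refine Finset.sum_le_sum fun k _ => ?_
            rw [abs_mul]
            calc |∑ j, E i j * X j k| * |E i k|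
                ≤ (∑ j, |E i j * X j k|) * |E i k| :=
                  mul_le_mul_of_nonneg_right (Finset.abs_sum_le_sum_abs _ _) (abs_nonneg _)
              _ = ∑ j, |E i j| * |X j k| * |E i k| := by
                  rw [Finset.sum_mul]
                  exact Finset.sum_congr rfl fun j _ => by rw [abs_mul]
        _ ≤ ∑ k, ∑ j, |X j k| * (c * Real.exp (-ε * t)) ^ 2 := by
            refine Finset.sum_le_sum fun k _ => Finset.sum_le_sum fun j _ => ?_
            have h3 := hEb i j
            have h4 := hEb i k
            have h5 : (0:ℝ) ≤ |X j k| := abs_nonneg _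
            have hce : (0:ℝ) ≤ c * Real.exp (-ε * t) := by positivity
            calc |E i j| * |X j k| * |E i k|
                ≤ (c * Real.exp (-ε * t)) * |X j k| * (c * Real.exp (-ε * t)) :=
                  mul_le_mul (mul_le_mul h3 le_rfl h5 hce) h4 (abs_nonneg _) (by positivity)
              _ = |X j k| * (c * Real.exp (-ε * t)) ^ 2 := by ring
        _ = S * (c * Real.exp (-ε * t)) ^ 2 := by
            rw [hS, Finset.sum_mul]
            exact Finset.sum_congr rfl fun k _ => by rw [Finset.sum_mul]
    have h6 : |(E * X * Eᵀ).trace| ≤ ∑ i : Fin n, |(E * X * Eᵀ) i i| := by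
      rw [Matrix.trace]
      exact Finset.abs_sum_le_sum_abs _ _
    have h7 : (∑ i : Fin n, |(E * X * Eᵀ) i i|) ≤ n * (S * (c * Real.exp (-ε * t)) ^ 2) := by
      calc (∑ i : Fin n, |(E * X * Eᵀ) i i|) ≤ ∑ _i : Fin n, S * (c * Real.exp (-ε * t)) ^ 2 :=
            Finset.sum_le_sum fun i _ => h2 i
        _ = n * (S * (c * Real.exp (-ε * t)) ^ 2) := by
            rw [Finset.sum_const, Finset.card_univ, Fintype.card_fin, nsmul_eq_mul]
    have h8 : (n : ℝ) * (S * (c * Real.exp (-ε * t)) ^ 2)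
        = (n * S * c ^ 2) * Real.exp (-(2 * ε) * t) := by
      rw [mul_pow, sq (Real.exp (-ε * t)), ← Real.exp_add]
      ring_nf
    rw [h1]
    calc |(E * X * Eᵀ).trace| ≤ ∑ i : Fin n, |(E * X * Eᵀ) i i| := h6
      _ ≤ (n : ℝ) * (S * (c * Real.exp (-ε * t)) ^ 2) := h7
      _ = (n * S * c ^ 2) * Real.exp (-(2 * ε) * t) := h8
  have htend : Filter.Tendsto F Filter.atTop (nhds 0) := by
    have hb : ∀ᶠ t in Filter.atTop, ‖F t‖ ≤ (↑n * S * c ^ 2) * Real.exp (-(2 * ε) * t) := by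
      filter_upwards [Filter.eventually_ge_atTop (0:ℝ)] with t ht using hFb t ht
    have h1 : Filter.Tendsto (fun t : ℝ => -(2 * ε) * t) Filter.atTop Filter.atBot :=
      (Filter.tendsto_const_mul_atBot_of_neg (by linarith)).mpr Filter.tendsto_id
    have h2 := Real.tendsto_exp_atBot.comp h1
    have h3 := h2.const_mul (↑n * S * c ^ 2)
    rw [mul_zero] at h3
    exact squeeze_zero_norm' hb h3
  have hF0 : F 0 = -X.trace := by
    have : NormedSpace.exp ((0:ℝ) • A) = 1 := by rw [zero_smul]; exact exp_zero
    rw [hF]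
    simp [this]
  have key := integral_Ioi_of_hasDerivAt_of_nonneg hcont (fun u _ => hderiv u) hpos htend
  have keyInt := integrableOn_Ioi_deriv_of_nonneg hcont (fun u _ => hderiv u) hpos htend
  refine ⟨keyInt, ?_⟩
  have hsame : (∫ t in Set.Ioi (0:ℝ), ∑ i, (mexp (t • A) *ᵥ y₀) i ^ 2)
      = ∫ x in Set.Ioi (0:ℝ), g x := rfl
  rw [hsame, key, hF0]
  ring

end AuxLyap
end

section
/- Under these assumptions, the functional F(U) = ∫₀^∞ ‖y(t) − ỹ(t)‖² dt converges and equals tr X + tr Z − 2 tr(Uᵀ P). -/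
open Matrix MeasureTheory
open scoped Kronecker

open Matrix MeasureTheory Filter
open NormedSpace (exp)

namespace FProof

attribute [local instance] Matrix.linftyOpNormedAddCommGroup Matrix.linftyOpNormedRing
  Matrix.linftyOpNormedAlgebra

variable {k : ℕ}

lemma real_smul_mat (t : ℝ) (B : Matrix (Fin k) (Fin k) ℂ) : t • B = (t : ℂ) • B := by
  ext i j; simp [Matrix.smul_apply, Complex.real_smul]

-- t^m * exp (c*t) → 0 for c < 0
lemma tendsto_pow_mul_exp {c : ℝ} (hc : c < 0) (m : ℕ) :
    Tendsto (fun t : ℝ => t ^ m * Real.exp (c * t)) atTop (nhds 0) := by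
  have h1 : Tendsto (fun t : ℝ => -c * t) atTop atTop :=
    Tendsto.const_mul_atTop (by linarith) tendsto_id
  have h2 := (Real.tendsto_pow_mul_exp_neg_atTop_nhds_zero m).comp h1
  have h3 : Tendsto (fun t : ℝ => (-c*t) ^ m * Real.exp (-(-c * t))) atTop (nhds 0) := h2
  have h4 : Tendsto (fun t : ℝ => (-c)⁻¹ ^ m * ((-c*t) ^ m * Real.exp (-(-c * t)))) atTop
      (nhds ((-c)⁻¹ ^ m * 0)) := h3.const_mul _
  rw [mul_zero] at h4
  refine h4.congr fun t => ?_
  have hc' : (-c) ≠ 0 := by linarith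
  have : -(-c * t) = c * t := by ring
  rw [this, mul_pow (-c) t, ← mul_assoc, ← mul_assoc, ← mul_pow, inv_mul_cancel₀ hc', one_pow,
    one_mul]

-- exp of scalar
lemma exp_scalar (c : ℂ) : exp (c • (1 : Matrix (Fin k) (Fin k) ℂ)) =
    Complex.exp c • (1 : Matrix (Fin k) (Fin k) ℂ) := by
  have h1 : c • (1 : Matrix (Fin k) (Fin k) ℂ) = algebraMap ℂ _ c := by
    simp [Algebra.algebraMap_eq_smul_one]
  rw [h1]
  erw [← NormedSpace.map_exp (algebraMap ℂ (Matrix (Fin k) (Fin k) ℂ))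
    (continuous_algebraMap _ _), Algebra.algebraMap_eq_smul_one, ← Complex.exp_eq_exp_ℂ]


lemma exp_mulVec_genEig (B : Matrix (Fin k) (Fin k) ℂ) (μ : ℂ) (v : Fin k → ℂ) (K : ℕ)
    (hv : ((B - μ • 1) ^ K) *ᵥ v = 0) (t : ℝ) :
    exp (t • B) *ᵥ v = ∑ m ∈ Finset.range K,
      (Complex.exp ((t : ℂ) * μ) * ((m.factorial : ℂ)⁻¹ * (t : ℂ) ^ m)) •
        (((B - μ • 1) ^ m) *ᵥ v) := by
  set N := B - μ • 1 with hN
  have hsplit : (t : ℂ) • B = ((t : ℂ) * μ) • (1 : Matrix (Fin k) (Fin k) ℂ) + (t : ℂ) • N := by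
    rw [hN, smul_sub, smul_smul]
    abel
  have hcomm : Commute (((t : ℂ) * μ) • (1 : Matrix (Fin k) (Fin k) ℂ)) ((t : ℂ) • N) :=
    ((Commute.one_left _).smul_left _).smul_right _
  have hexp : exp (t • B) = Complex.exp ((t : ℂ) * μ) • exp ((t : ℂ) • N) := by
    rw [real_smul_mat, hsplit, Matrix.exp_add_of_commute _ _ hcomm, exp_scalar,
      smul_mul_assoc, one_mul]
  -- the linear map M ↦ M *ᵥ v
  let L0 : Matrix (Fin k) (Fin k) ℂ →ₗ[ℂ] (Fin k → ℂ) :=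
    { toFun := fun M => M *ᵥ v
      map_add' := fun M₁ M₂ => Matrix.add_mulVec M₁ M₂ v
      map_smul' := fun c M => Matrix.smul_mulVec c M v }
  let L : Matrix (Fin k) (Fin k) ℂ →L[ℂ] (Fin k → ℂ) := L0.toContinuousLinearMap
  have hsum := NormedSpace.expSeries_summable' (𝕂 := ℂ) ((t : ℂ) • N)
  have hL : exp ((t : ℂ) • N) *ᵥ v
      = ∑' m : ℕ, ((m.factorial : ℂ)⁻¹ • ((t : ℂ) • N) ^ m) *ᵥ v := by
    rw [NormedSpace.exp_eq_tsum ℂ]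
    exact L.map_tsum hsum
  have hvanish : ∀ m ∉ Finset.range K,
      (((m.factorial : ℂ)⁻¹ • ((t : ℂ) • N) ^ m) *ᵥ v) = 0 := by
    intro m hm
    rw [Finset.mem_range, not_lt] at hm
    have : N ^ m *ᵥ v = 0 := by
      rw [show m = (m - K) + K by omega, pow_add, ← Matrix.mulVec_mulVec, hv,
        Matrix.mulVec_zero]
    rw [smul_pow, smul_mulVec, smul_mulVec, this, smul_zero, smul_zero]
  rw [hexp, smul_mulVec, hL, tsum_eq_sum hvanish, Finset.smul_sum]
  refine Finset.sum_congr rfl fun m _ => ?_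
  rw [smul_pow, smul_mulVec, smul_mulVec, smul_smul, smul_smul, mul_assoc]

lemma tendsto_exp_mulVec_genEig (B : Matrix (Fin k) (Fin k) ℂ) {μ : ℂ} (hre : μ.re < 0)
    (v : Fin k → ℂ) (K : ℕ) (hv : ((B - μ • 1) ^ K) *ᵥ v = 0) :
    Tendsto (fun t : ℝ => exp (t • B) *ᵥ v) atTop (nhds 0) := by
  have heq : ∀ t : ℝ, exp (t • B) *ᵥ v = ∑ m ∈ Finset.range K,
      (Complex.exp ((t : ℂ) * μ) * ((m.factorial : ℂ)⁻¹ * (t : ℂ) ^ m)) •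
        (((B - μ • 1) ^ m) *ᵥ v) := fun t => exp_mulVec_genEig B μ v K hv t
  have h0 : (0 : Fin k → ℂ) = ∑ m ∈ Finset.range K, (0 : Fin k → ℂ) := by simp
  rw [h0]
  refine Tendsto.congr (fun t => (heq t).symm) (tendsto_finset_sum _ fun m _ => ?_)
  set w := ((B - μ • 1) ^ m) *ᵥ v
  have hg : Tendsto (fun t : ℝ => ((m.factorial : ℝ)⁻¹ * ‖w‖) *
      (t ^ m * Real.exp (μ.re * t))) atTop (nhds 0) := by
    simpa using (tendsto_pow_mul_exp hre m).const_mul ((m.factorial : ℝ)⁻¹ * ‖w‖)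
  refine squeeze_zero_norm' ?_ hg
  filter_upwards [eventually_ge_atTop (0 : ℝ)] with t ht
  rw [norm_smul]
  have habs : ‖Complex.exp ((t : ℂ) * μ) * ((m.factorial : ℂ)⁻¹ * (t : ℂ) ^ m)‖
      = Real.exp (μ.re * t) * ((m.factorial : ℝ)⁻¹ * t ^ m) := by
    rw [norm_mul, norm_mul, norm_pow, Complex.norm_exp]
    have h1 : ((t : ℂ) * μ).re = μ.re * t := by
      simp [Complex.mul_re, mul_comm]
    have h2 : ‖((m.factorial : ℂ))⁻¹‖ = (m.factorial : ℝ)⁻¹ := by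
      rw [norm_inv]
      norm_cast
    have h3 : ‖(t : ℂ)‖ = t := by
      rw [Complex.norm_real, Real.norm_eq_abs, abs_of_nonneg ht]
    rw [h1, h2, h3]
  rw [habs]
  ring_nf
  rfl

lemma tendsto_exp_mulVec (B : Matrix (Fin k) (Fin k) ℂ)
    (hB : ∀ μ ∈ spectrum ℂ B, μ.re < 0) (v : Fin k → ℂ) :
    Tendsto (fun t : ℝ => exp (t • B) *ᵥ v) atTop (nhds 0) := by
  set e := Matrix.toLinAlgEquiv' (R := ℂ) (n := Fin k)
  have hv : v ∈ ⨆ μ : ℂ, Module.End.maxGenEigenspace (e B) μ := by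
    rw [Module.End.iSup_maxGenEigenspace_eq_top]; trivial
  refine Submodule.iSup_induction (motive := fun w =>
      Tendsto (fun t : ℝ => exp (t • B) *ᵥ w) atTop (nhds 0)) _ hv ?_ ?_ ?_
  · intro μ w hw
    obtain ⟨K, hK⟩ := (Module.End.mem_maxGenEigenspace _ _ _).1 hw
    have hmat : ((B - μ • 1) ^ K) *ᵥ w = 0 := by
      have h1 : e ((B - μ • 1) ^ K) = (e B - μ • 1) ^ K := by
        rw [map_pow, map_sub, _root_.map_smul, _root_.map_one]
      have h2 : e ((B - μ • 1) ^ K) w = ((e B - μ • (1 : Module.End ℂ (Fin k → ℂ))) ^ K) w := by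
        rw [h1]
      rw [← Matrix.toLinAlgEquiv'_apply, h2, hK]
    by_cases hre : μ.re < 0
    · exact tendsto_exp_mulVec_genEig B hre w K hmat
    · have hnotmem : μ ∉ spectrum ℂ B := fun h => hre (hB μ h)
      have hUnit : IsUnit ((B - μ • 1) ^ K) := by
        refine IsUnit.pow K ?_
        have h1 := spectrum.notMem_iff.mp hnotmem
        have h2 : B - μ • 1 = -(algebraMap ℂ (Matrix (Fin k) (Fin k) ℂ) μ - B) := by
            rw [Algebra.algebraMap_eq_smul_one, neg_sub]
        rw [h2]
        exact h1.neg
      have hw0 : w = 0 := by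
        obtain ⟨u, hu⟩ := hUnit
        calc w = ((↑u⁻¹ * ↑u : Matrix (Fin k) (Fin k) ℂ)) *ᵥ w := by
                rw [Units.inv_mul, Matrix.one_mulVec]
        _ = (↑u⁻¹ : Matrix (Fin k) (Fin k) ℂ) *ᵥ (((B - μ • 1) ^ K) *ᵥ w) := by
                rw [← Matrix.mulVec_mulVec, hu]
        _ = 0 := by rw [hmat, Matrix.mulVec_zero]
      rw [hw0]
      simp only [Matrix.mulVec_zero]; exact (tendsto_const_nhds :
        Tendsto (fun _ : ℝ => (0 : Fin k → ℂ)) atTop (nhds 0))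
  · simp only [Matrix.mulVec_zero]; exact (tendsto_const_nhds :
      Tendsto (fun _ : ℝ => (0 : Fin k → ℂ)) atTop (nhds 0))
  · intro x y hx hy
    have := hx.add hy
    rw [add_zero] at this
    refine this.congr fun t => ?_
    rw [Matrix.mulVec_add]

lemma entry_norm_le (M : Matrix (Fin k) (Fin k) ℂ) (i j : Fin k) : ‖M i j‖ ≤ ‖M‖ := by
  rw [Matrix.linfty_opNorm_def]
  have h1 : ‖M i j‖₊ ≤ ∑ j', ‖M i j'‖₊ :=
    Finset.single_le_sum (f := fun j' => ‖M i j'‖₊) (fun _ _ => zero_le) (Finset.mem_univ j)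
  have h2 : (∑ j', ‖M i j'‖₊) ≤ (Finset.univ : Finset (Fin k)).sup fun i => ∑ j', ‖M i j'‖₊ :=
    Finset.le_sup (f := fun i => ∑ j', ‖M i j'‖₊) (Finset.mem_univ i)
  exact_mod_cast h1.trans h2

lemma tendsto_exp_entry (B : Matrix (Fin k) (Fin k) ℂ)
    (hB : ∀ μ ∈ spectrum ℂ B, μ.re < 0) (i j : Fin k) :
    Tendsto (fun t : ℝ => exp (t • B) i j) atTop (nhds 0) := by
  have h := tendsto_exp_mulVec B hB (Pi.single j 1)
  have h2 := (tendsto_pi_nhds.1 h) i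
  refine h2.congr fun t => ?_
  simp [Matrix.mulVec_single]

lemma exp_entry_continuous (B : Matrix (Fin k) (Fin k) ℂ) (i j : Fin k) :
    Continuous fun t : ℝ => exp (t • B) i j := by
  have h1 : Continuous fun t : ℝ => t • B := continuous_id.smul continuous_const
  have h2 : Continuous (exp : Matrix (Fin k) (Fin k) ℂ → Matrix (Fin k) (Fin k) ℂ) :=
    NormedSpace.exp_continuous
  have hev : LipschitzWith 1 (fun M : Matrix (Fin k) (Fin k) ℂ => M i j) := by
    refine LipschitzWith.of_dist_le_mul fun M M' => ?_
    rw [dist_eq_norm, dist_eq_norm, NNReal.coe_one, one_mul]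
    have : M i j - M' i j = (M - M') i j := by simp [Matrix.sub_apply]
    rw [this]
    exact entry_norm_le _ i j
  exact hev.continuous.comp (h2.comp h1)

lemma bounded_of_tendsto {f : ℝ → ℂ} (hc : Continuous f) (h : Tendsto f atTop (nhds 0)) :
    ∃ C, 0 < C ∧ ∀ t, 0 ≤ t → ‖f t‖ ≤ C := by
  obtain ⟨T, hT⟩ := Filter.eventually_atTop.1 (h.eventually (Metric.ball_mem_nhds (0 : ℂ) one_pos))
  obtain ⟨C, hC⟩ := (isCompact_Icc (a := (0:ℝ)) (b := max T 0)).exists_bound_of_continuousOn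
    hc.continuousOn
  refine ⟨max C 1 + 1, by positivity, fun t ht => ?_⟩
  by_cases htT : t ≤ max T 0
  · have := hC t ⟨ht, htT⟩
    calc ‖f t‖ ≤ C := this
    _ ≤ max C 1 + 1 := by
          have := le_max_left C 1
          linarith
  · push_neg at htT
    have h1 : T ≤ t := le_trans (le_max_left T 0) htT.le
    have h2 := hT t h1
    rw [dist_zero_right] at h2
    have := le_max_right C 1
    linarith

lemma cplx_decay (B : Matrix (Fin k) (Fin k) ℂ)
    (hB : ∀ μ ∈ spectrum ℂ B, μ.re < 0) :
    ∃ C ε : ℝ, 0 < C ∧ 0 < ε ∧ ∀ t : ℝ, 0 ≤ t → ∀ i j,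
      ‖exp (t • B) i j‖ ≤ C * Real.exp (-(ε * t)) := by
  rcases Nat.eq_zero_or_pos k with hk | hk
  · subst hk
    exact ⟨1, 1, one_pos, one_pos, fun t ht i j => i.elim0⟩
  have : NeZero k := ⟨hk.ne'⟩
  haveI : Nonempty (Fin k) := Fin.pos_iff_nonempty.mp hk
  have hnt : Nontrivial (Matrix (Fin k) (Fin k) ℂ) := by infer_instance
  have hne : (spectrum ℂ B).Nonempty := spectrum.nonempty B
  obtain ⟨μ₀, hμ₀S, hmax⟩ := (spectrum.isCompact B).exists_isMaxOn hne
    Complex.continuous_re.continuousOn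
  set ε : ℝ := -μ₀.re / 2 with hε
  have hμ₀re : μ₀.re < 0 := hB μ₀ hμ₀S
  have hεpos : 0 < ε := by rw [hε]; linarith
  set D : Matrix (Fin k) (Fin k) ℂ := B + (ε : ℂ) • 1 with hD
  have hDspec : ∀ μ ∈ spectrum ℂ D, μ.re < 0 := by
    intro μ hμ
    have h1 : D = algebraMap ℂ (Matrix (Fin k) (Fin k) ℂ) (ε : ℂ) + B := by
      rw [hD, Algebra.algebraMap_eq_smul_one, add_comm]
    rw [h1, ← spectrum.singleton_add_eq] at hμ
    obtain ⟨a, ha, b, hb, hab⟩ := Set.mem_add.1 hμ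
    rw [Set.mem_singleton_iff] at ha
    have hbre : b.re ≤ μ₀.re := hmax hb
    have : μ.re = ε + b.re := by rw [← hab, ha, Complex.add_re, Complex.ofReal_re]
    rw [this, hε]
    linarith
  -- entrywise bound for D
  have hbd : ∀ p : Fin k × Fin k, ∃ C, 0 < C ∧ ∀ t : ℝ, 0 ≤ t →
      ‖exp (t • D) p.1 p.2‖ ≤ C := fun p =>
    bounded_of_tendsto (exp_entry_continuous D p.1 p.2) (tendsto_exp_entry D hDspec p.1 p.2)
  choose Cf hCfpos hCf using hbd
  refine ⟨∑ p, Cf p, ε, Finset.sum_pos (fun p _ => hCfpos p) Finset.univ_nonempty, hεpos,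
    fun t ht i j => ?_⟩
  -- relation between exp (t • B) and exp (t • D)
  have hsplit : (t : ℂ) • D = ((t : ℂ) * (ε : ℂ)) • (1 : Matrix (Fin k) (Fin k) ℂ)
      + (t : ℂ) • B := by
    rw [hD, smul_add, smul_smul, add_comm]
  have hcomm : Commute (((t : ℂ) * (ε : ℂ)) • (1 : Matrix (Fin k) (Fin k) ℂ)) ((t : ℂ) • B) :=
    ((Commute.one_left _).smul_left _).smul_right _
  have hexp : exp (t • D) = Complex.exp ((t : ℂ) * (ε : ℂ)) • exp (t • B) := by
    rw [real_smul_mat t D, hsplit, Matrix.exp_add_of_commute _ _ hcomm, exp_scalar,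
      smul_mul_assoc, one_mul, ← real_smul_mat t B]
  have hentry : exp (t • D) i j = Complex.exp ((t : ℂ) * (ε : ℂ)) * exp (t • B) i j := by
    rw [hexp]; simp [Matrix.smul_apply, smul_eq_mul]
  have habs : ‖exp (t • D) i j‖ = Real.exp (ε * t) * ‖exp (t • B) i j‖ := by
    rw [hentry, norm_mul, Complex.norm_exp]
    congr 2
    simp [Complex.mul_re, mul_comm]
  have hboundD : ‖exp (t • D) i j‖ ≤ ∑ p, Cf p := by
    calc ‖exp (t • D) i j‖ ≤ Cf (i, j) := hCf (i, j) t ht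
    _ ≤ ∑ p, Cf p := Finset.single_le_sum (fun p _ => (hCfpos p).le) (Finset.mem_univ (i, j))
  have hkey : ‖exp (t • B) i j‖ = Real.exp (-(ε * t)) * ‖exp (t • D) i j‖ := by
    rw [habs, ← mul_assoc, ← Real.exp_add]
    simp
  rw [hkey, mul_comm (Real.exp (-(ε * t)))]
  exact mul_le_mul_of_nonneg_right hboundD (Real.exp_pos _).le

lemma map_exp_real (M : Matrix (Fin k) (Fin k) ℝ) :
    (exp M).map (algebraMap ℝ ℂ) = exp (M.map (algebraMap ℝ ℂ)) := by
  set f : Matrix (Fin k) (Fin k) ℝ →+* Matrix (Fin k) (Fin k) ℂ :=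
    (algebraMap ℝ ℂ).mapMatrix with hf
  have hnorm : ∀ N : Matrix (Fin k) (Fin k) ℝ, ‖f N‖ = ‖N‖ := by
    intro N
    rw [Matrix.linfty_opNorm_def, Matrix.linfty_opNorm_def]
    congr 1
    apply Finset.sup_congr rfl
    intro i _
    apply Finset.sum_congr rfl
    intro j _
    simp [hf, RingHom.mapMatrix_apply, Matrix.map_apply]
  have hiso : Isometry f := AddMonoidHomClass.isometry_of_norm f hnorm
  have h1 : f (exp M) = exp (f M) := NormedSpace.map_exp f hiso.continuous M
  have h2 : (exp : Matrix (Fin k) (Fin k) ℂ → _) = exp := rfl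
  have h3 : f M = M.map (algebraMap ℝ ℂ) := rfl
  have h4 : f (exp M) = (exp M).map (algebraMap ℝ ℂ) := rfl
  rw [← h3, ← h4, h1, h2]

lemma real_decay (M : Matrix (Fin k) (Fin k) ℝ)
    (hM : ∀ μ ∈ spectrum ℂ (M.map (algebraMap ℝ ℂ)), μ.re < 0) :
    ∃ C ε : ℝ, 0 < C ∧ 0 < ε ∧ ∀ t : ℝ, 0 ≤ t → ∀ i j,
      |exp (t • M) i j| ≤ C * Real.exp (-(ε * t)) := by
  obtain ⟨C, ε, hC, hε, hbound⟩ := cplx_decay (M.map (algebraMap ℝ ℂ)) hM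
  refine ⟨C, ε, hC, hε, fun t ht i j => ?_⟩
  have h1 : (t • M).map (algebraMap ℝ ℂ) = t • (M.map (algebraMap ℝ ℂ)) := by
    ext i' j'
    simp [Matrix.map_apply, Matrix.smul_apply, Complex.real_smul]
  have h2 : (exp (t • M)).map (algebraMap ℝ ℂ) = exp (t • M.map (algebraMap ℝ ℂ)) := by
    rw [map_exp_real, h1]
  have h3 : ((exp (t • M)).map (algebraMap ℝ ℂ)) i j = ((exp (t • M)) i j : ℂ) := rfl
  have h4 : |exp (t • M) i j| = ‖exp (t • M.map (algebraMap ℝ ℂ)) i j‖ := by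
    rw [← h2, h3, Complex.norm_real, Real.norm_eq_abs]
  rw [h4]
  exact hbound t ht i j

section Master

variable {l : ℕ}

lemma entry_norm_le_real (M : Matrix (Fin k) (Fin k) ℝ) (i j : Fin k) : ‖M i j‖ ≤ ‖M‖ := by
  rw [Matrix.linfty_opNorm_def]
  have h1 : ‖M i j‖₊ ≤ ∑ j', ‖M i j'‖₊ :=
    Finset.single_le_sum (f := fun j' => ‖M i j'‖₊) (fun _ _ => zero_le) (Finset.mem_univ j)
  have h2 : (∑ j', ‖M i j'‖₊) ≤ (Finset.univ : Finset (Fin k)).sup fun i => ∑ j', ‖M i j'‖₊ :=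
    Finset.le_sup (f := fun i => ∑ j', ‖M i j'‖₊) (Finset.mem_univ i)
  exact_mod_cast h1.trans h2

lemma exp_entry_continuous_real (B : Matrix (Fin k) (Fin k) ℝ) (i j : Fin k) :
    Continuous fun t : ℝ => exp (t • B) i j := by
  have h1 : Continuous fun t : ℝ => t • B := continuous_id.smul continuous_const
  have h2 : Continuous (exp : Matrix (Fin k) (Fin k) ℝ → Matrix (Fin k) (Fin k) ℝ) :=
    NormedSpace.exp_continuous
  have hev : LipschitzWith 1 (fun M : Matrix (Fin k) (Fin k) ℝ => M i j) := by
    refine LipschitzWith.of_dist_le_mul fun M M' => ?_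
    rw [dist_eq_norm, dist_eq_norm, NNReal.coe_one, one_mul]
    have : M i j - M' i j = (M - M') i j := by simp [Matrix.sub_apply]
    rw [this]
    exact entry_norm_le_real _ i j
  exact hev.continuous.comp (h2.comp h1)

lemma exp_entry_hasDerivAt (A : Matrix (Fin k) (Fin k) ℝ) (i a : Fin k) (t : ℝ) :
    HasDerivAt (fun u : ℝ => exp (u • A) i a) ((exp (t • A) * A) i a) t := by
  have h := hasDerivAt_exp_smul_const (𝕂 := ℝ) A t
  let L0 : Matrix (Fin k) (Fin k) ℝ →ₗ[ℝ] ℝ :=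
    { toFun := fun M => M i a
      map_add' := fun M₁ M₂ => rfl
      map_smul' := fun c M => rfl }
  let L : Matrix (Fin k) (Fin k) ℝ →L[ℝ] ℝ := L0.toContinuousLinearMap
  exact (L.hasFDerivAt.comp_hasDerivAt t h :)

lemma triple_apply (E : Matrix (Fin k) (Fin k) ℝ) (Q : Matrix (Fin k) (Fin l) ℝ)
    (F G : Matrix (Fin l) (Fin l) ℝ) (i : Fin k) (j : Fin l) :
    (E * Q * (F * G)ᵀ) i j = ∑ b, ∑ a, E i a * Q a b * (F * G) j b := by
  rw [Matrix.mul_apply]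
  refine Finset.sum_congr rfl fun b _ => ?_
  rw [Matrix.mul_apply, Matrix.transpose_apply, Finset.sum_mul]

lemma triple_apply' (E : Matrix (Fin k) (Fin k) ℝ) (Q : Matrix (Fin k) (Fin l) ℝ)
    (F : Matrix (Fin l) (Fin l) ℝ) (i : Fin k) (j : Fin l) :
    (E * Q * Fᵀ) i j = ∑ b, ∑ a, E i a * Q a b * F j b := by
  rw [Matrix.mul_apply]
  refine Finset.sum_congr rfl fun b _ => ?_
  rw [Matrix.mul_apply, Matrix.transpose_apply, Finset.sum_mul]

lemma master (A : Matrix (Fin k) (Fin k) ℝ) (D : Matrix (Fin l) (Fin l) ℝ)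
    (C P : Matrix (Fin k) (Fin l) ℝ)
    (hA : ∀ μ ∈ spectrum ℂ (A.map (algebraMap ℝ ℂ)), μ.re < 0)
    (hD : ∀ μ ∈ spectrum ℂ (D.map (algebraMap ℝ ℂ)), μ.re < 0)
    (hP : A * P + P * Dᵀ = -C) (i : Fin k) (j : Fin l) :
    IntegrableOn (fun t : ℝ => (exp (t • A) * C * (exp (t • D))ᵀ) i j) (Set.Ioi 0) ∧
      ∫ t in Set.Ioi (0:ℝ), (exp (t • A) * C * (exp (t • D))ᵀ) i j = P i j := by
  obtain ⟨C₁, ε₁, hC₁, hε₁, hb₁⟩ := real_decay A hA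
  obtain ⟨C₂, ε₂, hC₂, hε₂, hb₂⟩ := real_decay D hD
  set E : ℝ → Matrix (Fin k) (Fin k) ℝ := fun t => exp (t • A) with hE
  set F : ℝ → Matrix (Fin l) (Fin l) ℝ := fun t => exp (t • D) with hF
  have key : ∀ (Q : Matrix (Fin k) (Fin l) ℝ) (t : ℝ), 0 ≤ t →
      |(E t * Q * (F t)ᵀ) i j| ≤ (C₁ * C₂ * ∑ b, ∑ a, |Q a b|)
        * Real.exp (-((ε₁ + ε₂) * t)) := by
    intro Q t ht
    rw [triple_apply']
    have hee : Real.exp (-(ε₁ * t)) * Real.exp (-(ε₂ * t)) = Real.exp (-((ε₁ + ε₂) * t)) := by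
      rw [← Real.exp_add]; ring_nf
    calc |∑ b, ∑ a, E t i a * Q a b * F t j b|
        ≤ ∑ b, ∑ a, |E t i a * Q a b * F t j b| :=
          (Finset.abs_sum_le_sum_abs _ _).trans
            (Finset.sum_le_sum fun b _ => Finset.abs_sum_le_sum_abs _ _)
    _ ≤ ∑ b, ∑ a, C₁ * Real.exp (-(ε₁ * t)) * |Q a b| * (C₂ * Real.exp (-(ε₂ * t))) := by
          refine Finset.sum_le_sum fun b _ => Finset.sum_le_sum fun a _ => ?_
          rw [abs_mul, abs_mul]
          exact mul_le_mul
            (mul_le_mul_of_nonneg_right (hb₁ t ht i a) (abs_nonneg _))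
            (hb₂ t ht j b) (abs_nonneg _) (by positivity)
    _ = ∑ b, ∑ a, (C₁ * C₂ * Real.exp (-((ε₁ + ε₂) * t))) * |Q a b| := by
          refine Finset.sum_congr rfl fun b _ => Finset.sum_congr rfl fun a _ => ?_
          rw [← hee]; ring
    _ = (C₁ * C₂ * ∑ b, ∑ a, |Q a b|) * Real.exp (-((ε₁ + ε₂) * t)) := by
          simp only [← Finset.mul_sum]
          ring
  have hcontg : ∀ (Q : Matrix (Fin k) (Fin l) ℝ),
      Continuous fun t => (E t * Q * (F t)ᵀ) i j := by
    intro Q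
    have hrepr : (fun t => (E t * Q * (F t)ᵀ) i j)
        = fun t => ∑ b, ∑ a, E t i a * Q a b * F t j b :=
      funext fun t => triple_apply' (E t) Q (F t) i j
    rw [hrepr]
    exact continuous_finset_sum _ fun b _ => continuous_finset_sum _ fun a _ =>
      ((exp_entry_continuous_real A i a).mul continuous_const).mul
        (exp_entry_continuous_real D j b)
  have hint : IntegrableOn (fun t => (E t * C * (F t)ᵀ) i j) (Set.Ioi 0) := by
    have h0 : IntegrableOn (fun t : ℝ => Real.exp (-(ε₁ + ε₂) * t)) (Set.Ioi 0) :=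
      exp_neg_integrableOn_Ioi 0 (by linarith)
    have hbound : IntegrableOn
        (fun t : ℝ => (C₁ * C₂ * ∑ b, ∑ a, |C a b|) * Real.exp (-((ε₁ + ε₂) * t)))
        (Set.Ioi 0) := by
      have h1 := h0.const_mul (C₁ * C₂ * ∑ b, ∑ a, |C a b|)
      exact IntegrableOn.congr_fun h1 (fun t _ => by rw [neg_mul]) measurableSet_Ioi
    refine Integrable.mono' hbound ((hcontg C).aestronglyMeasurable) ?_
    rw [ae_restrict_iff' measurableSet_Ioi]
    exact ae_of_all _ fun t ht => by
      rw [Real.norm_eq_abs]; exact key C t (le_of_lt ht)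
  refine ⟨hint, ?_⟩
  have hderiv : ∀ t : ℝ, HasDerivAt (fun u => (E u * P * (F u)ᵀ) i j)
      (-((E t * C * (F t)ᵀ) i j)) t := by
    intro t
    have hrepr : (fun u => (E u * P * (F u)ᵀ) i j)
        = fun u => ∑ b, ∑ a, E u i a * P a b * F u j b :=
      funext fun u => triple_apply' (E u) P (F u) i j
    rw [hrepr]
    have hterm : ∀ b a, HasDerivAt (fun u => E u i a * P a b * F u j b)
        ((E t * A) i a * P a b * F t j b + E t i a * P a b * (F t * D) j b) t :=
      fun b a => ((exp_entry_hasDerivAt A i a t).mul_const (P a b)).mul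
        (exp_entry_hasDerivAt D j b t)
    have hsum := HasDerivAt.sum (u := Finset.univ)
      (fun b _ => HasDerivAt.sum (u := Finset.univ) (fun a _ => hterm b a))
    convert hsum using 1
    · rfl
    · rfl
    · funext u
      simp only [Finset.sum_apply]
    have hC : C = -(A * P + P * Dᵀ) := by rw [hP, neg_neg]
    have hmat : E t * A * P * (F t)ᵀ + E t * P * (F t * D)ᵀ = -(E t * C * (F t)ᵀ) := by
      rw [Matrix.transpose_mul, hC]
      simp only [Matrix.mul_neg, Matrix.neg_mul, neg_neg, Matrix.mul_add, Matrix.add_mul,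
        Matrix.mul_assoc]
    calc -((E t * C * (F t)ᵀ) i j) = (E t * A * P * (F t)ᵀ + E t * P * (F t * D)ᵀ) i j := by
          rw [hmat, Matrix.neg_apply]
    _ = (E t * A * P * (F t)ᵀ) i j + (E t * P * (F t * D)ᵀ) i j := Matrix.add_apply _ _ _ _
    _ = ∑ b, ∑ a, ((E t * A) i a * P a b * F t j b + E t i a * P a b * (F t * D) j b) := by
          rw [triple_apply' (E t * A) P (F t) i j, triple_apply' (E t) P (F t * D) i j,
            ← Finset.sum_add_distrib]
          exact Finset.sum_congr rfl fun b _ => (Finset.sum_add_distrib).symm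
  have htend : Tendsto (fun t => (E t * P * (F t)ᵀ) i j) atTop (nhds 0) := by
    have h1 : Tendsto (fun t : ℝ => (ε₁ + ε₂) * t) atTop atTop :=
      Tendsto.const_mul_atTop (by linarith) tendsto_id
    have h2 : Tendsto (fun t : ℝ => Real.exp (-((ε₁ + ε₂) * t))) atTop (nhds 0) :=
      Real.tendsto_exp_neg_atTop_nhds_zero.comp h1
    have h3 := h2.const_mul (C₁ * C₂ * ∑ b, ∑ a, |P a b|)
    rw [mul_zero] at h3
    refine squeeze_zero_norm' ?_ h3
    filter_upwards [eventually_ge_atTop (0 : ℝ)] with t ht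
    rw [Real.norm_eq_abs]
    exact key P t ht
  have hval0 : (E 0 * P * (F 0)ᵀ) i j = P i j := by
    have hE0 : E 0 = 1 := by rw [hE]; simp
    have hF0 : F 0 = 1 := by rw [hF]; simp
    rw [hE0, hF0, Matrix.transpose_one, Matrix.one_mul, Matrix.mul_one]
  have hFTC := integral_Ioi_of_hasDerivAt_of_tendsto' (a := (0:ℝ))
    (f := fun u => (E u * P * (F u)ᵀ) i j) (f' := fun t => -((E t * C * (F t)ᵀ) i j))
    (fun x _ => hderiv x) hint.neg htend
  rw [integral_neg] at hFTC
  beta_reduce at hFTC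
  rw [hval0] at hFTC
  have : ∫ t in Set.Ioi (0:ℝ), (E t * C * (F t)ᵀ) i j = P i j := by linarith
  exact this

lemma prod_entry (E : Matrix (Fin k) (Fin k) ℝ) (F : Matrix (Fin l) (Fin l) ℝ)
    (u : Fin k → ℝ) (v : Fin l → ℝ) (i : Fin k) (j : Fin l) :
    (E * vecMulVec u v * Fᵀ) i j = (E *ᵥ u) i * (F *ᵥ v) j := by
  rw [triple_apply', Finset.sum_comm]
  simp only [Matrix.mulVec, dotProduct, Matrix.vecMulVec_apply]
  rw [Finset.sum_mul_sum]
  exact Finset.sum_congr rfl fun a _ => Finset.sum_congr rfl fun b _ => by ring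

lemma expand (E : Matrix (Fin k) (Fin k) ℝ) (F : Matrix (Fin l) (Fin l) ℝ)
    (U : Matrix (Fin k) (Fin l) ℝ) (hU : Uᵀ * U = 1) (y₀ : Fin k → ℝ) (c₀ : Fin l → ℝ) :
    ∑ i, ((E *ᵥ y₀) i - (U *ᵥ (F *ᵥ c₀)) i) ^ 2
      = (∑ i, (E * vecMulVec y₀ y₀ * Eᵀ) i i) + (∑ j, (F * vecMulVec c₀ c₀ * Fᵀ) j j)
        - 2 * ∑ j, ∑ i, U i j * (E * vecMulVec y₀ c₀ * Fᵀ) i j := by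
  set a := E *ᵥ y₀ with ha'
  set w := F *ᵥ c₀ with hw'
  set b := U *ᵥ w with hb'
  have hbi : ∀ i, b i = ∑ j, U i j * w j := fun i => rfl
  have ha : ∑ i, a i ^ 2 = ∑ i, (E * vecMulVec y₀ y₀ * Eᵀ) i i :=
    Finset.sum_congr rfl fun i _ => by rw [prod_entry, ← ha', sq]
  have hc : ∑ i, a i * b i = ∑ j, ∑ i, U i j * (E * vecMulVec y₀ c₀ * Fᵀ) i j := by
    calc ∑ i, a i * b i = ∑ i, ∑ j, U i j * (a i * w j) := by
          refine Finset.sum_congr rfl fun i _ => ?_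
          rw [hbi i, Finset.mul_sum]
          exact Finset.sum_congr rfl fun j _ => by ring
    _ = ∑ j, ∑ i, U i j * (a i * w j) := Finset.sum_comm
    _ = ∑ j, ∑ i, U i j * (E * vecMulVec y₀ c₀ * Fᵀ) i j := by
          refine Finset.sum_congr rfl fun j _ => Finset.sum_congr rfl fun i _ => ?_
          rw [prod_entry, ← ha', ← hw']
  have hb : ∑ i, b i ^ 2 = ∑ j, (F * vecMulVec c₀ c₀ * Fᵀ) j j := by
    have h1 : ∑ i, b i ^ 2 = ∑ j, w j ^ 2 := by
      calc ∑ i, b i ^ 2 = ∑ i, ∑ j, ∑ j', (U i j * U i j') * (w j * w j') := by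
            refine Finset.sum_congr rfl fun i _ => ?_
            rw [sq, hbi i, Finset.sum_mul_sum]
            exact Finset.sum_congr rfl fun j _ => Finset.sum_congr rfl fun j' _ => by ring
      _ = ∑ j, ∑ i, ∑ j', (U i j * U i j') * (w j * w j') := Finset.sum_comm
      _ = ∑ j, ∑ j', ∑ i, (U i j * U i j') * (w j * w j') :=
            Finset.sum_congr rfl fun j _ => Finset.sum_comm
      _ = ∑ j, ∑ j', ((Uᵀ * U) j j') * (w j * w j') := by
            refine Finset.sum_congr rfl fun j _ => Finset.sum_congr rfl fun j' _ => ?_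
            rw [Matrix.mul_apply, Finset.sum_mul]
            exact Finset.sum_congr rfl fun i _ => by rw [Matrix.transpose_apply]
      _ = ∑ j, w j ^ 2 := by
            rw [hU]
            simp [Matrix.one_apply, ite_mul, sq]
    rw [h1]
    exact Finset.sum_congr rfl fun j _ => by rw [prod_entry, ← hw', sq]
  have hsq : ∀ i, (a i - b i) ^ 2 = a i ^ 2 - 2 * (a i * b i) + b i ^ 2 := fun i => by ring
  calc ∑ i, (a i - b i) ^ 2 = ∑ i, (a i ^ 2 - 2 * (a i * b i) + b i ^ 2) :=
        Finset.sum_congr rfl fun i _ => hsq i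
  _ = (∑ i, a i ^ 2) - 2 * (∑ i, a i * b i) + ∑ i, b i ^ 2 := by
        rw [Finset.sum_add_distrib, Finset.sum_sub_distrib, Finset.mul_sum]
  _ = _ := by rw [ha, hb, hc]; ring

end Master

end FProof
theorem functional_F_eq_traces {n r : ℕ}
    (A X : Matrix (Fin n) (Fin n) ℝ) (y₀ : Fin n → ℝ)
    (hA : IsStableMat A)
    (hX : A * X + X * Aᵀ = -vecMulVec y₀ y₀)
    (U : Matrix (Fin n) (Fin r) ℝ) (hU : Uᵀ * U = 1)
    (hB : IsStableMat (Uᵀ * A * U))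
    (Z : Matrix (Fin r) (Fin r) ℝ)
    (hZ : (Uᵀ * A * U) * Z + Z * (Uᵀ * A * U)ᵀ = -vecMulVec (Uᵀ *ᵥ y₀) (Uᵀ *ᵥ y₀))
    (P : Matrix (Fin n) (Fin r) ℝ)
    (hP : A * P + P * (Uᵀ * A * U)ᵀ = -vecMulVec y₀ (Uᵀ *ᵥ y₀)) :
    IntegrableOn
      (fun t : ℝ => ∑ i, ((mexp (t • A) *ᵥ y₀) i -
        (U *ᵥ (mexp (t • (Uᵀ * A * U)) *ᵥ (Uᵀ *ᵥ y₀))) i) ^ 2) (Set.Ioi 0) ∧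
      ∫ t in Set.Ioi (0 : ℝ),
        ∑ i, ((mexp (t • A) *ᵥ y₀) i -
          (U *ᵥ (mexp (t • (Uᵀ * A * U)) *ᵥ (Uᵀ *ᵥ y₀))) i) ^ 2
        = X.trace + Z.trace - 2 * (Uᵀ * P).trace := by
  have hA' : ∀ μ ∈ spectrum ℂ (A.map (algebraMap ℝ ℂ)), μ.re < 0 := hA
  have hB' : ∀ μ ∈ spectrum ℂ ((Uᵀ * A * U).map (algebraMap ℝ ℂ)), μ.re < 0 := hB
  simp only [mexp]
  set B₂ := Uᵀ * A * U with hB₂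
  set c := Uᵀ *ᵥ y₀ with hc
  have hXm := fun i : Fin n => FProof.master A A (vecMulVec y₀ y₀) X hA' hA' hX i i
  have hZm := fun j : Fin r => FProof.master B₂ B₂ (vecMulVec c c) Z hB' hB' hZ j j
  have hPm := fun (i : Fin n) (j : Fin r) =>
    FProof.master A B₂ (vecMulVec y₀ c) P hA' hB' hP i j
  have hEq : (fun t : ℝ => ∑ i, ((NormedSpace.exp (t • A) *ᵥ y₀) i -
        (U *ᵥ (NormedSpace.exp (t • B₂) *ᵥ c)) i) ^ 2)
      = fun t : ℝ =>
        (∑ i, (NormedSpace.exp (t • A) * vecMulVec y₀ y₀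
            * (NormedSpace.exp (t • A))ᵀ) i i)
        + (∑ j, (NormedSpace.exp (t • B₂) * vecMulVec c c
            * (NormedSpace.exp (t • B₂))ᵀ) j j)
        - 2 * ∑ j, ∑ i, U i j * (NormedSpace.exp (t • A) * vecMulVec y₀ c
            * (NormedSpace.exp (t • B₂))ᵀ) i j :=
    funext fun t => FProof.expand _ _ U hU y₀ c
  have I1 : IntegrableOn (fun t : ℝ => ∑ i, (NormedSpace.exp (t • A) * vecMulVec y₀ y₀
      * (NormedSpace.exp (t • A))ᵀ) i i) (Set.Ioi 0) :=
    integrable_finset_sum _ fun i _ => (hXm i).1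
  have I2 : IntegrableOn (fun t : ℝ => ∑ j, (NormedSpace.exp (t • B₂) * vecMulVec c c
      * (NormedSpace.exp (t • B₂))ᵀ) j j) (Set.Ioi 0) :=
    integrable_finset_sum _ fun j _ => (hZm j).1
  have I3 : IntegrableOn (fun t : ℝ => ∑ j, ∑ i, U i j * (NormedSpace.exp (t • A)
      * vecMulVec y₀ c * (NormedSpace.exp (t • B₂))ᵀ) i j) (Set.Ioi 0) :=
    integrable_finset_sum _ fun j _ => integrable_finset_sum _ fun i _ =>
      ((hPm i j).1.const_mul (U i j))
  constructor
  · rw [hEq]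
    exact (I1.add I2).sub (I3.const_mul 2)
  · rw [hEq]
    have I12 : IntegrableOn (fun t : ℝ =>
        (∑ i, (NormedSpace.exp (t • A) * vecMulVec y₀ y₀ * (NormedSpace.exp (t • A))ᵀ) i i)
        + ∑ j, (NormedSpace.exp (t • B₂) * vecMulVec c c
            * (NormedSpace.exp (t • B₂))ᵀ) j j) (Set.Ioi 0) := I1.add I2
    have I3' : IntegrableOn (fun t : ℝ => 2 * ∑ j, ∑ i, U i j * (NormedSpace.exp (t • A)
        * vecMulVec y₀ c * (NormedSpace.exp (t • B₂))ᵀ) i j) (Set.Ioi 0) := I3.const_mul 2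
    rw [integral_sub I12 I3', integral_add I1 I2, integral_const_mul]
    have V1 : (∫ t in Set.Ioi (0:ℝ), ∑ i, (NormedSpace.exp (t • A) * vecMulVec y₀ y₀
        * (NormedSpace.exp (t • A))ᵀ) i i) = X.trace := by
      rw [integral_finset_sum _ fun i _ => (hXm i).1]
      calc ∑ i, ∫ t in Set.Ioi (0:ℝ), (NormedSpace.exp (t • A) * vecMulVec y₀ y₀
            * (NormedSpace.exp (t • A))ᵀ) i i = ∑ i, X i i :=
            Finset.sum_congr rfl fun i _ => (hXm i).2
      _ = X.trace := by simp [Matrix.trace, Matrix.diag]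
    have V2 : (∫ t in Set.Ioi (0:ℝ), ∑ j, (NormedSpace.exp (t • B₂) * vecMulVec c c
        * (NormedSpace.exp (t • B₂))ᵀ) j j) = Z.trace := by
      rw [integral_finset_sum _ fun j _ => (hZm j).1]
      calc ∑ j, ∫ t in Set.Ioi (0:ℝ), (NormedSpace.exp (t • B₂) * vecMulVec c c
            * (NormedSpace.exp (t • B₂))ᵀ) j j = ∑ j, Z j j :=
            Finset.sum_congr rfl fun j _ => (hZm j).2
      _ = Z.trace := by simp [Matrix.trace, Matrix.diag]
    have V3 : (∫ t in Set.Ioi (0:ℝ), ∑ j, ∑ i, U i j * (NormedSpace.exp (t • A)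
        * vecMulVec y₀ c * (NormedSpace.exp (t • B₂))ᵀ) i j) = (Uᵀ * P).trace := by
      rw [integral_finset_sum _ fun j _ => integrable_finset_sum _ fun i _ =>
        ((hPm i j).1.const_mul (U i j))]
      have hjj : ∀ j : Fin r, (∫ t in Set.Ioi (0:ℝ), ∑ i, U i j * (NormedSpace.exp (t • A)
          * vecMulVec y₀ c * (NormedSpace.exp (t • B₂))ᵀ) i j) = ∑ i, U i j * P i j := by
        intro j
        rw [integral_finset_sum _ fun i _ => ((hPm i j).1.const_mul (U i j))]
        refine Finset.sum_congr rfl fun i _ => ?_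
        rw [integral_const_mul, (hPm i j).2]
      calc ∑ j, ∫ t in Set.Ioi (0:ℝ), ∑ i, U i j * (NormedSpace.exp (t • A)
            * vecMulVec y₀ c * (NormedSpace.exp (t • B₂))ᵀ) i j
          = ∑ j, ∑ i, U i j * P i j := Finset.sum_congr rfl fun j _ => hjj j
      _ = (Uᵀ * P).trace := by
            simp [Matrix.trace, Matrix.diag, Matrix.mul_apply, Matrix.transpose_apply]
    rw [V1, V2, V3]
end

section
/- Under these assumptions, F₁(U) = ∫₀^∞ (‖y(t)‖² − ‖ỹ(t)‖²) dt converges and equals tr X − tr Z. -/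
open Matrix MeasureTheory
open scoped Kronecker

section Aux

open NormedSpace Filter Module
open scoped Topology ENNReal NNReal

attribute [local instance] Matrix.linftyOpNormedRing Matrix.linftyOpNormedAlgebra

lemma expMulVec_eig {k : ℕ} (N : Matrix (Fin k) (Fin k) ℂ) (c : ℂ) (v : Fin k → ℂ)
    (h : N *ᵥ v = c • v) : exp N *ᵥ v = Complex.exp c • v := by
  have hpow : ∀ m : ℕ, N ^ m *ᵥ v = c ^ m • v := by
    intro m
    induction m with
    | zero => simp
    | succ m ih =>
      rw [pow_succ', pow_succ', ← Matrix.mulVec_mulVec, ih, Matrix.mulVec_smul, h,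
        smul_smul, mul_comm c]
  let φ : Matrix (Fin k) (Fin k) ℂ →ₗ[ℂ] (Fin k → ℂ) :=
    { toFun := fun P => P *ᵥ v
      map_add' := fun P Q => Matrix.add_mulVec P Q v
      map_smul' := fun c P => (Matrix.smul_mulVec c P v) }
  have hφ : Continuous φ := LinearMap.continuous_of_finiteDimensional φ
  have := (LinearMap.toContinuousLinearMap φ).map_tsum
    (NormedSpace.expSeries_summable' (𝕂 := ℂ) N)
  rw [exp_eq_tsum (𝕂 := ℂ)]
  have hφtsum : φ (∑' (n : ℕ), ((n.factorial : ℕ) : ℂ)⁻¹ • N ^ n)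
      = ∑' (n : ℕ), φ (((n.factorial : ℕ) : ℂ)⁻¹ • N ^ n) := this
  show φ _ = _
  rw [hφtsum]
  have hterm : ∀ n : ℕ, φ (((n.factorial : ℕ) : ℂ)⁻¹ • N ^ n)
      = ((((n.factorial : ℕ) : ℂ))⁻¹ * c ^ n) • v := by
    intro n
    rw [_root_.map_smul]
    have : φ (N ^ n) = c ^ n • v := hpow n
    rw [this, smul_smul]
  simp_rw [hterm]
  rw [Summable.tsum_smul_const (by simpa using NormedSpace.expSeries_summable' (𝕂 := ℂ) c)]
  congr 1
  simp only [Complex.exp_eq_exp_ℂ, exp_eq_tsum (𝕂 := ℂ)]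
  simp [smul_eq_mul]

lemma spectrum_exp_subset {k : ℕ} (N : Matrix (Fin k) (Fin k) ℂ) {μ : ℂ}
    (hμ : μ ∈ spectrum ℂ (exp N)) : ∃ c ∈ spectrum ℂ N, Complex.exp c = μ := by
  have hap : ∀ (M : Matrix (Fin k) (Fin k) ℂ) (x : Fin k → ℂ),
      (Matrix.toLinAlgEquiv' M) x = M *ᵥ x := fun M x => rfl
  have hco : Commute (exp N) N := ((Commute.refl N).exp_left)
  have hμ' : μ ∈ spectrum ℂ (Matrix.toLinAlgEquiv' (exp N)) := by
    rwa [AlgEquiv.spectrum_eq]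
  have heig : Module.End.HasEigenvalue (Matrix.toLinAlgEquiv' (exp N) :
      Module.End ℂ (Fin k → ℂ)) μ :=
    Module.End.hasEigenvalue_iff_mem_spectrum.mpr hμ'
  set W := Module.End.eigenspace (Matrix.toLinAlgEquiv' (exp N) :
      Module.End ℂ (Fin k → ℂ)) μ with hW
  haveI : Nontrivial W := Submodule.nontrivial_iff_ne_bot.mpr heig
  have hinv : ∀ x ∈ W, (Matrix.toLinAlgEquiv' N : Module.End ℂ (Fin k → ℂ)) x ∈ W := by
    intro x hx
    rw [hW, Module.End.mem_eigenspace_iff] at hx ⊢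
    rw [hap] at hx
    rw [hap, hap, Matrix.mulVec_mulVec, hco.eq, ← Matrix.mulVec_mulVec, hx,
      Matrix.mulVec_smul]
  let g : Module.End ℂ W := (Matrix.toLinAlgEquiv' N : Module.End ℂ (Fin k → ℂ)).restrict hinv
  obtain ⟨c, hc⟩ := Module.End.exists_eigenvalue g
  obtain ⟨w, hw⟩ := hc.exists_hasEigenvector
  have hw0 : (w : Fin k → ℂ) ≠ 0 := fun h0 => hw.right (Subtype.coe_injective (by simpa using h0))
  have hNv : N *ᵥ (w : Fin k → ℂ) = c • (w : Fin k → ℂ) := by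
    have h := hw.apply_eq_smul
    have h' : ((g w : W) : Fin k → ℂ) = c • (w : Fin k → ℂ) := by rw [h]; rfl
    rw [← h']
    rw [← hap]
    rfl
  refine ⟨c, ?_, ?_⟩
  · have : Module.End.HasEigenvalue (Matrix.toLinAlgEquiv' N :
        Module.End ℂ (Fin k → ℂ)) c :=
      Module.End.hasEigenvalue_of_hasEigenvector
        ⟨Module.End.mem_eigenspace_iff.mpr (by rw [hap]; exact hNv), hw0⟩
    have := Module.End.hasEigenvalue_iff_mem_spectrum.mp this
    rwa [AlgEquiv.spectrum_eq] at this
  · have h1 : exp N *ᵥ (w : Fin k → ℂ) = Complex.exp c • (w : Fin k → ℂ) :=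
      expMulVec_eig N c _ hNv
    have hmem : exp N *ᵥ (w : Fin k → ℂ) = μ • (w : Fin k → ℂ) := by
      have h2 := Module.End.mem_eigenspace_iff.mp w.2
      rwa [hap] at h2
    exact smul_left_injective ℂ hw0 (h1.symm.trans hmem)

lemma tendsto_norm_pow_exp {k : ℕ} (N : Matrix (Fin k) (Fin k) ℂ)
    (hN : ∀ μ ∈ spectrum ℂ N, μ.re < 0) :
    Tendsto (fun n : ℕ => ‖exp N ^ n‖) atTop (𝓝 0) := by
  rcases Nat.eq_zero_or_pos k with hk | hk
  · subst hk
    have : ∀ n : ℕ, exp N ^ n = 0 := fun n => Subsingleton.elim _ _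
    simpa [this] using tendsto_const_nhds
  · haveI : NeZero k := ⟨hk.ne'⟩
    haveI : Nontrivial (Matrix (Fin k) (Fin k) ℂ) := Matrix.nonempty
    have hspec : ∀ μ ∈ spectrum ℂ (exp N), ‖μ‖₊ < 1 := by
      intro μ hμ
      obtain ⟨c, hc, rfl⟩ := spectrum_exp_subset N hμ
      have : ‖Complex.exp c‖ < 1 := by
        rw [Complex.norm_exp]
        exact Real.exp_lt_one_iff.mpr (hN c hc)
      exact_mod_cast this
    have hρ : spectralRadius ℂ (exp N) < (1 : ℝ≥0) :=
      spectrum.spectralRadius_lt_of_forall_lt _ hspec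
    obtain ⟨c, hc1, hc2⟩ := exists_between hρ
    have hcne : c ≠ ⊤ := (hc2.trans_le le_top).ne
    set c' : ℝ≥0 := c.toNNReal with hc'
    have hcc : (c' : ℝ≥0∞) = c := ENNReal.coe_toNNReal hcne
    have hc'1 : c' < 1 := by
      rw [← ENNReal.coe_lt_coe, hcc]; exact_mod_cast hc2
    have hgel := spectrum.pow_nnnorm_pow_one_div_tendsto_nhds_spectralRadius (exp N)
    have hev : ∀ᶠ n : ℕ in atTop, (‖exp N ^ n‖₊ : ℝ≥0∞) ^ (1 / (n : ℝ)) < c :=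
      hgel.eventually_lt_const hc1
    have hbound : ∀ᶠ n : ℕ in atTop, ‖exp N ^ n‖ ≤ ((c' : ℝ)) ^ n := by
      filter_upwards [hev, eventually_ge_atTop 1] with n hn hn1
      have hnne : (n : ℝ) ≠ 0 := by positivity
      have h1 : ((‖exp N ^ n‖₊ : ℝ≥0∞) ^ (1 / (n : ℝ))) ^ (n : ℝ) ≤ c ^ (n : ℝ) :=
        ENNReal.rpow_le_rpow hn.le (by positivity)
      rw [← ENNReal.rpow_mul, one_div_mul_cancel hnne, ENNReal.rpow_one] at h1
      rw [← hcc, ENNReal.rpow_natCast, ← ENNReal.coe_pow] at h1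
      have h3 : ‖exp N ^ n‖₊ ≤ c' ^ n := by exact_mod_cast h1
      calc ‖exp N ^ n‖ = ((‖exp N ^ n‖₊ : ℝ≥0) : ℝ) := rfl
        _ ≤ ((c' ^ n : ℝ≥0) : ℝ) := by exact_mod_cast h3
        _ = (c' : ℝ) ^ n := by push_cast; ring
    have hgeo : Tendsto (fun n : ℕ => ((c' : ℝ)) ^ n) atTop (𝓝 0) :=
      tendsto_pow_atTop_nhds_zero_of_lt_one c'.coe_nonneg (by exact_mod_cast hc'1)
    exact squeeze_zero' (Eventually.of_forall fun n => norm_nonneg _) hbound hgeo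

lemma map_exp_complex {k : ℕ} (M : Matrix (Fin k) (Fin k) ℝ) :
    (exp M).map (algebraMap ℝ ℂ) = exp (M.map (algebraMap ℝ ℂ)) := by
  have hcont : Continuous ((algebraMap ℝ ℂ).mapMatrix :
      Matrix (Fin k) (Fin k) ℝ →+* Matrix (Fin k) (Fin k) ℂ) := by
    simp only [RingHom.mapMatrix]
    exact Continuous.matrix_map continuous_id (continuous_algebraMap ℝ ℂ)
  have := map_exp ((algebraMap ℝ ℂ).mapMatrix :
      Matrix (Fin k) (Fin k) ℝ →+* Matrix (Fin k) (Fin k) ℂ) hcont M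
  simp only [RingHom.mapMatrix_apply] at this
  exact this

lemma norm_map_complex {k : ℕ} (P : Matrix (Fin k) (Fin k) ℝ) :
    ‖P.map (algebraMap ℝ ℂ)‖ = ‖P‖ := by
  rw [Matrix.linfty_opNorm_def, Matrix.linfty_opNorm_def]
  congr 1
  apply Finset.sup_congr rfl
  intro i _
  congr 1
  funext j
  simp [Matrix.map_apply]

lemma smul_map_complex {k : ℕ} (t : ℝ) (M : Matrix (Fin k) (Fin k) ℝ) :
    (t • M).map (algebraMap ℝ ℂ) = t • M.map (algebraMap ℝ ℂ) := by
  ext i j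
  simp [Matrix.map_apply, Complex.real_smul]

lemma tendsto_exp_smul_zero {k : ℕ} (M : Matrix (Fin k) (Fin k) ℝ)
    (hM : ∀ μ ∈ spectrum ℂ (M.map (algebraMap ℝ ℂ)), μ.re < 0) :
    Tendsto (fun t : ℝ => exp (t • M)) atTop (𝓝 0) := by
  set N := M.map (algebraMap ℝ ℂ) with hN
  have h3 := tendsto_norm_pow_exp N hM
  -- norm identity
  have hid : ∀ t : ℝ, ‖exp (t • M)‖ = ‖exp (t • N)‖ := by
    intro t
    rw [← norm_map_complex, map_exp_complex, smul_map_complex]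
  -- sup over [0,1]
  have hcontψ : Continuous fun s : ℝ => ‖exp (s • N)‖ :=
    (exp_continuous.comp ((continuous_id : Continuous fun s : ℝ => s).smul continuous_const)).norm
  obtain ⟨x0, _, hx0⟩ := isCompact_Icc.exists_isMaxOn (Set.nonempty_Icc.mpr zero_le_one)
    hcontψ.continuousOn
  set K := ‖exp (x0 • N)‖ with hK
  have hbound : ∀ t : ℝ, 0 ≤ t → ‖exp (t • M)‖ ≤ ‖exp N ^ (⌊t⌋₊)‖ * K := by
    intro t ht
    set n := ⌊t⌋₊ with hn
    set s := t - n with hs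
    have hs0 : 0 ≤ s := by
      have := Nat.floor_le ht
      simp [hs]; linarith
    have hs1 : s ≤ 1 := by
      have := (Nat.lt_floor_add_one t).le
      simp [hs]; linarith
    have hsplit : t • N = (n : ℝ) • N + s • N := by
      rw [← add_smul]; congr 1; simp [hs]
    have hcomm : Commute ((n : ℝ) • N) (s • N) :=
      ((Commute.refl N).smul_left _).smul_right _
    have : exp (t • N) = exp N ^ n * exp (s • N) := by
      rw [hsplit, Matrix.exp_add_of_commute _ _ hcomm]
      congr 1
      rw [Nat.cast_smul_eq_nsmul ℝ n N, Matrix.exp_nsmul]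
    rw [hid t, this]
    calc ‖exp N ^ n * exp (s • N)‖ ≤ ‖exp N ^ n‖ * ‖exp (s • N)‖ := norm_mul_le _ _
      _ ≤ ‖exp N ^ n‖ * K := by
          apply mul_le_mul_of_nonneg_left _ (norm_nonneg _)
          exact hx0 ⟨hs0, hs1⟩
  have htb : Tendsto (fun t : ℝ => ‖exp N ^ (⌊t⌋₊)‖ * K) atTop (𝓝 0) := by
    have := (h3.comp (tendsto_nat_floor_atTop (α := ℝ))).mul_const K
    simpa using this
  apply squeeze_zero_norm' _ htb
  filter_upwards [eventually_ge_atTop (0 : ℝ)] with t ht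
  exact hbound t ht

lemma trace_PvvP {k : ℕ} (P : Matrix (Fin k) (Fin k) ℝ) (v : Fin k → ℝ) :
    (P * vecMulVec v v * Pᵀ).trace = ∑ i, (P *ᵥ v) i ^ 2 := by
  simp only [Matrix.trace, Matrix.diag, Matrix.mul_apply, Matrix.vecMulVec_apply,
    Matrix.mulVec, dotProduct, Matrix.transpose_apply, pow_two,
    Finset.sum_mul, Finset.mul_sum]
  apply Finset.sum_congr rfl
  intro i _
  rw [Finset.sum_comm]
  apply Finset.sum_congr rfl
  intro p _
  apply Finset.sum_congr rfl
  intro q _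
  ring

lemma key {k : ℕ} (M W : Matrix (Fin k) (Fin k) ℝ) (v : Fin k → ℝ)
    (hM : ∀ μ ∈ spectrum ℂ (M.map (algebraMap ℝ ℂ)), μ.re < 0)
    (hW : M * W + W * Mᵀ = -vecMulVec v v) :
    IntegrableOn (fun t : ℝ => ∑ i, (exp (t • M) *ᵥ v) i ^ 2) (Set.Ioi 0) ∧
    ∫ t in Set.Ioi (0:ℝ), (∑ i, (exp (t • M) *ᵥ v) i ^ 2) = W.trace := by
  set g : ℝ → ℝ := fun t => -(exp (t • M) * W * exp (t • Mᵀ)).trace with hg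
  set f' : ℝ → ℝ := fun t => ∑ i, (exp (t • M) *ᵥ v) i ^ 2 with hf'
  have hQP : ∀ t : ℝ, exp (t • Mᵀ) = (exp (t • M))ᵀ := by
    intro t
    rw [← Matrix.transpose_smul, Matrix.exp_transpose]
  -- derivative
  have hderiv : ∀ t : ℝ, HasDerivAt g (f' t) t := by
    intro t
    have hP : HasDerivAt (fun u : ℝ => exp (u • M)) (M * exp (t • M)) t :=
      hasDerivAt_exp_smul_const' M t
    have hQ : HasDerivAt (fun u : ℝ => exp (u • Mᵀ)) (exp (t • Mᵀ) * Mᵀ) t :=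
      hasDerivAt_exp_smul_const Mᵀ t
    have hPW : HasDerivAt (fun u : ℝ => exp (u • M) * W) (M * exp (t • M) * W) t :=
      hP.mul_const W
    have hfull := hPW.mul hQ
    set P := exp (t • M)
    set Q := exp (t • Mᵀ)
    have hcP : Commute P M := ((Commute.refl M).smul_left t).exp_left
    have hcQ : Commute Q Mᵀ := ((Commute.refl Mᵀ).smul_left t).exp_left
    have hD : M * P * W * Q + (P * W) * (Q * Mᵀ) = P * ((M * W + W * Mᵀ) * Q) := by
      rw [← hcP.eq, hcQ.eq]
      noncomm_ring
    have htrace := (LinearMap.toContinuousLinearMap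
      (Matrix.traceLinearMap (Fin k) ℝ ℝ)).hasFDerivAt.comp_hasDerivAt t hfull
    have hneg := htrace.neg
    convert hneg using 1
    case e'_4 => rfl
    case e'_5 => rfl
    case e'_8 => rfl
    have hτ : (LinearMap.toContinuousLinearMap (Matrix.traceLinearMap (Fin k) ℝ ℝ))
        (M * P * W * Q + P * W * (Q * Mᵀ)) = (P * ((M * W + W * Mᵀ) * Q)).trace := by
      rw [hD]; rfl
    show f' t = -(Matrix.trace (M * P * W * Q + P * W * (Q * Mᵀ)))
    rw [hD, hW]
    have hQPt : Q = Pᵀ := hQP t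
    rw [hQPt]
    have h2 : (P * (-vecMulVec v v * Pᵀ)).trace = -((P * vecMulVec v v * Pᵀ).trace) := by
      rw [neg_mul, mul_neg, Matrix.trace_neg, Matrix.mul_assoc]
    rw [h2, trace_PvvP, neg_neg]
  -- continuity
  have hPc : Continuous fun t : ℝ => exp (t • M) :=
    exp_continuous.comp ((continuous_id : Continuous fun s : ℝ => s).smul continuous_const)
  have hQc : Continuous fun t : ℝ => exp (t • Mᵀ) :=
    exp_continuous.comp ((continuous_id : Continuous fun s : ℝ => s).smul continuous_const)
  have hgc : Continuous g := (((hPc.mul continuous_const).mul hQc).matrix_trace).neg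
  -- tendsto
  have hgt : Tendsto g atTop (𝓝 0) := by
    have hφ : Continuous fun N : Matrix (Fin k) (Fin k) ℝ => -((N * W * Nᵀ).trace) :=
      (((continuous_id.mul continuous_const).mul continuous_id.matrix_transpose).matrix_trace).neg
    have h0 := (hφ.continuousAt (x := 0)).tendsto.comp (tendsto_exp_smul_zero M hM)
    simp only [Matrix.zero_mul, Matrix.mul_zero, Matrix.trace_zero, neg_zero] at h0
    · convert h0 using 1
      funext t
      simp only [hg, Function.comp, hQP t]
  -- nonneg
  have hpos : ∀ x ∈ Set.Ioi (0:ℝ), 0 ≤ f' x := by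
    intro x _
    exact Finset.sum_nonneg fun i _ => sq_nonneg _
  have hcont : ContinuousWithinAt g (Set.Ici 0) 0 := hgc.continuousWithinAt
  have hderiv' : ∀ x ∈ Set.Ioi (0:ℝ), HasDerivAt g (f' x) x := fun x _ => hderiv x
  have hInt : IntegrableOn f' (Set.Ioi 0) :=
    integrableOn_Ioi_deriv_of_nonneg hcont hderiv' hpos hgt
  have hval := integral_Ioi_of_hasDerivAt_of_tendsto hcont hderiv' hInt hgt
  have hg0 : g 0 = -W.trace := by
    simp [hg, zero_smul, exp_zero]
  refine ⟨hInt, ?_⟩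
  rw [hval, hg0]
  ring

end Aux

theorem functional_F1_eq_trace_X_sub_trace_Z {n r : ℕ}
    (A X : Matrix (Fin n) (Fin n) ℝ) (y₀ : Fin n → ℝ)
    (hA : IsStableMat A)
    (hX : A * X + X * Aᵀ = -vecMulVec y₀ y₀)
    (U : Matrix (Fin n) (Fin r) ℝ) (hU : Uᵀ * U = 1)
    (hB : IsStableMat (Uᵀ * A * U))
    (Z : Matrix (Fin r) (Fin r) ℝ)
    (hZ : (Uᵀ * A * U) * Z + Z * (Uᵀ * A * U)ᵀ = -vecMulVec (Uᵀ *ᵥ y₀) (Uᵀ *ᵥ y₀)) :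
    IntegrableOn
      (fun t : ℝ => (∑ i, (mexp (t • A) *ᵥ y₀) i ^ 2) -
        ∑ i, (U *ᵥ (mexp (t • (Uᵀ * A * U)) *ᵥ (Uᵀ *ᵥ y₀))) i ^ 2) (Set.Ioi 0) ∧
      ∫ t in Set.Ioi (0 : ℝ),
        ((∑ i, (mexp (t • A) *ᵥ y₀) i ^ 2) -
          ∑ i, (U *ᵥ (mexp (t • (Uᵀ * A * U)) *ᵥ (Uᵀ *ᵥ y₀))) i ^ 2)
        = X.trace - Z.trace := by
  have h1 := key A X y₀ hA hX
  have h2 := key (Uᵀ * A * U) Z (Uᵀ *ᵥ y₀) hB hZ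
  have hsum : ∀ w : Fin r → ℝ, ∑ i, (U *ᵥ w) i ^ 2 = ∑ j, w j ^ 2 := by
    intro w
    have hd : ∀ {m : ℕ} (u : Fin m → ℝ), ∑ i, u i ^ 2 = u ⬝ᵥ u := by
      intro m u; simp [dotProduct, pow_two]
    rw [hd, hd, dotProduct_mulVec]
    have : (U *ᵥ w) ᵥ* U = w := by
      have h1 : (U *ᵥ w) ᵥ* (Uᵀ)ᵀ = Uᵀ *ᵥ (U *ᵥ w) := Matrix.vecMul_transpose _ _
      rw [Matrix.transpose_transpose] at h1
      rw [h1, Matrix.mulVec_mulVec, hU, Matrix.one_mulVec]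
    rw [this]
  have hfun : (fun t : ℝ => (∑ i, (mexp (t • A) *ᵥ y₀) i ^ 2) -
        ∑ i, (U *ᵥ (mexp (t • (Uᵀ * A * U)) *ᵥ (Uᵀ *ᵥ y₀))) i ^ 2)
      = fun t : ℝ => (∑ i, (NormedSpace.exp (t • A) *ᵥ y₀) i ^ 2) -
        ∑ i, (NormedSpace.exp (t • (Uᵀ * A * U)) *ᵥ (Uᵀ *ᵥ y₀)) i ^ 2 := by
    funext t
    rw [hsum (mexp (t • (Uᵀ * A * U)) *ᵥ (Uᵀ *ᵥ y₀))]
    rfl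
  constructor
  · rw [hfun]
    exact h1.1.sub h2.1
  · rw [hfun, integral_sub h1.1 h2.1, h1.2, h2.2]
end

section
/- Under these assumptions, F₂(U) = ∫₀^∞ (⟨y(t), ỹ(t)⟩ − ‖ỹ(t)‖²) dt converges and equals tr(Uᵀ(P − UZ)). -/
open Matrix MeasureTheory
open scoped Kronecker

namespace F2Aux

open NormedSpace

theorem pow_div_factorial_le_exp (x : ℝ) (hx : 0 ≤ x) (n : ℕ) :
    x ^ n / n.factorial ≤ Real.exp x := by
  calc x ^ n / n.factorial
      ≤ ∑ i ∈ Finset.range (n + 1), x ^ i / i.factorial := by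
        refine Finset.single_le_sum (f := fun i => x ^ i / (i.factorial : ℝ)) ?_
          (Finset.self_mem_range_succ n)
        intro i _
        positivity
    _ ≤ Real.exp x := Real.sum_le_exp_of_nonneg hx _

theorem exists_gap {k : ℕ} (M : Matrix (Fin k) (Fin k) ℂ)
    (hM : ∀ μ ∈ spectrum ℂ M, μ.re < 0) :
    ∃ α : ℝ, 0 < α ∧ ∀ μ ∈ spectrum ℂ M, μ.re ≤ -(2 * α) := by
  have hfin : (spectrum ℂ M).Finite := Matrix.finite_spectrum M
  by_cases h : (spectrum ℂ M).Nonempty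
  · obtain ⟨S, hS⟩ := hfin.exists_finset_coe
    have hSne : S.Nonempty := by
      rwa [← Finset.coe_nonempty, hS]
    obtain ⟨μ₀, hμ₀, hmax⟩ := S.exists_mem_eq_sup' hSne (fun μ => μ.re)
    have hmlt : S.sup' hSne (fun μ => μ.re) < 0 := by
      rw [hmax]
      exact hM μ₀ (by rw [← hS]; exact_mod_cast hμ₀)
    refine ⟨-(S.sup' hSne (fun μ => μ.re)) / 2, by linarith, ?_⟩
    intro μ hmem
    have hmem' : μ ∈ S := by rw [← hS] at hmem; exact_mod_cast hmem
    have hle : μ.re ≤ S.sup' hSne (fun μ => μ.re) :=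
      Finset.le_sup' (fun μ : ℂ => μ.re) hmem'
    linarith
  · exact ⟨1, one_pos, fun μ hμ => absurd ⟨μ, hμ⟩ h⟩

section NormedMatrix
variable {k : ℕ}

attribute [local instance] Matrix.linftyOpNormedAddCommGroup Matrix.linftyOpNormedSpace
  Matrix.linftyOpNormedRing Matrix.linftyOpNormedAlgebra

noncomputable def entryCLM (𝕜 : Type*) [RCLike 𝕜] (k : ℕ) (i j : Fin k) :
    Matrix (Fin k) (Fin k) 𝕜 →L[𝕜] 𝕜 :=
  LinearMap.toContinuousLinearMap
    { toFun := fun X => X i j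
      map_add' := fun _ _ => rfl
      map_smul' := fun _ _ => rfl }

theorem hasDerivAt_mexp_entry (M : Matrix (Fin k) (Fin k) ℝ) (t : ℝ) (i j : Fin k) :
    HasDerivAt (fun s : ℝ => mexp (s • M) i j) ((M * mexp (t • M)) i j) t := by
  have h := hasDerivAt_exp_smul_const' (𝕂 := ℝ) M t
  have h2 := (entryCLM ℝ k i j).hasFDerivAt.comp_hasDerivAt t h
  exact h2

theorem mexp_map (M : Matrix (Fin k) (Fin k) ℝ) (t : ℝ) :
    (mexp (t • M)).map (algebraMap ℝ ℂ)
      = NormedSpace.exp (t • M.map (algebraMap ℝ ℂ)) := by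
  have hc : Continuous (Complex.ofRealAm.mapMatrix (m := Fin k) :
      Matrix (Fin k) (Fin k) ℝ →ₐ[ℝ] Matrix (Fin k) (Fin k) ℂ) :=
    LinearMap.continuous_of_finiteDimensional (Complex.ofRealAm.mapMatrix (m := Fin k)).toLinearMap
  have := map_exp (Complex.ofRealAm.mapMatrix (m := Fin k)) hc (t • M)
  have e1 : (mexp (t • M)).map (algebraMap ℝ ℂ)
      = Complex.ofRealAm.mapMatrix (exp (t • M)) := rfl
  rw [e1]
  erw [this]
  congr 1
  ext i j
  simp [AlgHom.mapMatrix_apply, Matrix.map_apply, Matrix.smul_apply, Complex.real_smul,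
    Complex.ofReal_mul, Complex.ofRealAm_coe]

theorem mexp_commute (M : Matrix (Fin k) (Fin k) ℝ) (t : ℝ) :
    M * mexp (t • M) = mexp (t • M) * M :=
  (((Commute.refl M).smul_right t).exp_right)

theorem mexp_zero (M : Matrix (Fin k) (Fin k) ℝ) :
    mexp ((0 : ℝ) • M) = 1 := by
  rw [zero_smul, mexp, NormedSpace.exp_zero]

noncomputable def mulVecCLM (v : Fin k → ℂ) :
    Matrix (Fin k) (Fin k) ℂ →L[ℂ] (Fin k → ℂ) :=
  LinearMap.toContinuousLinearMap
    { toFun := fun X => X *ᵥ v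
      map_add' := fun X Y => Matrix.add_mulVec X Y v
      map_smul' := fun c X => Matrix.smul_mulVec c X v }

theorem vec_decay (M : Matrix (Fin k) (Fin k) ℂ) {α : ℝ} (hα : 0 < α)
    (hM : ∀ μ ∈ spectrum ℂ M, μ.re ≤ -(2 * α)) (v : Fin k → ℂ) :
    ∃ C : ℝ, 0 ≤ C ∧ ∀ t : ℝ, 0 ≤ t →
      ‖NormedSpace.exp (t • M) *ᵥ v‖ ≤ C * Real.exp (-α * t) := by
  set f : Module.End ℂ (Fin k → ℂ) := Matrix.toLinAlgEquiv' M with hf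
  have hv : v ∈ ⨆ μ : ℂ, f.maxGenEigenspace μ := by
    rw [Module.End.iSup_maxGenEigenspace_eq_top]
    exact Submodule.mem_top
  refine Submodule.iSup_induction (motive := fun w => ∃ C : ℝ, 0 ≤ C ∧ ∀ t : ℝ, 0 ≤ t →
      ‖NormedSpace.exp (t • M) *ᵥ w‖ ≤ C * Real.exp (-α * t)) _ hv ?_ ?_ ?_
  · rintro μ w hw
    rw [Module.End.mem_maxGenEigenspace] at hw
    obtain ⟨m, hm⟩ := hw
    by_cases hw0 : w = 0
    · exact ⟨0, le_refl 0, fun t ht => by simp [hw0, Matrix.mulVec_zero]⟩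
    have hμspec : μ ∈ spectrum ℂ M := by
      have h1 : Module.End.HasGenEigenvalue f μ m := by
        rw [Module.End.hasGenEigenvalue_iff]
        intro hbot
        have : w ∈ f.genEigenspace μ m := by
          rw [Module.End.mem_genEigenspace_nat]
          exact hm
        rw [hbot] at this
        exact hw0 (by simpa using this)
      have h2 := Module.End.hasEigenvalue_of_hasGenEigenvalue h1
      rw [Module.End.hasEigenvalue_iff_mem_spectrum] at h2
      rw [hf] at h2
      rwa [AlgEquiv.spectrum_eq Matrix.toLinAlgEquiv'] at h2
    have hre : μ.re ≤ -(2 * α) := hM μ hμspec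
    set N : Matrix (Fin k) (Fin k) ℂ := M - μ • 1 with hN
    have hNm : (N ^ m) *ᵥ w = 0 := by
      have h3 : (Matrix.toLinAlgEquiv' (N ^ m)) w = 0 := by
        rw [map_pow, map_sub, _root_.map_smul, _root_.map_one, ← hf]
        exact hm
      rwa [Matrix.toLinAlgEquiv'_apply] at h3
    have key : ∀ t : ℝ, NormedSpace.exp (t • M) *ᵥ w
        = Complex.exp ((t : ℂ) * μ) •
          (∑ j ∈ Finset.range m, ((t : ℂ) ^ j * (j.factorial : ℂ)⁻¹) • (N ^ j *ᵥ w)) := by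
      intro t
      have hz : (t : ℝ) • M = (t : ℂ) • M := by
        ext i j
        simp [Matrix.smul_apply, Complex.real_smul]
      have hsplit : ((t : ℂ)) • M = (t : ℂ) • N + algebraMap ℂ _ ((t : ℂ) * μ) := by
        rw [Algebra.algebraMap_eq_smul_one, hN, smul_sub, ← smul_smul]
        abel
      have hcomm : Commute ((t : ℂ) • N) (algebraMap ℂ (Matrix (Fin k) (Fin k) ℂ) ((t : ℂ) * μ)) :=
        (Commute.symm (Algebra.commute_algebraMap_left _ _))
      have hexp : NormedSpace.exp ((t : ℝ) • M)
          = NormedSpace.exp ((t : ℂ) • N) * (Complex.exp ((t : ℂ) * μ) • 1) := by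
        rw [hz, hsplit, Matrix.exp_add_of_commute _ _ hcomm]
        erw [← algebraMap_exp_comm (𝕂 := ℂ) (𝔸 := Matrix (Fin k) (Fin k) ℂ) ((t : ℂ) * μ)]
        rw [← Complex.exp_eq_exp_ℂ, Algebra.algebraMap_eq_smul_one]
      have hsum : NormedSpace.exp ((t : ℂ) • N) *ᵥ w
          = ∑ j ∈ Finset.range m, ((t : ℂ) ^ j * (j.factorial : ℂ)⁻¹) • (N ^ j *ᵥ w) := by
        have hset : NormedSpace.exp ((t : ℂ) • N)
            = ∑' j : ℕ, ((j.factorial : ℂ)⁻¹) • ((t : ℂ) • N) ^ j := by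
          rw [NormedSpace.exp_eq_tsum ℂ]
        have hsummable : Summable (fun j : ℕ => ((j.factorial : ℂ)⁻¹) • ((t : ℂ) • N) ^ j) :=
          NormedSpace.expSeries_summable' ((t : ℂ) • N)
        have happ : NormedSpace.exp ((t : ℂ) • N) *ᵥ w
            = mulVecCLM w (NormedSpace.exp ((t : ℂ) • N)) := rfl
        rw [happ, hset, (mulVecCLM w).map_tsum hsummable]
        rw [tsum_eq_sum (s := Finset.range m) ?_]
        · refine Finset.sum_congr rfl fun j hj => ?_
          show ((j.factorial : ℂ)⁻¹ • ((t:ℂ) • N) ^ j) *ᵥ w = _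
          rw [smul_pow, Matrix.smul_mulVec, Matrix.smul_mulVec, smul_smul]
          congr 1
          ring
        · intro j hj
          have hjm : m ≤ j := by
            by_contra hc
            exact hj (Finset.mem_range.mpr (lt_of_not_ge hc))
          have hz0 : N ^ j *ᵥ w = 0 := by
            rw [← Nat.sub_add_cancel hjm, pow_add, ← Matrix.mulVec_mulVec, hNm,
              Matrix.mulVec_zero]
          show ((j.factorial : ℂ)⁻¹ • ((t:ℂ) • N) ^ j) *ᵥ w = 0
          rw [smul_pow, Matrix.smul_mulVec, Matrix.smul_mulVec, hz0]
          simp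
      rw [hexp, Matrix.mul_smul, mul_one, Matrix.smul_mulVec, hsum]
    refine ⟨∑ j ∈ Finset.range m, (α⁻¹) ^ j * ‖N ^ j *ᵥ w‖, by positivity, ?_⟩
    intro t ht
    rw [key t, norm_smul]
    have h1 : ‖Complex.exp ((t : ℂ) * μ)‖ = Real.exp (t * μ.re) := by
      rw [Complex.norm_exp]
      congr 1
      simp [Complex.mul_re]
    have hb : ‖∑ j ∈ Finset.range m, ((t : ℂ) ^ j * (j.factorial : ℂ)⁻¹) • (N ^ j *ᵥ w)‖
        ≤ Real.exp (α * t) * ∑ j ∈ Finset.range m, (α⁻¹) ^ j * ‖N ^ j *ᵥ w‖ := by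
      rw [Finset.mul_sum]
      refine (norm_sum_le _ _).trans (Finset.sum_le_sum fun j _ => ?_)
      rw [norm_smul, norm_mul, norm_pow, norm_inv]
      have ht1 : ‖(t : ℂ)‖ = t := by
        rw [Complex.norm_real, Real.norm_eq_abs, abs_of_nonneg ht]
      have ht2 : ‖(j.factorial : ℂ)‖ = (j.factorial : ℝ) := by
        simp
      rw [ht1, ht2]
      have h3 : t ^ j / (j.factorial : ℝ) ≤ Real.exp (α * t) * α⁻¹ ^ j := by
        have h4 := pow_div_factorial_le_exp (α * t) (by positivity) j
        rw [mul_pow] at h4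
        have h5 : (0:ℝ) < (j.factorial : ℝ) := by positivity
        rw [div_le_iff₀ h5] at h4 ⊢
        calc t ^ j = α ^ j * t ^ j * α⁻¹ ^ j := by
              rw [mul_comm (α ^ j), mul_assoc, ← mul_pow, mul_inv_cancel₀ hα.ne', one_pow, mul_one]
          _ ≤ (Real.exp (α * t) * (j.factorial : ℝ)) * α⁻¹ ^ j := by
              have := mul_le_mul_of_nonneg_right h4 (by positivity : (0:ℝ) ≤ α⁻¹ ^ j)
              linarith
          _ = Real.exp (α * t) * α⁻¹ ^ j * (j.factorial : ℝ) := by ring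
      calc t ^ j * (j.factorial : ℝ)⁻¹ * ‖N ^ j *ᵥ w‖
          = (t ^ j / (j.factorial : ℝ)) * ‖N ^ j *ᵥ w‖ := by ring
        _ ≤ (Real.exp (α * t) * α⁻¹ ^ j) * ‖N ^ j *ᵥ w‖ :=
            mul_le_mul_of_nonneg_right h3 (norm_nonneg _)
        _ = Real.exp (α * t) * (α⁻¹ ^ j * ‖N ^ j *ᵥ w‖) := by ring
    calc ‖Complex.exp ((t:ℂ) * μ)‖
          * ‖∑ j ∈ Finset.range m, ((t : ℂ) ^ j * (j.factorial : ℂ)⁻¹) • (N ^ j *ᵥ w)‖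
        ≤ Real.exp (t * μ.re)
          * (Real.exp (α * t) * ∑ j ∈ Finset.range m, (α⁻¹) ^ j * ‖N ^ j *ᵥ w‖) := by
          rw [h1]
          exact mul_le_mul_of_nonneg_left hb (Real.exp_nonneg _)
      _ ≤ Real.exp (-(2*α) * t)
          * (Real.exp (α * t) * ∑ j ∈ Finset.range m, (α⁻¹) ^ j * ‖N ^ j *ᵥ w‖) := by
          have : t * μ.re ≤ -(2*α) * t := by nlinarith
          have h6 : (0:ℝ) ≤ Real.exp (α * t)
              * ∑ j ∈ Finset.range m, (α⁻¹) ^ j * ‖N ^ j *ᵥ w‖ := by positivity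
          exact mul_le_mul_of_nonneg_right (Real.exp_le_exp.mpr this) h6
      _ = (∑ j ∈ Finset.range m, (α⁻¹) ^ j * ‖N ^ j *ᵥ w‖)
            * (Real.exp (-(2*α) * t) * Real.exp (α * t)) := by ring
      _ = (∑ j ∈ Finset.range m, (α⁻¹) ^ j * ‖N ^ j *ᵥ w‖) * Real.exp (-α * t) := by
          rw [← Real.exp_add]
          congr 1
          ring
  · exact ⟨0, le_refl 0, fun t ht => by simp [Matrix.mulVec_zero]⟩
  · rintro x y ⟨C1, hC1, h1⟩ ⟨C2, hC2, h2⟩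
    refine ⟨C1 + C2, by positivity, fun t ht => ?_⟩
    rw [Matrix.mulVec_add]
    calc ‖NormedSpace.exp (t • M) *ᵥ x + NormedSpace.exp (t • M) *ᵥ y‖
        ≤ ‖NormedSpace.exp (t • M) *ᵥ x‖ + ‖NormedSpace.exp (t • M) *ᵥ y‖ := norm_add_le _ _
      _ ≤ C1 * Real.exp (-α * t) + C2 * Real.exp (-α * t) := add_le_add (h1 t ht) (h2 t ht)
      _ = (C1 + C2) * Real.exp (-α * t) := by ring

end NormedMatrix

theorem mexp_entry_decay {k : ℕ} (M : Matrix (Fin k) (Fin k) ℝ) (hM : IsStableMat M) :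
    ∃ C α : ℝ, 0 ≤ C ∧ 0 < α ∧ ∀ t : ℝ, 0 ≤ t → ∀ i j,
      |mexp (t • M) i j| ≤ C * Real.exp (-α * t) := by
  set M' : Matrix (Fin k) (Fin k) ℂ := M.map (algebraMap ℝ ℂ) with hM'
  obtain ⟨α, hα, hgap⟩ := exists_gap M' hM
  choose Cf hCf hbound using fun j : Fin k => vec_decay M' hα hgap (Pi.single j 1)
  refine ⟨∑ j, Cf j, α, Finset.sum_nonneg fun j _ => hCf j, hα, ?_⟩
  intro t ht i j
  have h1 : |mexp (t • M) i j| = ‖NormedSpace.exp (t • M') i j‖ := by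
    rw [← mexp_map]
    simp [Matrix.map_apply, Complex.norm_real]
  have h2 : NormedSpace.exp (t • M') i j
      = (NormedSpace.exp (t • M') *ᵥ Pi.single j 1) i := by
    simp [Matrix.mulVec, dotProduct, Pi.single_apply]
  rw [h1, h2]
  calc ‖(NormedSpace.exp (t • M') *ᵥ Pi.single j 1) i‖
      ≤ ‖NormedSpace.exp (t • M') *ᵥ Pi.single j 1‖ := norm_le_pi_norm _ i
    _ ≤ Cf j * Real.exp (-α * t) := hbound j t ht
    _ ≤ (∑ j', Cf j') * Real.exp (-α * t) := by
        have : Cf j ≤ ∑ j', Cf j' :=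
          Finset.single_le_sum (fun j' _ => hCf j') (Finset.mem_univ j)
        exact mul_le_mul_of_nonneg_right this (Real.exp_nonneg _)

/-! ### Entrywise derivative toolkit -/

theorem hasDerivAt_matrix_mul {m p q : ℕ} {F : ℝ → Matrix (Fin m) (Fin p) ℝ}
    {F' : Matrix (Fin m) (Fin p) ℝ} {G : ℝ → Matrix (Fin p) (Fin q) ℝ}
    {G' : Matrix (Fin p) (Fin q) ℝ} {t : ℝ}
    (hF : ∀ i j, HasDerivAt (fun s => F s i j) (F' i j) t)
    (hG : ∀ i j, HasDerivAt (fun s => G s i j) (G' i j) t) :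
    ∀ i j, HasDerivAt (fun s => (F s * G s) i j) ((F' * G t + F t * G') i j) t := by
  intro i j
  have h1 : HasDerivAt (fun s => ∑ l, F s i l * G s l j)
      (∑ l, (F' i l * G t l j + F t i l * G' l j)) t :=
    HasDerivAt.fun_sum (fun l _ => (hF i l).mul (hG l j))
  have h2 : (fun s => (F s * G s) i j) = fun s => ∑ l, F s i l * G s l j := by
    funext s
    exact Matrix.mul_apply
  rw [h2, Matrix.add_apply, Matrix.mul_apply, Matrix.mul_apply, ← Finset.sum_add_distrib]
  exact h1

theorem hasDerivAt_matrix_trace {m : ℕ} {F : ℝ → Matrix (Fin m) (Fin m) ℝ}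
    {F' : Matrix (Fin m) (Fin m) ℝ} {t : ℝ}
    (h : ∀ i j, HasDerivAt (fun s => F s i j) (F' i j) t) :
    HasDerivAt (fun s => (F s).trace) F'.trace t := by
  have := HasDerivAt.fun_sum (fun i (_ : i ∈ (Finset.univ : Finset (Fin m))) => h i i)
  simpa [Matrix.trace, Matrix.diag] using this

/-! ### Multilinear trace identities -/

theorem trace_form {n r : ℕ} (U : Matrix (Fin n) (Fin r) ℝ) (x : Fin n → ℝ) (w : Fin r → ℝ) :
    ∑ i, x i * (U *ᵥ w) i = trace (Uᵀ * vecMulVec x w) := by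
  simp only [Matrix.trace, Matrix.diag, Matrix.mul_apply, Matrix.vecMulVec_apply,
    Matrix.mulVec, dotProduct, Matrix.transpose_apply, Finset.mul_sum]
  rw [Finset.sum_comm]
  refine Finset.sum_congr rfl fun i _ => ?_
  refine Finset.sum_congr rfl fun j _ => ?_
  ring

theorem vecMulVec_mulVec {m n p q : ℕ} (M : Matrix (Fin m) (Fin n) ℝ)
    (N : Matrix (Fin p) (Fin q) ℝ) (a : Fin n → ℝ) (b : Fin q → ℝ) :
    vecMulVec (M *ᵥ a) (N *ᵥ b) = M * vecMulVec a b * Nᵀ := by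
  ext i j
  simp only [Matrix.vecMulVec_apply, Matrix.mul_apply, Matrix.mulVec, dotProduct,
    Matrix.transpose_apply, Finset.sum_mul, Finset.mul_sum]
  refine Finset.sum_congr rfl fun l _ => ?_
  refine Finset.sum_congr rfl fun s _ => ?_
  ring


theorem entry_le_sum_abs {a b : ℕ} (X : Matrix (Fin a) (Fin b) ℝ) (i : Fin a) (j : Fin b) :
    |X i j| ≤ ∑ p, ∑ q, |X p q| := by
  calc |X i j| ≤ ∑ q, |X i q| :=
        Finset.single_le_sum (f := fun q => |X i q|) (fun q _ => abs_nonneg _)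
          (Finset.mem_univ j)
    _ ≤ ∑ p, ∑ q, |X p q| :=
        Finset.single_le_sum (f := fun p => ∑ q, |X p q|) (fun p _ => Finset.sum_nonneg
          fun q _ => abs_nonneg _) (Finset.mem_univ i)

theorem entry_mul_bound {a b c : ℕ} {X : Matrix (Fin a) (Fin b) ℝ}
    {Y : Matrix (Fin b) (Fin c) ℝ} {cX cY : ℝ}
    (hX : ∀ i j, |X i j| ≤ cX) (hY : ∀ i j, |Y i j| ≤ cY) (hcX : 0 ≤ cX) :
    ∀ i j, |(X * Y) i j| ≤ b * (cX * cY) := by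
  intro i j
  rw [Matrix.mul_apply]
  calc |∑ l, X i l * Y l j| ≤ ∑ l, |X i l * Y l j| := Finset.abs_sum_le_sum_abs _ _
    _ ≤ ∑ _l : Fin b, cX * cY := Finset.sum_le_sum (fun l _ => by
        rw [abs_mul]
        exact mul_le_mul (hX i l) (hY l j) (abs_nonneg _) hcX)
    _ = b * (cX * cY) := by
        rw [Finset.sum_const, Finset.card_univ, Fintype.card_fin, nsmul_eq_mul]

theorem trace_abs_bound {a : ℕ} {X : Matrix (Fin a) (Fin a) ℝ} {cX : ℝ}
    (hX : ∀ i j, |X i j| ≤ cX) : |Matrix.trace X| ≤ a * cX := by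
  calc |Matrix.trace X| ≤ ∑ i, |X i i| := Finset.abs_sum_le_sum_abs _ _
    _ ≤ ∑ _i : Fin a, cX := Finset.sum_le_sum (fun i _ => hX i i)
    _ = a * cX := by
        rw [Finset.sum_const, Finset.card_univ, Fintype.card_fin, nsmul_eq_mul]

theorem trace_prod4_bound {a b : ℕ} (V : Matrix (Fin a) (Fin b) ℝ)
    (Ea : Matrix (Fin b) (Fin b) ℝ) (X : Matrix (Fin b) (Fin a) ℝ)
    (G : Matrix (Fin a) (Fin a) ℝ) {c0 c1 cx c2 : ℝ}
    (h0 : ∀ i j, |V i j| ≤ c0) (h1 : ∀ i j, |Ea i j| ≤ c1) (hx : ∀ i j, |X i j| ≤ cx)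
    (h2 : ∀ i j, |G i j| ≤ c2) (hc0 : 0 ≤ c0) (hc1 : 0 ≤ c1) (hcx : 0 ≤ cx) :
    |Matrix.trace (V * Ea * X * Gᵀ)| ≤ a * (a * ((b * ((b * (c0 * c1)) * cx)) * c2)) := by
  have s1 := entry_mul_bound h0 h1 hc0
  have s2 := entry_mul_bound s1 hx (by positivity)
  have s3 := entry_mul_bound s2 (fun i j => h2 j i) (by positivity)
  exact trace_abs_bound s3


end F2Aux

open F2Aux

theorem functional_F2_eq_trace {n r : ℕ}
    (A : Matrix (Fin n) (Fin n) ℝ) (y₀ : Fin n → ℝ)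
    (hA : IsStableMat A)
    (U : Matrix (Fin n) (Fin r) ℝ) (hU : Uᵀ * U = 1)
    (hB : IsStableMat (Uᵀ * A * U))
    (Z : Matrix (Fin r) (Fin r) ℝ)
    (hZ : (Uᵀ * A * U) * Z + Z * (Uᵀ * A * U)ᵀ = -vecMulVec (Uᵀ *ᵥ y₀) (Uᵀ *ᵥ y₀))
    (P : Matrix (Fin n) (Fin r) ℝ)
    (hP : A * P + P * (Uᵀ * A * U)ᵀ = -vecMulVec y₀ (Uᵀ *ᵥ y₀)) :
    IntegrableOn
      (fun t : ℝ => (∑ i, (mexp (t • A) *ᵥ y₀) i *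
          (U *ᵥ (mexp (t • (Uᵀ * A * U)) *ᵥ (Uᵀ *ᵥ y₀))) i) -
        ∑ i, (U *ᵥ (mexp (t • (Uᵀ * A * U)) *ᵥ (Uᵀ *ᵥ y₀))) i ^ 2) (Set.Ioi 0) ∧
      ∫ t in Set.Ioi (0 : ℝ),
        ((∑ i, (mexp (t • A) *ᵥ y₀) i *
            (U *ᵥ (mexp (t • (Uᵀ * A * U)) *ᵥ (Uᵀ *ᵥ y₀))) i) -
          ∑ i, (U *ᵥ (mexp (t • (Uᵀ * A * U)) *ᵥ (Uᵀ *ᵥ y₀))) i ^ 2)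
        = (Uᵀ * (P - U * Z)).trace := by
  classical
  set B : Matrix (Fin r) (Fin r) ℝ := Uᵀ * A * U with hBdef
  set c₀ : Fin r → ℝ := Uᵀ *ᵥ y₀ with hc₀def
  set Y : Matrix (Fin n) (Fin r) ℝ := vecMulVec y₀ c₀ with hYdef
  set Cm : Matrix (Fin r) (Fin r) ℝ := vecMulVec c₀ c₀ with hCmdef
  set φ : ℝ → ℝ := fun t =>
    trace (Uᵀ * mexp (t • A) * Y * (mexp (t • B))ᵀ)
      - trace (mexp (t • B) * Cm * (mexp (t • B))ᵀ) with hφdef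
  set h : ℝ → ℝ := fun t =>
    trace (Uᵀ * mexp (t • A) * P * (mexp (t • B))ᵀ)
      - trace (mexp (t • B) * Z * (mexp (t • B))ᵀ) with hhdef
  -- Step A: the integrand coincides with φ
  have hfun : (fun t : ℝ =>
      (∑ i, (mexp (t • A) *ᵥ y₀) i * (U *ᵥ (mexp (t • B) *ᵥ c₀)) i)
        - ∑ i, (U *ᵥ (mexp (t • B) *ᵥ c₀)) i ^ 2) = φ := by
    funext t
    have e1 : ∑ i, (mexp (t • A) *ᵥ y₀) i * (U *ᵥ (mexp (t • B) *ᵥ c₀)) i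
        = trace (Uᵀ * mexp (t • A) * Y * (mexp (t • B))ᵀ) := by
      rw [trace_form U (mexp (t • A) *ᵥ y₀) (mexp (t • B) *ᵥ c₀), vecMulVec_mulVec, ← hYdef]
      simp only [Matrix.mul_assoc]
    have e2 : ∑ i, (U *ᵥ (mexp (t • B) *ᵥ c₀)) i ^ 2
        = trace (mexp (t • B) * Cm * (mexp (t • B))ᵀ) := by
      calc ∑ i, (U *ᵥ (mexp (t • B) *ᵥ c₀)) i ^ 2
          = ∑ i, (U *ᵥ (mexp (t • B) *ᵥ c₀)) i * (U *ᵥ (mexp (t • B) *ᵥ c₀)) i := by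
            refine Finset.sum_congr rfl fun i _ => ?_
            ring
        _ = trace (Uᵀ * vecMulVec (U *ᵥ (mexp (t • B) *ᵥ c₀)) (mexp (t • B) *ᵥ c₀)) :=
            trace_form U _ _
        _ = trace (mexp (t • B) * Cm * (mexp (t • B))ᵀ) := by
            rw [Matrix.mulVec_mulVec, vecMulVec_mulVec, ← hCmdef]
            rw [show Uᵀ * (U * mexp (t • B) * Cm * (mexp (t • B))ᵀ)
                = (Uᵀ * U) * (mexp (t • B) * Cm * (mexp (t • B))ᵀ) from by
              simp only [Matrix.mul_assoc], hU, Matrix.one_mul]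
    rw [e1, e2, hφdef]
  -- Step B: derivatives
  have hT1 : ∀ (X : Matrix (Fin n) (Fin r) ℝ) (t : ℝ),
      HasDerivAt (fun s => trace (Uᵀ * mexp (s • A) * X * (mexp (s • B))ᵀ))
        (trace (Uᵀ * (A * mexp (t • A)) * X * (mexp (t • B))ᵀ)
          + trace (Uᵀ * mexp (t • A) * X * (B * mexp (t • B))ᵀ)) t := by
    intro X t
    have h1 : ∀ i j, HasDerivAt (fun s => (Uᵀ * mexp (s • A)) i j)
        (((0 : Matrix (Fin r) (Fin n) ℝ) * mexp (t • A) + Uᵀ * (A * mexp (t • A))) i j) t :=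
      hasDerivAt_matrix_mul (fun i j => by simpa using hasDerivAt_const t (Uᵀ i j))
        (fun i j => hasDerivAt_mexp_entry A t i j)
    have h2 : ∀ i j, HasDerivAt (fun s => (Uᵀ * mexp (s • A) * X) i j)
        ((((0 : Matrix (Fin r) (Fin n) ℝ) * mexp (t • A) + Uᵀ * (A * mexp (t • A))) * X
          + (Uᵀ * mexp (t • A)) * (0 : Matrix (Fin n) (Fin r) ℝ)) i j) t :=
      hasDerivAt_matrix_mul h1 (fun i j => by
        simpa using hasDerivAt_const t (X i j))
    have h3 : ∀ i j, HasDerivAt (fun s => ((mexp (s • B))ᵀ) i j)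
        (((B * mexp (t • B))ᵀ) i j) t :=
      fun i j => hasDerivAt_mexp_entry B t j i
    have h5 := hasDerivAt_matrix_trace (hasDerivAt_matrix_mul h2 h3)
    have hval : ((((0 : Matrix (Fin r) (Fin n) ℝ) * mexp (t • A) + Uᵀ * (A * mexp (t • A))) * X
          + (Uᵀ * mexp (t • A)) * (0 : Matrix (Fin n) (Fin r) ℝ))
          * (mexp (t • B))ᵀ + (Uᵀ * mexp (t • A) * X) * (B * mexp (t • B))ᵀ).trace
        = trace (Uᵀ * (A * mexp (t • A)) * X * (mexp (t • B))ᵀ)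
          + trace (Uᵀ * mexp (t • A) * X * (B * mexp (t • B))ᵀ) := by
      rw [Matrix.zero_mul, zero_add, Matrix.mul_zero, add_zero, Matrix.trace_add]
    rw [← hval]
    exact h5
  have hT2 : ∀ (X : Matrix (Fin r) (Fin r) ℝ) (t : ℝ),
      HasDerivAt (fun s => trace (mexp (s • B) * X * (mexp (s • B))ᵀ))
        (trace ((B * mexp (t • B)) * X * (mexp (t • B))ᵀ)
          + trace (mexp (t • B) * X * (B * mexp (t • B))ᵀ)) t := by
    intro X t
    have h2 : ∀ i j, HasDerivAt (fun s => (mexp (s • B) * X) i j)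
        (((B * mexp (t • B)) * X + (mexp (t • B)) * (0 : Matrix (Fin r) (Fin r) ℝ)) i j) t :=
      hasDerivAt_matrix_mul (fun i j => hasDerivAt_mexp_entry B t i j)
        (fun i j => by simpa using hasDerivAt_const t (X i j))
    have h3 : ∀ i j, HasDerivAt (fun s => ((mexp (s • B))ᵀ) i j)
        (((B * mexp (t • B))ᵀ) i j) t :=
      fun i j => hasDerivAt_mexp_entry B t j i
    have h5 := hasDerivAt_matrix_trace (hasDerivAt_matrix_mul h2 h3)
    have hval : (((B * mexp (t • B)) * X + (mexp (t • B)) * (0 : Matrix (Fin r) (Fin r) ℝ))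
          * (mexp (t • B))ᵀ + (mexp (t • B) * X) * (B * mexp (t • B))ᵀ).trace
        = trace ((B * mexp (t • B)) * X * (mexp (t • B))ᵀ)
          + trace (mexp (t • B) * X * (B * mexp (t • B))ᵀ) := by
      rw [Matrix.mul_zero, add_zero, Matrix.trace_add]
    rw [← hval]
    exact h5
  -- Step C: key algebra
  have hcE : ∀ t : ℝ, A * mexp (t • A) = mexp (t • A) * A := fun t => mexp_commute A t
  have hcF : ∀ t : ℝ, B * mexp (t • B) = mexp (t • B) * B := fun t => mexp_commute B t
  have hcFT : ∀ t : ℝ, (mexp (t • B))ᵀ * Bᵀ = Bᵀ * (mexp (t • B))ᵀ := by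
    intro t
    rw [← Matrix.transpose_mul, ← Matrix.transpose_mul, hcF]
  have hkey1 : ∀ t : ℝ,
      trace (Uᵀ * (A * mexp (t • A)) * P * (mexp (t • B))ᵀ)
        + trace (Uᵀ * mexp (t • A) * P * (B * mexp (t • B))ᵀ)
      = - trace (Uᵀ * mexp (t • A) * Y * (mexp (t • B))ᵀ) := by
    intro t
    have e₁ : Uᵀ * (A * mexp (t • A)) * P * (mexp (t • B))ᵀ
        = Uᵀ * mexp (t • A) * (A * P) * (mexp (t • B))ᵀ := by
      rw [hcE]
      simp only [Matrix.mul_assoc]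
    have e₂ : Uᵀ * mexp (t • A) * P * (B * mexp (t • B))ᵀ
        = Uᵀ * mexp (t • A) * (P * Bᵀ) * (mexp (t • B))ᵀ := by
      rw [Matrix.transpose_mul, show (mexp (t • B))ᵀ * Bᵀ = Bᵀ * (mexp (t • B))ᵀ from hcFT t]
      simp only [Matrix.mul_assoc]
    rw [e₁, e₂, ← Matrix.trace_add]
    rw [show Uᵀ * mexp (t • A) * (A * P) * (mexp (t • B))ᵀ
          + Uᵀ * mexp (t • A) * (P * Bᵀ) * (mexp (t • B))ᵀ
        = Uᵀ * mexp (t • A) * (A * P + P * Bᵀ) * (mexp (t • B))ᵀ from by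
      rw [Matrix.mul_add, Matrix.add_mul]]
    rw [hP, Matrix.mul_neg, Matrix.neg_mul, Matrix.trace_neg]
  have hkey2 : ∀ t : ℝ,
      trace ((B * mexp (t • B)) * Z * (mexp (t • B))ᵀ)
        + trace (mexp (t • B) * Z * (B * mexp (t • B))ᵀ)
      = - trace (mexp (t • B) * Cm * (mexp (t • B))ᵀ) := by
    intro t
    have e₁ : (B * mexp (t • B)) * Z * (mexp (t • B))ᵀ
        = mexp (t • B) * (B * Z) * (mexp (t • B))ᵀ := by
      rw [hcF]
      simp only [Matrix.mul_assoc]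
    have e₂ : mexp (t • B) * Z * (B * mexp (t • B))ᵀ
        = mexp (t • B) * (Z * Bᵀ) * (mexp (t • B))ᵀ := by
      rw [Matrix.transpose_mul, show (mexp (t • B))ᵀ * Bᵀ = Bᵀ * (mexp (t • B))ᵀ from hcFT t]
      simp only [Matrix.mul_assoc]
    rw [e₁, e₂, ← Matrix.trace_add]
    rw [show mexp (t • B) * (B * Z) * (mexp (t • B))ᵀ
          + mexp (t • B) * (Z * Bᵀ) * (mexp (t • B))ᵀ
        = mexp (t • B) * (B * Z + Z * Bᵀ) * (mexp (t • B))ᵀ from by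
      rw [Matrix.mul_add, Matrix.add_mul]]
    rw [hZ, Matrix.mul_neg, Matrix.neg_mul, Matrix.trace_neg]
  have hhd : ∀ t : ℝ, HasDerivAt h (-(φ t)) t := by
    intro t
    have hd := (hT1 P t).sub (hT2 Z t)
    have hval : (trace (Uᵀ * (A * mexp (t • A)) * P * (mexp (t • B))ᵀ)
          + trace (Uᵀ * mexp (t • A) * P * (B * mexp (t • B))ᵀ))
        - (trace ((B * mexp (t • B)) * Z * (mexp (t • B))ᵀ)
          + trace (mexp (t • B) * Z * (B * mexp (t • B))ᵀ)) = -(φ t) := by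
      rw [hkey1 t, hkey2 t, hφdef]
      ring
    rw [← hval]
    exact hd
  have hφd : ∀ t : ℝ, HasDerivAt φ
      (trace (Uᵀ * (A * mexp (t • A)) * Y * (mexp (t • B))ᵀ)
        + trace (Uᵀ * mexp (t • A) * Y * (B * mexp (t • B))ᵀ)
      - (trace ((B * mexp (t • B)) * Cm * (mexp (t • B))ᵀ)
        + trace (mexp (t • B) * Cm * (B * mexp (t • B))ᵀ))) t :=
    fun t => (hT1 Y t).sub (hT2 Cm t)
  have hφcont : Continuous φ :=
    continuous_iff_continuousAt.mpr fun t => (hφd t).continuousAt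
  have hhcont : Continuous h :=
    continuous_iff_continuousAt.mpr fun t => (hhd t).continuousAt
  -- Step D: decay bounds
  obtain ⟨CA, αA, hCA0, hαA, hCAb⟩ := mexp_entry_decay A hA
  obtain ⟨CB, αB, hCB0, hαB, hCBb⟩ := mexp_entry_decay B hB
  set α := min αA αB with hαdef
  have hα0 : 0 < α := lt_min hαA hαB
  have hEb : ∀ t : ℝ, 0 ≤ t → ∀ i j, |mexp (t • A) i j| ≤ CA * Real.exp (-α * t) := by
    intro t ht i j
    refine (hCAb t ht i j).trans ?_
    have hle : Real.exp (-αA * t) ≤ Real.exp (-α * t) := by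
      apply Real.exp_le_exp.mpr
      have := min_le_left αA αB
      nlinarith
    exact mul_le_mul_of_nonneg_left hle hCA0
  have hFb : ∀ t : ℝ, 0 ≤ t → ∀ i j, |mexp (t • B) i j| ≤ CB * Real.exp (-α * t) := by
    intro t ht i j
    refine (hCBb t ht i j).trans ?_
    have hle : Real.exp (-αB * t) ≤ Real.exp (-α * t) := by
      apply Real.exp_le_exp.mpr
      have := min_le_right αA αB
      nlinarith
    exact mul_le_mul_of_nonneg_left hle hCB0
  have hbd : ∀ (X : Matrix (Fin n) (Fin r) ℝ) (W : Matrix (Fin r) (Fin r) ℝ),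
      ∃ K : ℝ, 0 ≤ K ∧ ∀ t : ℝ, 0 ≤ t →
        |trace (Uᵀ * mexp (t • A) * X * (mexp (t • B))ᵀ)
          - trace (mexp (t • B) * W * (mexp (t • B))ᵀ)|
          ≤ K * Real.exp (-(2 * α) * t) := by
    intro X W
    set SU : ℝ := ∑ p, ∑ q, |Uᵀ p q| with hSU
    set SX : ℝ := ∑ p, ∑ q, |X p q| with hSX
    set SW : ℝ := ∑ p, ∑ q, |W p q| with hSW
    have hSU0 : 0 ≤ SU := Finset.sum_nonneg fun p _ => Finset.sum_nonneg fun q _ => abs_nonneg _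
    have hSX0 : 0 ≤ SX := Finset.sum_nonneg fun p _ => Finset.sum_nonneg fun q _ => abs_nonneg _
    have hSW0 : 0 ≤ SW := Finset.sum_nonneg fun p _ => Finset.sum_nonneg fun q _ => abs_nonneg _
    have hK0 : (0:ℝ) ≤ (r : ℝ) * r * n * n * (SU * CA * SX * CB)
        + (r : ℝ) * r * r * r * (CB * SW * CB) := by
      have n1 : (0:ℝ) ≤ (r:ℝ) * r * n * n := by positivity
      have n2 : (0:ℝ) ≤ (r:ℝ) * r * r * r := by positivity
      have m1 : (0:ℝ) ≤ SU * CA * SX * CB :=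
        mul_nonneg (mul_nonneg (mul_nonneg hSU0 hCA0) hSX0) hCB0
      have m2 : (0:ℝ) ≤ CB * SW * CB := mul_nonneg (mul_nonneg hCB0 hSW0) hCB0
      exact add_nonneg (mul_nonneg n1 m1) (mul_nonneg n2 m2)
    refine ⟨(r : ℝ) * r * n * n * (SU * CA * SX * CB)
      + (r : ℝ) * r * r * r * (CB * SW * CB), hK0, ?_⟩
    intro t ht
    set e := Real.exp (-α * t) with he
    have he0 : 0 ≤ e := Real.exp_nonneg _
    have hee : e * e = Real.exp (-(2 * α) * t) := by
      rw [he, ← Real.exp_add]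
      congr 1
      ring
    have h1 := trace_prod4_bound Uᵀ (mexp (t • A)) X (mexp (t • B))
      (entry_le_sum_abs Uᵀ) (hEb t ht) (entry_le_sum_abs X) (hFb t ht)
      hSU0 (mul_nonneg hCA0 he0) hSX0
    have h2pre : trace (mexp (t • B) * W * (mexp (t • B))ᵀ)
        = trace (mexp (t • B) * W * 1 * (mexp (t • B))ᵀ) := by
      rw [Matrix.mul_one]
    have hone : ∀ i j : Fin r, |(1 : Matrix (Fin r) (Fin r) ℝ) i j| ≤ 1 := by
      intro i j
      rw [Matrix.one_apply]
      split_ifs <;> simp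
    have h2 := trace_prod4_bound (mexp (t • B)) W (1 : Matrix (Fin r) (Fin r) ℝ)
      (mexp (t • B)) (hFb t ht) (entry_le_sum_abs W) hone (hFb t ht)
      (mul_nonneg hCB0 he0) hSW0 (by norm_num)
    calc |trace (Uᵀ * mexp (t • A) * X * (mexp (t • B))ᵀ)
          - trace (mexp (t • B) * W * (mexp (t • B))ᵀ)|
        ≤ |trace (Uᵀ * mexp (t • A) * X * (mexp (t • B))ᵀ)|
          + |trace (mexp (t • B) * W * (mexp (t • B))ᵀ)| := abs_sub _ _
      _ = |trace (Uᵀ * mexp (t • A) * X * (mexp (t • B))ᵀ)|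
          + |trace (mexp (t • B) * W * 1 * (mexp (t • B))ᵀ)| := by rw [h2pre]
      _ ≤ (r : ℝ) * ((r : ℝ) * (((n : ℝ) * (((n : ℝ) * (SU * (CA * e))) * SX)) * (CB * e)))
          + (r : ℝ) * ((r : ℝ) * (((r : ℝ) * (((r : ℝ) * ((CB * e) * SW)) * 1)) * (CB * e))) :=
          add_le_add h1 h2
      _ = ((r : ℝ) * r * n * n * (SU * CA * SX * CB)
          + (r : ℝ) * r * r * r * (CB * SW * CB)) * (e * e) := by ring
      _ = ((r : ℝ) * r * n * n * (SU * CA * SX * CB)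
          + (r : ℝ) * r * r * r * (CB * SW * CB)) * Real.exp (-(2 * α) * t) := by rw [hee]
  -- Step E: integrability of φ
  obtain ⟨K, hK0, hKb⟩ := hbd Y Cm
  have hintφ : IntegrableOn φ (Set.Ioi (0 : ℝ)) := by
    refine Integrable.mono'
      ((exp_neg_integrableOn_Ioi 0 (by linarith : (0:ℝ) < 2 * α)).const_mul K)
      hφcont.aestronglyMeasurable ?_
    filter_upwards [ae_restrict_mem measurableSet_Ioi] with t ht
    rw [Real.norm_eq_abs, hφdef]
    exact hKb t (le_of_lt ht)
  -- Step F: limit of h at infinity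
  obtain ⟨K', hK'0, hK'b⟩ := hbd P Z
  have hlim : Filter.Tendsto h Filter.atTop (nhds 0) := by
    have hg : Filter.Tendsto (fun t : ℝ => K' * Real.exp (-(2 * α) * t))
        Filter.atTop (nhds 0) := by
      have h1 : Filter.Tendsto (fun t : ℝ => -(2 * α) * t) Filter.atTop Filter.atBot := by
        exact Filter.tendsto_id.const_mul_atTop_of_neg (by linarith : -(2 * α) < 0)
      have h2 := Real.tendsto_exp_atBot.comp h1
      have h3 := h2.const_mul K'
      simpa using h3
    have hg' : Filter.Tendsto (fun t : ℝ => -(K' * Real.exp (-(2 * α) * t)))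
        Filter.atTop (nhds 0) := by
      simpa using hg.neg
    refine tendsto_of_tendsto_of_tendsto_of_le_of_le' hg' hg ?_ ?_
    · filter_upwards [Filter.eventually_ge_atTop (0:ℝ)] with t ht
      exact neg_le_of_abs_le (hK'b t ht)
    · filter_upwards [Filter.eventually_ge_atTop (0:ℝ)] with t ht
      exact le_of_abs_le (hK'b t ht)
  -- Step G: FTC
  have hFTC := integral_Ioi_of_hasDerivAt_of_tendsto' (a := 0) (f := h)
    (f' := fun t => -(φ t)) (fun x _ => hhd x) hintφ.neg hlim
  have hh0 : h 0 = (Uᵀ * (P - U * Z)).trace := by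
    rw [hhdef]
    simp only [mexp_zero, Matrix.mul_one, Matrix.one_mul, Matrix.transpose_one]
    rw [Matrix.mul_sub, Matrix.trace_sub, ← Matrix.mul_assoc, hU, Matrix.one_mul]
  have hintegral : ∫ t in Set.Ioi (0:ℝ), φ t = (Uᵀ * (P - U * Z)).trace := by
    rw [MeasureTheory.integral_neg] at hFTC
    have : ∫ t in Set.Ioi (0:ℝ), φ t = h 0 := by linarith
    rw [this, hh0]
  constructor
  · rw [hfun]
    exact hintφ
  · rw [hfun]
    exact hintegral
end

section
/- Assume y₀ lies in the column space of U, i.e., y₀ = UUᵀy₀. Then the Lyapunov residual satisfies R₁(U) = ‖A(UZUᵀ) + (UZUᵀ)Aᵀ + y₀y₀ᵀ‖_F = √2 · ‖(AU − UB)Z‖_F. -/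
open Matrix MeasureTheory
open scoped Kronecker

open Polynomial in
lemma LyapAux.mem_spectrum_iff_eval {k : ℕ} {K : Type*} [Field K]
    (M : Matrix (Fin k) (Fin k) K) (μ : K) :
    μ ∈ spectrum K M ↔ M.charpoly.eval μ = 0 := by
  rw [spectrum.mem_iff, Matrix.isUnit_iff_isUnit_det, isUnit_iff_ne_zero, not_not]
  have h : (algebraMap K (Matrix (Fin k) (Fin k) K) μ - M).det = M.charpoly.eval μ := by
    rw [Matrix.charpoly, ← Polynomial.coe_evalRingHom, RingHom.map_det]
    congr 1
    ext i j
    by_cases hij : i = j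
    · subst hij
      simp [Matrix.charmatrix_apply_eq, Matrix.algebraMap_matrix_apply]
    · simp [Matrix.charmatrix_apply_ne _ _ _ hij, Matrix.algebraMap_matrix_apply, hij]
  rw [h]

lemma LyapAux.spectrum_transpose {k : ℕ} {K : Type*} [Field K] (M : Matrix (Fin k) (Fin k) K) :
    spectrum K Mᵀ = spectrum K M := by
  ext μ
  rw [spectrum.mem_iff, spectrum.mem_iff, Matrix.isUnit_iff_isUnit_det,
    Matrix.isUnit_iff_isUnit_det]
  have : (algebraMap K (Matrix (Fin k) (Fin k) K) μ - Mᵀ) = (algebraMap K _ μ - M)ᵀ := by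
    rw [Matrix.transpose_sub]
    congr 1
    ext i j
    simp [Matrix.algebraMap_matrix_apply, eq_comm]
  rw [this, Matrix.det_transpose]

lemma LyapAux.mem_spectrum_neg {k : ℕ} {K : Type*} [Field K] (M : Matrix (Fin k) (Fin k) K)
    (μ : K) : μ ∈ spectrum K (-M) ↔ -μ ∈ spectrum K M := by
  rw [spectrum.mem_iff, spectrum.mem_iff]
  have : algebraMap K (Matrix (Fin k) (Fin k) K) μ - (-M)
      = -(algebraMap K _ (-μ) - M) := by
    simp [map_neg]; abel
  rw [this, IsUnit.neg_iff]

open Polynomial in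
/-- Uniqueness for the Lyapunov/Sylvester equation with a stable matrix. -/
lemma LyapAux.sylvester_unique {k : ℕ} (B : Matrix (Fin k) (Fin k) ℝ) (hB : IsStableMat B)
    (W : Matrix (Fin k) (Fin k) ℝ) (h : B * W + W * Bᵀ = 0) : W = 0 := by
  rcases Nat.eq_zero_or_pos k with hk | hk
  · subst hk; exact Subsingleton.elim _ _
  have hcomm : B * W = W * (-Bᵀ) := by
    rw [mul_neg]
    exact eq_neg_of_add_eq_zero_left h
  have hpow : ∀ m : ℕ, B ^ m * W = W * (-Bᵀ) ^ m := by
    intro m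
    induction m with
    | zero => simp
    | succ m ih =>
      rw [pow_succ', pow_succ', mul_assoc, ih, ← mul_assoc, hcomm, mul_assoc]
  set p : Polynomial ℝ := B.charpoly with hp
  have key : (aeval B p) * W = W * aeval (-Bᵀ) p := by
    rw [aeval_eq_sum_range, aeval_eq_sum_range, Finset.sum_mul, Finset.mul_sum]
    exact Finset.sum_congr rfl fun i _ => by
      rw [smul_mul_assoc, mul_smul_comm, hpow]
  have h0 : W * aeval (-Bᵀ) p = 0 := by
    rw [← key, Matrix.aeval_self_charpoly, zero_mul]
  set N := aeval (-Bᵀ) p with hN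
  have hNu : IsUnit N := by
    rw [Matrix.isUnit_iff_isUnit_det, isUnit_iff_ne_zero]
    intro hdet
    have hdetC : (N.map (algebraMap ℝ ℂ)).det = 0 := by
      have := congrArg (algebraMap ℝ ℂ) hdet
      rwa [RingHom.map_det, map_zero, RingHom.mapMatrix_apply] at this
    have hspec : (0 : ℂ) ∈ spectrum ℂ (N.map (algebraMap ℝ ℂ)) := by
      rw [spectrum.zero_mem_iff, Matrix.isUnit_iff_isUnit_det, hdetC]
      exact not_isUnit_zero
    set f : Matrix (Fin k) (Fin k) ℝ →ₐ[ℝ] Matrix (Fin k) (Fin k) ℂ :=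
      (Algebra.ofId ℝ ℂ).mapMatrix with hf
    have hmapN : N.map (algebraMap ℝ ℂ) = aeval ((-Bᵀ).map (algebraMap ℝ ℂ)) p := by
      rw [hN]
      exact (aeval_algHom_apply f (-Bᵀ) p).symm
    set Bc := B.map (algebraMap ℝ ℂ) with hBc
    have hmapB : (-Bᵀ).map (algebraMap ℝ ℂ) = -Bcᵀ := by
      ext i j; simp [hBc]
    have haev : aeval ((-Bᵀ).map (algebraMap ℝ ℂ)) p
        = aeval (-Bcᵀ) (p.map (algebraMap ℝ ℂ)) := by
      rw [hmapB, aeval_map_algebraMap]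
    have hpc : p.map (algebraMap ℝ ℂ) = Bc.charpoly := by
      rw [hBc, Matrix.charpoly_map]
    rw [hmapN, haev, hpc] at hspec
    rw [spectrum.map_polynomial_aeval_of_degree_pos (-Bcᵀ) Bc.charpoly
      (by rw [Matrix.charpoly_degree_eq_dim, Fintype.card_fin]; exact_mod_cast hk)] at hspec
    obtain ⟨μ, hμ, hμ0⟩ := hspec
    rw [LyapAux.mem_spectrum_neg, LyapAux.spectrum_transpose] at hμ
    have h1 : (-μ).re < 0 := hB _ hμ
    have h2 : μ.re < 0 := hB _ ((LyapAux.mem_spectrum_iff_eval Bc μ).2 hμ0)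
    simp only [Complex.neg_re, neg_neg] at h1
    linarith
  exact hNu.mul_right_cancel (by rw [h0, zero_mul])

lemma LyapAux.trace_transpose_mul_self {m l : Type*} [Fintype m] [Fintype l]
    (M : Matrix m l ℝ) : (Mᵀ * M).trace = ∑ i, ∑ j, (M i j) ^ 2 := by
  simp only [Matrix.trace, Matrix.diag, Matrix.mul_apply, Matrix.transpose_apply, sq]
  exact Finset.sum_comm

lemma LyapAux.frobNorm_eq {m l : Type*} [Fintype m] [Fintype l] (M : Matrix m l ℝ) :
    frobNorm M = Real.sqrt ((Mᵀ * M).trace) := by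
  rw [frobNorm, LyapAux.trace_transpose_mul_self]

lemma LyapAux.vecMulVec_mulVec {n r : ℕ} (U : Matrix (Fin n) (Fin r) ℝ) (c : Fin r → ℝ) :
    Matrix.vecMulVec (U *ᵥ c) (U *ᵥ c) = U * Matrix.vecMulVec c c * Uᵀ := by
  ext i j
  simp only [Matrix.vecMulVec_apply, Matrix.mul_apply, Matrix.mulVec, dotProduct,
    Matrix.transpose_apply, Finset.sum_mul, Finset.mul_sum]
  exact Finset.sum_congr rfl fun a _ => Finset.sum_congr rfl fun b _ => by ring

lemma LyapAux.frob_calc {n r : ℕ} (U : Matrix (Fin n) (Fin r) ℝ)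
    (P : Matrix (Fin n) (Fin r) ℝ) (hU : Uᵀ * U = 1) (hUP : Uᵀ * P = 0) :
    frobNorm (P * Uᵀ + U * Pᵀ) = Real.sqrt 2 * frobNorm P := by
  have hPU : Pᵀ * U = 0 := by
    have := congrArg Matrix.transpose hUP
    rwa [Matrix.transpose_mul, Matrix.transpose_transpose, Matrix.transpose_zero] at this
  have e1 : P * Uᵀ * (P * Uᵀ) = 0 := by
    rw [Matrix.mul_assoc P, ← Matrix.mul_assoc Uᵀ, hUP, Matrix.zero_mul, Matrix.mul_zero]
  have e2 : P * Uᵀ * (U * Pᵀ) = P * Pᵀ := by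
    rw [Matrix.mul_assoc P, ← Matrix.mul_assoc Uᵀ, hU, Matrix.one_mul]
  have e4 : U * Pᵀ * (U * Pᵀ) = 0 := by
    rw [Matrix.mul_assoc U, ← Matrix.mul_assoc Pᵀ, hPU, Matrix.zero_mul, Matrix.mul_zero]
  have hRT : (P * Uᵀ + U * Pᵀ)ᵀ = P * Uᵀ + U * Pᵀ := by
    rw [Matrix.transpose_add, Matrix.transpose_mul, Matrix.transpose_mul,
      Matrix.transpose_transpose, Matrix.transpose_transpose]
    exact add_comm _ _
  have hmul : (P * Uᵀ + U * Pᵀ) * (P * Uᵀ + U * Pᵀ) = P * Pᵀ + U * Pᵀ * (P * Uᵀ) := by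
    rw [Matrix.add_mul, Matrix.mul_add, Matrix.mul_add, e1, e2, e4, zero_add, add_zero]
  have htr : ((P * Uᵀ + U * Pᵀ)ᵀ * (P * Uᵀ + U * Pᵀ)).trace = 2 * (Pᵀ * P).trace := by
    rw [hRT, hmul, Matrix.trace_add, Matrix.trace_mul_comm P Pᵀ,
      Matrix.trace_mul_comm (U * Pᵀ) (P * Uᵀ), e2, Matrix.trace_mul_comm P Pᵀ]
    ring
  have htnn : 0 ≤ (Pᵀ * P).trace := by
    rw [LyapAux.trace_transpose_mul_self]
    positivity
  rw [LyapAux.frobNorm_eq, LyapAux.frobNorm_eq, htr,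
    Real.sqrt_mul (by norm_num : (0:ℝ) ≤ 2)]

theorem lyapunov_residual_eq_sqrt_two_mul {n r : ℕ}
    (A : Matrix (Fin n) (Fin n) ℝ) (y₀ : Fin n → ℝ)
    (hA : IsStableMat A)
    (U : Matrix (Fin n) (Fin r) ℝ) (hU : Uᵀ * U = 1)
    (hB : IsStableMat (Uᵀ * A * U))
    (hy : y₀ = U *ᵥ (Uᵀ *ᵥ y₀))
    (Z : Matrix (Fin r) (Fin r) ℝ)
    (hZ : (Uᵀ * A * U) * Z + Z * (Uᵀ * A * U)ᵀ = -vecMulVec (Uᵀ *ᵥ y₀) (Uᵀ *ᵥ y₀)) :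
    frobNorm (A * (U * Z * Uᵀ) + (U * Z * Uᵀ) * Aᵀ + vecMulVec y₀ y₀)
      = Real.sqrt 2 * frobNorm ((A * U - U * (Uᵀ * A * U)) * Z) := by
  have hvccT : (vecMulVec (Uᵀ *ᵥ y₀) (Uᵀ *ᵥ y₀))ᵀ = vecMulVec (Uᵀ *ᵥ y₀) (Uᵀ *ᵥ y₀) := by
    ext i j; simp [Matrix.vecMulVec_apply, mul_comm]
  have hZT : (Uᵀ * A * U) * Zᵀ + Zᵀ * (Uᵀ * A * U)ᵀ = -vecMulVec (Uᵀ *ᵥ y₀) (Uᵀ *ᵥ y₀) := by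
    have h := congrArg Matrix.transpose hZ
    simp only [Matrix.transpose_add, Matrix.transpose_mul, Matrix.transpose_transpose,
      Matrix.transpose_neg, hvccT, ← Matrix.mul_assoc] at h ⊢
    rw [add_comm] at h
    exact h
  have hZs : Z = Zᵀ := by
    have h0 : (Uᵀ * A * U) * (Z - Zᵀ) + (Z - Zᵀ) * (Uᵀ * A * U)ᵀ = 0 := by
      rw [Matrix.mul_sub, Matrix.sub_mul, sub_add_sub_comm, hZ, hZT, sub_self]
    have := LyapAux.sylvester_unique _ hB _ h0
    rwa [sub_eq_zero] at this
  have hy₀ : vecMulVec y₀ y₀ = U * vecMulVec (Uᵀ *ᵥ y₀) (Uᵀ *ᵥ y₀) * Uᵀ := by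
    conv_lhs => rw [hy]
    exact LyapAux.vecMulVec_mulVec U _
  have hcc : vecMulVec (Uᵀ *ᵥ y₀) (Uᵀ *ᵥ y₀)
      = -((Uᵀ * A * U) * Z + Z * (Uᵀ * A * U)ᵀ) := by
    rw [hZ, neg_neg]
  have hres : A * (U * Z * Uᵀ) + (U * Z * Uᵀ) * Aᵀ + vecMulVec y₀ y₀
      = ((A * U - U * (Uᵀ * A * U)) * Z) * Uᵀ
        + U * ((A * U - U * (Uᵀ * A * U)) * Z)ᵀ := by
    rw [hy₀, hcc]
    simp only [Matrix.transpose_mul, Matrix.transpose_sub, Matrix.transpose_transpose, ← hZs,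
      Matrix.mul_sub, Matrix.sub_mul, Matrix.mul_add, Matrix.add_mul, Matrix.mul_neg,
      Matrix.neg_mul, Matrix.mul_assoc, Matrix.mul_one, Matrix.one_mul]
    abel
  have hUP : Uᵀ * ((A * U - U * (Uᵀ * A * U)) * Z) = 0 := by
    rw [← Matrix.mul_assoc, Matrix.mul_sub, ← Matrix.mul_assoc, ← Matrix.mul_assoc,
      ← Matrix.mul_assoc, hU, Matrix.one_mul, sub_self, Matrix.zero_mul]
  rw [hres]
  exact LyapAux.frob_calc U _ hU hUP
end

section
/- Assume y₀ lies in the column space of U, i.e., y₀ = UUᵀy₀. Then the Sylvester residual satisfies R₂(U) = ‖A(UZ) + (UZ)Bᵀ + y₀c₀ᵀ‖_F = ‖(AU − UB)Z‖_F. -/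
open Matrix MeasureTheory
open scoped Kronecker

theorem sylvester_residual_eq {n r : ℕ}
    (A : Matrix (Fin n) (Fin n) ℝ) (y₀ : Fin n → ℝ)
    (hA : IsStableMat A)
    (U : Matrix (Fin n) (Fin r) ℝ) (hU : Uᵀ * U = 1)
    (hB : IsStableMat (Uᵀ * A * U))
    (hy : y₀ = U *ᵥ (Uᵀ *ᵥ y₀))
    (Z : Matrix (Fin r) (Fin r) ℝ)
    (hZ : (Uᵀ * A * U) * Z + Z * (Uᵀ * A * U)ᵀ = -vecMulVec (Uᵀ *ᵥ y₀) (Uᵀ *ᵥ y₀)) :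
    frobNorm (A * (U * Z) + (U * Z) * (Uᵀ * A * U)ᵀ + vecMulVec y₀ (Uᵀ *ᵥ y₀))
      = frobNorm ((A * U - U * (Uᵀ * A * U)) * Z) := by
  set c := Uᵀ *ᵥ y₀ with hc
  have h1 : vecMulVec y₀ c = U * vecMulVec c c := by
    ext i j
    simp [hy, vecMulVec_apply, Matrix.mul_apply, Matrix.mulVec, dotProduct,
      Finset.sum_mul, mul_assoc]
  have h2 : U * vecMulVec c c
      = -(U * ((Uᵀ * A * U) * Z) + U * (Z * (Uᵀ * A * U)ᵀ)) := by
    have := congrArg (fun M => U * M) hZ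
    simp only [Matrix.mul_add, Matrix.mul_neg] at this
    rw [this, neg_neg]
  congr 1
  rw [h1, h2]
  simp only [Matrix.sub_mul, Matrix.mul_assoc]
  abel
end

section
/- Assume y₀ lies in the column space of U, i.e., y₀ = UUᵀy₀, and that the nr×nr matrix I⊗A + B⊗I is invertible. Then ‖P − UZ‖_F ≤ ‖(I⊗A + B⊗I)⁻¹‖_F · R₂(U), where R₂(U) = ‖A(UZ) + (UZ)Bᵀ + y₀c₀ᵀ‖_F. -/
open Matrix MeasureTheory
open scoped Kronecker

lemma kron_mulVec_aux {n r : ℕ} (A : Matrix (Fin n) (Fin n) ℝ) (B : Matrix (Fin r) (Fin r) ℝ)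
    (X : Matrix (Fin n) (Fin r) ℝ) :
    ((1 : Matrix (Fin r) (Fin r) ℝ) ⊗ₖ A + B ⊗ₖ (1 : Matrix (Fin n) (Fin n) ℝ)) *ᵥ
        (fun p => X p.2 p.1)
      = fun p => (A * X + X * Bᵀ) p.2 p.1 := by
  funext p
  obtain ⟨j, i⟩ := p
  simp only [mulVec, dotProduct, Fintype.sum_prod_type, Matrix.add_apply,
    kroneckerMap_apply, Matrix.mul_apply, Matrix.one_apply, add_mul, ite_mul, zero_mul, one_mul,
    Finset.sum_add_distrib, Matrix.transpose_apply]
  congr 1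
  · rw [Finset.sum_comm]
    simp [Finset.sum_ite_eq, mul_comm]
  · simp [Finset.sum_ite_eq, mul_comm]

lemma mulVec_frob_bound_aux {m : Type*} [Fintype m] (N : Matrix m m ℝ) (v : m → ℝ) :
    euclNorm (N *ᵥ v) ≤ frobNorm N * euclNorm v := by
  rw [euclNorm, frobNorm, euclNorm, ← Real.sqrt_mul (by positivity)]
  apply Real.sqrt_le_sqrt
  rw [Finset.sum_mul]
  apply Finset.sum_le_sum
  intro i _
  simpa [mulVec, dotProduct] using
    Finset.sum_mul_sq_le_sq_mul_sq Finset.univ (fun j => N i j) v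

lemma frob_eq_eucl_aux {n r : ℕ} (X : Matrix (Fin n) (Fin r) ℝ) :
    frobNorm X = euclNorm (fun p : Fin r × Fin n => X p.2 p.1) := by
  rw [frobNorm, euclNorm]
  congr 1
  rw [Fintype.sum_prod_type, Finset.sum_comm]

theorem error_bound_sylvester_residual {n r : ℕ}
    (A : Matrix (Fin n) (Fin n) ℝ) (y₀ : Fin n → ℝ)
    (hA : IsStableMat A)
    (U : Matrix (Fin n) (Fin r) ℝ) (hU : Uᵀ * U = 1)
    (hB : IsStableMat (Uᵀ * A * U))
    (hy : y₀ = U *ᵥ (Uᵀ *ᵥ y₀))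
    (Z : Matrix (Fin r) (Fin r) ℝ)
    (hZ : (Uᵀ * A * U) * Z + Z * (Uᵀ * A * U)ᵀ = -vecMulVec (Uᵀ *ᵥ y₀) (Uᵀ *ᵥ y₀))
    (P : Matrix (Fin n) (Fin r) ℝ)
    (hP : A * P + P * (Uᵀ * A * U)ᵀ = -vecMulVec y₀ (Uᵀ *ᵥ y₀))
    (hinv : IsUnit ((1 : Matrix (Fin r) (Fin r) ℝ) ⊗ₖ A
      + (Uᵀ * A * U) ⊗ₖ (1 : Matrix (Fin n) (Fin n) ℝ))) :
    frobNorm (P - U * Z)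
      ≤ frobNorm (((1 : Matrix (Fin r) (Fin r) ℝ) ⊗ₖ A
          + (Uᵀ * A * U) ⊗ₖ (1 : Matrix (Fin n) (Fin n) ℝ))⁻¹)
        * frobNorm (A * (U * Z) + (U * Z) * (Uᵀ * A * U)ᵀ + vecMulVec y₀ (Uᵀ *ᵥ y₀)) := by
  set B := Uᵀ * A * U with hBdef
  set M := (1 : Matrix (Fin r) (Fin r) ℝ) ⊗ₖ A + B ⊗ₖ (1 : Matrix (Fin n) (Fin n) ℝ) with hM
  set E := P - U * Z with hE
  set R := A * (U * Z) + (U * Z) * Bᵀ + vecMulVec y₀ (Uᵀ *ᵥ y₀) with hR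
  have hsyl : A * E + E * Bᵀ = -R := by
    rw [hE, hR, Matrix.mul_sub, Matrix.sub_mul]
    have : A * P - A * (U * Z) + (P * Bᵀ - U * Z * Bᵀ)
        = (A * P + P * Bᵀ) - (A * (U * Z) + U * Z * Bᵀ) := by abel
    rw [this, hP]
    abel
  have hMv : M *ᵥ (fun p => E p.2 p.1) = fun p => (-R) p.2 p.1 := by
    rw [kron_mulVec_aux, hsyl]
  have hinvmul : M⁻¹ * M = 1 := Matrix.nonsing_inv_mul M ((Matrix.isUnit_iff_isUnit_det M).mp hinv)
  have hvec : (fun p : Fin r × Fin n => E p.2 p.1) = M⁻¹ *ᵥ (fun p => (-R) p.2 p.1) := by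
    rw [← hMv, Matrix.mulVec_mulVec, hinvmul, Matrix.one_mulVec]
  have hnegR : frobNorm (-R) = frobNorm R := by
    simp [frobNorm]
  calc frobNorm E = euclNorm (fun p : Fin r × Fin n => E p.2 p.1) := frob_eq_eucl_aux E
    _ = euclNorm (M⁻¹ *ᵥ (fun p : Fin r × Fin n => (-R) p.2 p.1)) := by rw [hvec]
    _ ≤ frobNorm M⁻¹ * euclNorm (fun p : Fin r × Fin n => (-R) p.2 p.1) :=
        mulVec_frob_bound_aux _ _
    _ = frobNorm M⁻¹ * frobNorm R := by rw [← frob_eq_eucl_aux, hnegR]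
end

section
/- Assume y₀ lies in the column space of U, i.e., y₀ = UUᵀy₀. Then the matrix P₁ = P − UZ satisfies the Sylvester equation A P₁ + P₁ Bᵀ = −(AU − UB)Z. -/
open Matrix MeasureTheory
open scoped Kronecker

lemma mulVec_vecMulVec {n r : ℕ} (U : Matrix (Fin n) (Fin r) ℝ) (v w : Fin r → ℝ) :
    vecMulVec (U *ᵥ v) w = U * vecMulVec v w := by
  ext i j; simp [vecMulVec, mul_apply, mulVec, dotProduct, Finset.sum_mul, mul_assoc]

theorem correction_sylvester_equation {n r : ℕ}
    (A : Matrix (Fin n) (Fin n) ℝ) (y₀ : Fin n → ℝ)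
    (U : Matrix (Fin n) (Fin r) ℝ) (hU : Uᵀ * U = 1)
    (hy : y₀ = U *ᵥ (Uᵀ *ᵥ y₀))
    (Z : Matrix (Fin r) (Fin r) ℝ)
    (hZ : (Uᵀ * A * U) * Z + Z * (Uᵀ * A * U)ᵀ = -vecMulVec (Uᵀ *ᵥ y₀) (Uᵀ *ᵥ y₀))
    (P : Matrix (Fin n) (Fin r) ℝ)
    (hP : A * P + P * (Uᵀ * A * U)ᵀ = -vecMulVec y₀ (Uᵀ *ᵥ y₀)) :
    A * (P - U * Z) + (P - U * Z) * (Uᵀ * A * U)ᵀ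
      = -((A * U - U * (Uᵀ * A * U)) * Z) := by
  have h1 : Z * (Uᵀ * A * U)ᵀ = -vecMulVec (Uᵀ *ᵥ y₀) (Uᵀ *ᵥ y₀) - (Uᵀ * A * U) * Z := by
    exact eq_sub_of_add_eq' hZ
  have h2 : vecMulVec y₀ (Uᵀ *ᵥ y₀) = U * vecMulVec (Uᵀ *ᵥ y₀) (Uᵀ *ᵥ y₀) := by
    nth_rewrite 1 [hy]
    exact mulVec_vecMulVec U _ _
  have key : ∀ (M : Matrix (Fin r) (Fin r) ℝ) (c : Matrix (Fin r) (Fin r) ℝ),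
      Z * M = -c - (Uᵀ * A * U) * Z →
      vecMulVec y₀ (Uᵀ *ᵥ y₀) = U * c →
      A * P + P * M = -vecMulVec y₀ (Uᵀ *ᵥ y₀) →
      A * (P - U * Z) + (P - U * Z) * M = -((A * U - U * (Uᵀ * A * U)) * Z) := by
    intro M c hm hc hp
    rw [Matrix.mul_sub, Matrix.sub_mul, Matrix.mul_assoc U Z M, hm]
    rw [show A * P - A * (U * Z) + (P * M - U * (-c - Uᵀ * A * U * Z))
        = (A * P + P * M) - A * (U * Z) + U * c + U * (Uᵀ * A * U * Z) by
      rw [Matrix.mul_sub, Matrix.mul_neg]; abel, hp, hc]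
    rw [Matrix.sub_mul, Matrix.mul_assoc A U Z, Matrix.mul_assoc U (Uᵀ * A * U) Z]
    abel
  exact key _ _ (eq_sub_of_add_eq' hZ) h2 hP
end

section
/- Under these assumptions, the integral ∫₀^∞ ‖y(t) − UUᵀy(t)‖² dt converges and equals tr((I − UUᵀ) X (I − UUᵀ)) = tr X − tr(UᵀXU). -/
open Matrix MeasureTheory
open scoped Kronecker

namespace LyapunovAux

open Filter NormedSpace Topology Finset Nat

/-- polynomial times decaying exponential tends to zero -/
lemma poly_exp_tendsto (m : ℕ) {c : ℝ} (hc : c < 0) :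
    Tendsto (fun t : ℝ => t ^ m * Real.exp (c * t)) atTop (𝓝 0) := by
  have h1 : Tendsto (fun t : ℝ => (-c) * t) atTop atTop :=
    Tendsto.const_mul_atTop (by linarith) tendsto_id
  have h2 := (Real.tendsto_pow_mul_exp_neg_atTop_nhds_zero m).comp h1
  have h3 := h2.const_mul (((-c) ^ m)⁻¹)
  rw [mul_zero] at h3
  refine h3.congr fun t => ?_
  have hcm : (-c) ^ m ≠ 0 := pow_ne_zero _ (by linarith)
  simp only [Function.comp]
  rw [show -c * t = -(c * t) by ring, neg_neg, show -(c*t) = (-c)*t by ring, mul_pow]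
  field_simp

section Normed

attribute [local instance] Matrix.linftyOpNormedAddCommGroup Matrix.linftyOpNormedRing
  Matrix.linftyOpNormedAlgebra Matrix.linftyOpNormedSpace

/-- helper : M * vecMulVec a b = vecMulVec (M *ᵥ a) b -/
lemma mul_vecMulVec {k : ℕ} (M : Matrix (Fin k) (Fin k) ℝ) (a b : Fin k → ℝ) :
    M * vecMulVec a b = vecMulVec (M *ᵥ a) b := by
  ext i j
  simp only [Matrix.mul_apply, vecMulVec_apply, Matrix.mulVec, dotProduct, Finset.sum_mul]
  exact Finset.sum_congr rfl fun x _ => by ring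

/-- helper : vecMulVec a b * N = vecMulVec a (Nᵀ *ᵥ b) -/
lemma vecMulVec_mul {k : ℕ} (a b : Fin k → ℝ) (N : Matrix (Fin k) (Fin k) ℝ) :
    vecMulVec a b * N = vecMulVec a (Nᵀ *ᵥ b) := by
  ext i j
  simp only [Matrix.mul_apply, vecMulVec_apply, Matrix.mulVec, dotProduct, transpose_apply,
    Finset.mul_sum]
  exact Finset.sum_congr rfl fun x _ => by ring

lemma trace_vecMulVec {k : ℕ} (w : Fin k → ℝ) :
    (vecMulVec w w).trace = ∑ i, w i ^ 2 := by
  simp [Matrix.trace, Matrix.diag, vecMulVec_apply, sq]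

/-- Derivative of the Lyapunov trace function. -/
lemma hasDerivAt_negtrace {k : ℕ} (A X Q : Matrix (Fin k) (Fin k) ℝ) (y₀ : Fin k → ℝ)
    (hX : A * X + X * Aᵀ = -vecMulVec y₀ y₀) (hQ : Qᵀ = Q) (t : ℝ) :
    HasDerivAt (fun s : ℝ => -((Q * mexp (s • A) * X * (mexp (s • A))ᵀ * Q).trace))
      (∑ i, ((Q *ᵥ (mexp (t • A) *ᵥ y₀)) i) ^ 2) t := by
  classical
  set E : Matrix (Fin k) (Fin k) ℝ := NormedSpace.exp (t • A) with hE0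
  set F : Matrix (Fin k) (Fin k) ℝ := NormedSpace.exp (t • Aᵀ) with hF0
  have hE : HasDerivAt (fun s : ℝ => NormedSpace.exp (s • A)) (E * A) t :=
    hasDerivAt_exp_smul_const A t
  have hF : HasDerivAt (fun s : ℝ => NormedSpace.exp (s • Aᵀ)) (F * Aᵀ) t :=
    hasDerivAt_exp_smul_const Aᵀ t
  have hG : HasDerivAt (fun s : ℝ => Q * (NormedSpace.exp (s • A) *
        (X * (NormedSpace.exp (s • Aᵀ) * Q))))
      (Q * ((E * A) * (X * (F * Q)) + E * (X * ((F * Aᵀ) * Q)))) t :=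
    (hE.mul ((hF.mul_const Q).const_mul X)).const_mul Q
  have htr : HasDerivAt (fun s : ℝ => (Q * (NormedSpace.exp (s • A) *
        (X * (NormedSpace.exp (s • Aᵀ) * Q)))).trace)
      ((Q * ((E * A) * (X * (F * Q)) + E * (X * ((F * Aᵀ) * Q)))).trace) t := by
    have hc := (Matrix.traceLinearMap (Fin k) ℝ ℝ).toContinuousLinearMap.hasFDerivAt
      (x := Q * (E * (X * (F * Q))))
    exact (hc.comp_hasDerivAt t hG :)
  have hFt : F = Eᵀ := by
    rw [hE0, hF0, ← Matrix.transpose_smul, Matrix.exp_transpose]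
  have hcomm : F * Aᵀ = Aᵀ * F := by
    have h1 : Commute (t • Aᵀ) Aᵀ := (Commute.refl Aᵀ).smul_left t
    exact h1.exp_left.eq
  -- identify the derivative value
  have hval : (Q * ((E * A) * (X * (F * Q)) + E * (X * ((F * Aᵀ) * Q)))).trace
      = -(∑ i, ((Q *ᵥ (E *ᵥ y₀)) i) ^ 2) := by
    have expand : Q * ((E * A) * (X * (F * Q)) + E * (X * ((F * Aᵀ) * Q)))
        = Q * E * ((A * X + X * Aᵀ) * (F * Q)) := by
      rw [hcomm]
      noncomm_ring
    rw [expand, hX]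
    have key : Q * E * (vecMulVec y₀ y₀ * (F * Q)) = vecMulVec (Q *ᵥ (E *ᵥ y₀)) (Q *ᵥ (E *ᵥ y₀)) := by
      have h1 : Q * E * (vecMulVec y₀ y₀ * (F * Q)) = (Q * E) * vecMulVec y₀ y₀ * (F * Q) := by
        noncomm_ring
      rw [h1, mul_vecMulVec, vecMulVec_mul]
      rw [Matrix.transpose_mul, hFt, Matrix.transpose_transpose, hQ]
      rw [Matrix.mulVec_mulVec]
    have : Q * E * (-vecMulVec y₀ y₀ * (F * Q)) = -(vecMulVec (Q *ᵥ (E *ᵥ y₀)) (Q *ᵥ (E *ᵥ y₀))) := by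
      rw [neg_mul, mul_neg, key]
    rw [this, Matrix.trace_neg, trace_vecMulVec]
  rw [hval] at htr
  have h2 := htr.neg
  rw [neg_neg] at h2
  have hfun : (fun s : ℝ => -((Q * mexp (s • A) * X * (mexp (s • A))ᵀ * Q).trace))
      = fun s : ℝ => -((Q * (NormedSpace.exp (s • A) *
          (X * (NormedSpace.exp (s • Aᵀ) * Q)))).trace) := by
    funext s
    have hT : (NormedSpace.exp (s • A))ᵀ = NormedSpace.exp (s • Aᵀ) := by
      rw [← Matrix.transpose_smul, Matrix.exp_transpose]
    show -((Q * NormedSpace.exp (s • A) * X * (NormedSpace.exp (s • A))ᵀ * Q).trace) = _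
    rw [hT]
    congr 2
    noncomm_ring
  rw [hfun]
  exact h2


/-- exp of a scalar matrix. -/
lemma exp_smul_one {k : ℕ} (c : ℂ) :
    NormedSpace.exp (c • (1 : Matrix (Fin k) (Fin k) ℂ)) = Complex.exp c • 1 := by
  have h := NormedSpace.map_exp (algebraMap ℂ (Matrix (Fin k) (Fin k) ℂ))
    (continuous_algebraMap _ _) c
  rw [Algebra.algebraMap_eq_smul_one, Algebra.algebraMap_eq_smul_one] at h
  rw [Complex.exp_eq_exp_ℂ]
  exact h.symm

/-- Decay of the matrix exponential applied to a vector, for a spectrally stable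
complex matrix. -/
lemma tendsto_exp_mulVec_zero {k : ℕ} (M : Matrix (Fin k) (Fin k) ℂ)
    (hM : ∀ μ ∈ spectrum ℂ M, μ.re < 0) (v : Fin k → ℂ) :
    Tendsto (fun t : ℝ => NormedSpace.exp ((t : ℂ) • M) *ᵥ v) atTop (𝓝 0) := by
  classical
  set S : Submodule ℂ (Fin k → ℂ) :=
    { carrier := {w | Tendsto (fun t : ℝ => NormedSpace.exp ((t : ℂ) • M) *ᵥ w) atTop (𝓝 0)}
      add_mem' := by
        intro a b ha hb
        have h := Tendsto.add ha hb
        simpa [Matrix.mulVec_add] using h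
      zero_mem' := by
        simpa [Matrix.mulVec_zero] using
          (tendsto_const_nhds : Tendsto (fun _ : ℝ => (0 : Fin k → ℂ)) atTop (𝓝 0))
      smul_mem' := by
        intro c a ha
        have h := ha.const_smul c
        simpa [Matrix.mulVec_smul] using h } with hSdef
  suffices hS : v ∈ S from hS
  have htop := Module.End.iSup_maxGenEigenspace_eq_top
    (Matrix.toLinAlgEquiv' M : Module.End ℂ (Fin k → ℂ))
  have hle : (⊤ : Submodule ℂ (Fin k → ℂ)) ≤ S := by
    rw [← htop]
    refine iSup_le fun μ => ?_
    intro w hw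
    rw [Module.End.mem_maxGenEigenspace] at hw
    obtain ⟨K, hK⟩ := hw
    have hmat : ((M - μ • 1) ^ K) *ᵥ w = 0 := by
      have h2 : ((Matrix.toLinAlgEquiv' M : Module.End ℂ (Fin k → ℂ)) - μ • 1)
          = Matrix.toLinAlgEquiv' (M - μ • 1) := by
        rw [map_sub, _root_.map_smul, _root_.map_one]
      rw [h2, ← map_pow] at hK
      rw [← Matrix.toLinAlgEquiv'_apply]
      exact hK
    by_cases hμ : μ ∈ spectrum ℂ M
    · -- decaying generalized eigenvector
      have hre := hM μ hμ
      have hform : ∀ t : ℝ, NormedSpace.exp ((t : ℂ) • M) *ᵥ w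
          = ∑ m ∈ Finset.range K,
              (Complex.exp ((t : ℂ) * μ) * ((m ! : ℂ))⁻¹ * (t : ℂ) ^ m) •
                ((M - μ • 1) ^ m *ᵥ w) := by
        intro t
        have hsplit : (t : ℂ) • M
            = ((t : ℂ) * μ) • (1 : Matrix (Fin k) (Fin k) ℂ) + (t : ℂ) • (M - μ • 1) := by
          rw [smul_sub, mul_smul]
          abel
        have hcomm : Commute (((t : ℂ) * μ) • (1 : Matrix (Fin k) (Fin k) ℂ))
            ((t : ℂ) • (M - μ • 1)) :=
          (Commute.one_left ((t : ℂ) • (M - μ • 1))).smul_left _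
        rw [hsplit]
        erw [NormedSpace.exp_add_of_commute hcomm, exp_smul_one]
        rw [smul_mul_assoc, one_mul, Matrix.smul_mulVec]
        have hsum : NormedSpace.exp ((t : ℂ) • (M - μ • 1)) *ᵥ w
            = ∑ m ∈ Finset.range K,
                (((m ! : ℂ))⁻¹ * (t : ℂ) ^ m) • ((M - μ • 1) ^ m *ᵥ w) := by
          set L : Matrix (Fin k) (Fin k) ℂ →ₗ[ℂ] (Fin k → ℂ) :=
            { toFun := fun P => P *ᵥ w
              map_add' := fun P R => Matrix.add_mulVec P R w
              map_smul' := fun c P => Matrix.smul_mulVec c P w } with hLdef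
          have hsummable := NormedSpace.expSeries_summable' (𝕂 := ℂ) ((t : ℂ) • (M - μ • 1))
          have hmap := L.toContinuousLinearMap.hasSum hsummable.hasSum
          have htsum : L (∑' m : ℕ, ((m ! : ℂ))⁻¹ • ((t : ℂ) • (M - μ • 1)) ^ m)
              = ∑' m : ℕ, L (((m ! : ℂ))⁻¹ • ((t : ℂ) • (M - μ • 1)) ^ m) := by
            have h := hmap.tsum_eq
            simp only [LinearMap.coe_toContinuousLinearMap'] at h
            exact h.symm
          have hvanish : ∀ m : ℕ, m ∉ Finset.range K →
              L (((m ! : ℂ))⁻¹ • ((t : ℂ) • (M - μ • 1)) ^ m) = 0 := by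
            intro m hm
            rw [Finset.mem_range, not_lt] at hm
            have hzero : ((M - μ • 1) ^ m) *ᵥ w = 0 := by
              have hmk : (M - μ • 1) ^ m = (M - μ • 1) ^ (m - K) * (M - μ • 1) ^ K := by
                rw [← pow_add, Nat.sub_add_cancel hm]
              rw [hmk, ← Matrix.mulVec_mulVec, hmat, Matrix.mulVec_zero]
            have hLm : L (((m ! : ℂ))⁻¹ • ((t : ℂ) • (M - μ • 1)) ^ m)
                = ((m ! : ℂ))⁻¹ • ((t : ℂ) ^ m • (((M - μ • 1) ^ m) *ᵥ w)) := by
              rw [_root_.map_smul, smul_pow, _root_.map_smul]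
              rfl
            rw [hLm, hzero, smul_zero, smul_zero]
          rw [NormedSpace.exp_eq_tsum ℂ]
          have hLrfl : (∑' m : ℕ, ((m ! : ℂ))⁻¹ • ((t : ℂ) • (M - μ • 1)) ^ m) *ᵥ w
              = L (∑' m : ℕ, ((m ! : ℂ))⁻¹ • ((t : ℂ) • (M - μ • 1)) ^ m) := rfl
          rw [hLrfl, htsum, tsum_eq_sum hvanish]
          refine Finset.sum_congr rfl fun m _ => ?_
          rw [_root_.map_smul, smul_pow, _root_.map_smul, smul_smul]
          rfl
        erw [hsum]
        rw [Finset.smul_sum]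
        refine Finset.sum_congr rfl fun m _ => ?_
        rw [smul_smul, mul_assoc]
      have hgoal : Tendsto (fun t : ℝ => ∑ m ∈ Finset.range K,
          (Complex.exp ((t : ℂ) * μ) * ((m ! : ℂ))⁻¹ * (t : ℂ) ^ m) •
            ((M - μ • 1) ^ m *ᵥ w)) atTop (𝓝 0) := by
        have hsum : Tendsto (fun t : ℝ => ∑ m ∈ Finset.range K,
            (Complex.exp ((t : ℂ) * μ) * ((m ! : ℂ))⁻¹ * (t : ℂ) ^ m) •
              ((M - μ • 1) ^ m *ᵥ w)) atTop
            (𝓝 (∑ _m ∈ Finset.range K, (0 : Fin k → ℂ))) := by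
          refine tendsto_finset_sum _ fun m _ => ?_
          have hc : Tendsto (fun t : ℝ =>
              Complex.exp ((t : ℂ) * μ) * ((m ! : ℂ))⁻¹ * (t : ℂ) ^ m) atTop (𝓝 0) := by
            rw [tendsto_zero_iff_norm_tendsto_zero]
            have hbound : Tendsto
                (fun t : ℝ => ((m ! : ℝ))⁻¹ * (t ^ m * Real.exp (μ.re * t))) atTop (𝓝 0) := by
              have h := (poly_exp_tendsto m hre).const_mul ((m ! : ℝ))⁻¹
              simpa using h
            refine hbound.congr' ?_
            filter_upwards [eventually_ge_atTop (0 : ℝ)] with t ht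
            have habs : ‖Complex.exp ((t : ℂ) * μ)‖ = Real.exp (t * μ.re) := by
              rw [Complex.norm_exp]
              congr 1
              simp [Complex.mul_re]
            rw [norm_mul, norm_mul, habs, norm_pow, norm_inv]
            simp only [Complex.norm_natCast, Complex.norm_real, Real.norm_eq_abs,
              abs_of_nonneg ht]
            rw [mul_comm (μ.re) t]
            ring
          have h := hc.smul_const ((M - μ • 1) ^ m *ᵥ w)
          simpa using h
        simpa using hsum
      show Tendsto _ atTop (𝓝 0)
      refine hgoal.congr fun t => (hform t).symm
    · -- μ outside the spectrum : w = 0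
      rw [spectrum.notMem_iff] at hμ
      have hisunit : IsUnit (M - μ • 1) := by
        have h := hμ.neg
        rw [neg_sub, Algebra.algebraMap_eq_smul_one] at h
        exact h
      obtain ⟨u, hu⟩ := hisunit.pow K
      have hw0 : w = 0 := by
        calc w = 1 *ᵥ w := (Matrix.one_mulVec w).symm
          _ = (((u⁻¹ : (Matrix (Fin k) (Fin k) ℂ)ˣ) : Matrix (Fin k) (Fin k) ℂ)
                * ((u : (Matrix (Fin k) (Fin k) ℂ)ˣ) : Matrix (Fin k) (Fin k) ℂ)) *ᵥ w := by
              rw [u.inv_mul]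
          _ = ((u⁻¹ : (Matrix (Fin k) (Fin k) ℂ)ˣ) : Matrix (Fin k) (Fin k) ℂ) *ᵥ
                (((u : (Matrix (Fin k) (Fin k) ℂ)ˣ) : Matrix (Fin k) (Fin k) ℂ) *ᵥ w) := by
              rw [Matrix.mulVec_mulVec]
          _ = 0 := by rw [hu, hmat, Matrix.mulVec_zero]
      rw [hw0]
      exact S.zero_mem
  exact hle Submodule.mem_top

/-- Entrywise decay of the real matrix exponential of a stable matrix. -/
lemma mexp_entry_tendsto {k : ℕ} (A : Matrix (Fin k) (Fin k) ℝ) (hA : IsStableMat A)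
    (i j : Fin k) :
    Tendsto (fun t : ℝ => mexp (t • A) i j) atTop (𝓝 0) := by
  classical
  set M := A.map (algebraMap ℝ ℂ) with hMdef
  have hmap : ∀ t : ℝ, (mexp (t • A)).map (algebraMap ℝ ℂ)
      = NormedSpace.exp ((t : ℂ) • M) := by
    intro t
    have hcont : Continuous (AlgHom.mapMatrix (m := Fin k) Complex.ofRealAm) := by
      have h := (AlgHom.mapMatrix (m := Fin k) Complex.ofRealAm).toLinearMap.continuous_of_finiteDimensional
      exact h
    have h1 := NormedSpace.map_exp (AlgHom.mapMatrix (m := Fin k) Complex.ofRealAm) hcont (t • A)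
    have h2 : (AlgHom.mapMatrix (m := Fin k) Complex.ofRealAm) (t • A) = (t : ℂ) • M := by
      ext a b
      simp [AlgHom.mapMatrix_apply, Matrix.map_apply, hMdef, Complex.real_smul]
    have h3 : (AlgHom.mapMatrix (m := Fin k) Complex.ofRealAm) (mexp (t • A))
        = (mexp (t • A)).map (algebraMap ℝ ℂ) := by
      ext a b
      simp [AlgHom.mapMatrix_apply, Matrix.map_apply]
    rw [← h3, mexp]
    exact h1.trans (congrArg _ h2)
  have hM : ∀ μ ∈ spectrum ℂ M, μ.re < 0 := hA
  have hv := tendsto_exp_mulVec_zero M hM (Pi.single j 1)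
  have hentry : Tendsto (fun t : ℝ => NormedSpace.exp ((t : ℂ) • M) i j) atTop (𝓝 0) := by
    have happ := ((continuous_apply i).tendsto (0 : Fin k → ℂ)).comp hv
    refine happ.congr fun t => ?_
    simp [Matrix.mulVec_single_one]
  have hre : ∀ t : ℝ, mexp (t • A) i j = (NormedSpace.exp ((t : ℂ) • M) i j).re := by
    intro t
    rw [← hmap t]
    simp [Matrix.map_apply]
  have h := (Complex.continuous_re.tendsto 0).comp hentry
  rw [Complex.zero_re] at h
  exact h.congr fun t => (hre t).symm


end Normed

/-- The Lyapunov trace function tends to zero. -/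
lemma tendsto_negtrace_zero {k : ℕ} (A X Q : Matrix (Fin k) (Fin k) ℝ) (hA : IsStableMat A) :
    Filter.Tendsto (fun s : ℝ => -((Q * mexp (s • A) * X * (mexp (s • A))ᵀ * Q).trace))
      Filter.atTop (𝓝 0) := by
  have hE : Filter.Tendsto (fun s : ℝ => mexp (s • A)) Filter.atTop
      (𝓝 (0 : Matrix (Fin k) (Fin k) ℝ)) := by
    refine tendsto_pi_nhds.mpr fun i => ?_
    refine tendsto_pi_nhds.mpr fun j => ?_
    simpa using mexp_entry_tendsto A hA i j
  have hΦ : Continuous (fun Y : Matrix (Fin k) (Fin k) ℝ => -((Q * Y * X * Yᵀ * Q).trace)) := by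
    apply Continuous.neg
    apply Continuous.matrix_trace
    exact (((continuous_const.matrix_mul continuous_id).matrix_mul
      continuous_const).matrix_mul continuous_id.matrix_transpose).matrix_mul continuous_const
  have h := (hΦ.tendsto 0).comp hE
  simpa [Function.comp_def] using h

end LyapunovAux

theorem integral_orthproj_error_eq_trace {n r : ℕ}
    (A X : Matrix (Fin n) (Fin n) ℝ) (y₀ : Fin n → ℝ)
    (hA : IsStableMat A)
    (hX : A * X + X * Aᵀ = -vecMulVec y₀ y₀)
    (U : Matrix (Fin n) (Fin r) ℝ) (hU : Uᵀ * U = 1) :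
    IntegrableOn
      (fun t : ℝ => ∑ i, ((mexp (t • A) *ᵥ y₀) i -
        (U *ᵥ (Uᵀ *ᵥ (mexp (t • A) *ᵥ y₀))) i) ^ 2) (Set.Ioi 0) ∧
    (∫ t in Set.Ioi (0 : ℝ),
        ∑ i, ((mexp (t • A) *ᵥ y₀) i -
          (U *ᵥ (Uᵀ *ᵥ (mexp (t • A) *ᵥ y₀))) i) ^ 2)
      = ((1 - U * Uᵀ) * X * (1 - U * Uᵀ)).trace ∧
    ((1 - U * Uᵀ) * X * (1 - U * Uᵀ)).trace = X.trace - (Uᵀ * X * U).trace := by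
  classical
  have hQt : (1 - U * Uᵀ)ᵀ = 1 - U * Uᵀ := by
    rw [Matrix.transpose_sub, Matrix.transpose_one, Matrix.transpose_mul,
      Matrix.transpose_transpose]
  have hfg : ∀ t : ℝ, (∑ i, ((mexp (t • A) *ᵥ y₀) i -
        (U *ᵥ (Uᵀ *ᵥ (mexp (t • A) *ᵥ y₀))) i) ^ 2)
      = ∑ i, (((1 - U * Uᵀ) *ᵥ (mexp (t • A) *ᵥ y₀)) i) ^ 2 := by
    intro t
    refine Finset.sum_congr rfl fun i _ => ?_
    rw [Matrix.sub_mulVec, Matrix.one_mulVec, Matrix.mulVec_mulVec]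
    simp [Pi.sub_apply]
  have hderiv : ∀ s ∈ Set.Ici (0 : ℝ),
      HasDerivAt (fun s : ℝ =>
          -(((1 - U * Uᵀ) * mexp (s • A) * X * (mexp (s • A))ᵀ * (1 - U * Uᵀ)).trace))
        (∑ i, ((mexp (s • A) *ᵥ y₀) i -
          (U *ᵥ (Uᵀ *ᵥ (mexp (s • A) *ᵥ y₀))) i) ^ 2) s := by
    intro s _
    rw [hfg s]
    exact LyapunovAux.hasDerivAt_negtrace A X (1 - U * Uᵀ) y₀ hX hQt s
  have hpos : ∀ s ∈ Set.Ioi (0 : ℝ), 0 ≤ (∑ i, ((mexp (s • A) *ᵥ y₀) i -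
      (U *ᵥ (Uᵀ *ᵥ (mexp (s • A) *ᵥ y₀))) i) ^ 2) := fun s _ =>
    Finset.sum_nonneg fun i _ => sq_nonneg _
  have htend := LyapunovAux.tendsto_negtrace_zero A X (1 - U * Uᵀ) hA
  have hint := integrableOn_Ioi_deriv_of_nonneg' hderiv hpos htend
  have hval := integral_Ioi_of_hasDerivAt_of_nonneg' hderiv hpos htend
  have h0 : mexp ((0 : ℝ) • A) = 1 := by
    rw [zero_smul, mexp, NormedSpace.exp_zero]
  refine ⟨hint, ?_, ?_⟩
  · rw [hval, h0]
    simp only [Matrix.transpose_one, Matrix.mul_one, zero_sub, neg_neg]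
  · have hP : (U * Uᵀ) * (U * Uᵀ) = U * Uᵀ := by
      rw [Matrix.mul_assoc U Uᵀ (U * Uᵀ), ← Matrix.mul_assoc Uᵀ U Uᵀ, hU, Matrix.one_mul]
    have expand : (1 - U * Uᵀ) * X * (1 - U * Uᵀ)
        = X - (U * Uᵀ) * X - X * (U * Uᵀ) + (U * Uᵀ) * X * (U * Uᵀ) := by
      noncomm_ring
    have h1 : ((U * Uᵀ) * X * (U * Uᵀ)).trace = ((U * Uᵀ) * X).trace := by
      rw [Matrix.trace_mul_comm, ← Matrix.mul_assoc, hP]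
    have h2 : ((U * Uᵀ) * X).trace = (Uᵀ * X * U).trace := by
      rw [Matrix.mul_assoc, Matrix.trace_mul_comm, Matrix.mul_assoc]
    have h3 : (X * (U * Uᵀ)).trace = ((U * Uᵀ) * X).trace := Matrix.trace_mul_comm _ _
    rw [expand, Matrix.trace_add, Matrix.trace_sub, Matrix.trace_sub, h1, h3, h2]
    ring
end

section
/- Let U be an n×r real matrix with orthonormal columns, w, v ∈ ℝⁿ, q ∈ ℝʳ, and s ∈ ℝ be such that (I − UUᵀ)AU = wqᵀ, the matrix A + sI is invertible, and v = (A + sI)⁻¹w. Let U₂ be an n×m real matrix with orthonormal columns whose column span equals the span of the columns of U together with v and w. Then there exists a vector q̂ ∈ ℝᵐ such that (I − U₂U₂ᵀ) A U₂ = ((I − U₂U₂ᵀ) A w) q̂ᵀ. -/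
open Matrix MeasureTheory
open scoped Kronecker

theorem rank_one_residual_after_enrichment {n r m : ℕ}
    (A : Matrix (Fin n) (Fin n) ℝ)
    (hA : IsStableMat A)
    (U : Matrix (Fin n) (Fin r) ℝ) (hU : Uᵀ * U = 1)
    (w v : Fin n → ℝ) (q : Fin r → ℝ) (s : ℝ)
    (hres : (1 - U * Uᵀ) * A * U = vecMulVec w q)
    (hinv : IsUnit (A + s • (1 : Matrix (Fin n) (Fin n) ℝ)))
    (hv : v = (A + s • (1 : Matrix (Fin n) (Fin n) ℝ))⁻¹ *ᵥ w)
    (U₂ : Matrix (Fin n) (Fin m) ℝ) (hU₂ : U₂ᵀ * U₂ = 1)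
    (hspan : Submodule.span ℝ (Set.range (fun i : Fin m => (fun j => U₂ j i : Fin n → ℝ)))
      = Submodule.span ℝ
          (Set.range (fun i : Fin r => (fun j => U j i : Fin n → ℝ)) ∪ {v, w})) :
    ∃ qhat : Fin m → ℝ,
      (1 - U₂ * U₂ᵀ) * A * U₂ = vecMulVec ((1 - U₂ * U₂ᵀ) *ᵥ (A *ᵥ w)) qhat := by
  classical
  have colapp : ∀ {a b c : ℕ} (M : Matrix (Fin a) (Fin b) ℝ) (N : Matrix (Fin b) (Fin c) ℝ)
      (i : Fin a) (j : Fin c), (M * N) i j = (M *ᵥ (fun k => N k j)) i := by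
    intro a b c M N i j
    simp [Matrix.mul_apply, Matrix.mulVec, dotProduct]
  set P : Matrix (Fin n) (Fin n) ℝ := 1 - U₂ * U₂ᵀ with hP
  have hPU₂ : P * U₂ = 0 := by
    rw [hP, Matrix.sub_mul, Matrix.one_mul, Matrix.mul_assoc, hU₂, Matrix.mul_one, sub_self]
  set S : Submodule ℝ (Fin n → ℝ) :=
    Submodule.span ℝ (Set.range (fun i : Fin m => (fun j => U₂ j i : Fin n → ℝ))) with hSdef
  have hkill : ∀ x ∈ S, P *ᵥ x = 0 := by
    intro x hx
    have hx' : x ∈ LinearMap.range U₂.mulVecLin := by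
      rw [Matrix.range_mulVecLin]; exact hx
    obtain ⟨c, rfl⟩ := hx'
    show P *ᵥ (U₂ *ᵥ c) = 0
    rw [Matrix.mulVec_mulVec, hPU₂, Matrix.zero_mulVec]
  -- membership of generators in S
  have hwS : w ∈ S := by
    rw [hspan]
    exact Submodule.subset_span (Or.inr (by simp))
  have hvS : v ∈ S := by
    rw [hspan]
    exact Submodule.subset_span (Or.inr (by simp))
  have hUS : ∀ y : Fin r → ℝ, U *ᵥ y ∈ S := by
    intro y
    have hy : U *ᵥ y ∈ Submodule.span ℝ (Set.range U.col) := by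
      rw [← Matrix.range_mulVecLin]; exact ⟨y, rfl⟩
    rw [hspan]
    exact Submodule.span_mono Set.subset_union_left hy
  -- A *ᵥ v = w - s • v
  have hAv : A *ᵥ v = w - s • v := by
    have hdet : IsUnit (A + s • (1 : Matrix (Fin n) (Fin n) ℝ)).det :=
      (Matrix.isUnit_iff_isUnit_det _).mp hinv
    have h1 : (A + s • (1 : Matrix (Fin n) (Fin n) ℝ)) *ᵥ v = w := by
      rw [hv, Matrix.mulVec_mulVec, Matrix.mul_nonsing_inv _ hdet, Matrix.one_mulVec]
    have h2 : (A + s • (1 : Matrix (Fin n) (Fin n) ℝ)) *ᵥ v = A *ᵥ v + s • v := by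
      rw [Matrix.add_mulVec, Matrix.smul_mulVec, Matrix.one_mulVec]
    rw [h2] at h1
    rw [← h1]; abel
  -- A * U decomposition
  have hAU : A * U = U * (Uᵀ * A * U) + vecMulVec w q := by
    have h := hres
    rw [Matrix.sub_mul, Matrix.sub_mul, Matrix.one_mul] at h
    have h' := sub_eq_iff_eq_add.mp h
    rw [h', Matrix.mul_assoc U Uᵀ A, Matrix.mul_assoc U (Uᵀ * A) U, add_comm]
  set z : Fin n → ℝ := P *ᵥ (A *ᵥ w) with hz
  have key : ∀ x ∈ S, P *ᵥ (A *ᵥ x) ∈ Submodule.span ℝ {z} := by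
    intro x hx
    rw [hspan] at hx
    induction hx using Submodule.span_induction with
    | mem x hxmem =>
      rcases hxmem with ⟨i, rfl⟩ | hxw
      · -- x is column i of U
        show P *ᵥ (A *ᵥ (fun j => U j i)) ∈ Submodule.span ℝ {z}
        have hcol : (fun j => U j i) = U *ᵥ (Pi.single i 1) := by
          funext j
          simp [Matrix.mulVec, dotProduct, Pi.single_apply]
        rw [hcol, Matrix.mulVec_mulVec (Pi.single i 1) A U, hAU, Matrix.add_mulVec,
          ← Matrix.mulVec_mulVec (Pi.single i 1) U (Uᵀ * A * U)]
        have h1 : P *ᵥ (U *ᵥ ((Uᵀ * A * U) *ᵥ Pi.single i 1)) = 0 := hkill _ (hUS _)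
        have h2 : vecMulVec w q *ᵥ Pi.single i 1 = q i • w := by
          funext j
          simp [Matrix.vecMulVec_apply, Matrix.mulVec, dotProduct, Pi.single_apply, mul_comm]
        rw [Matrix.mulVec_add, h1, h2, Matrix.mulVec_smul, hkill w hwS]
        simp
      · rcases hxw with rfl | rfl
        · -- x = v
          rw [hAv, Matrix.mulVec_sub, Matrix.mulVec_smul, hkill _ hwS, hkill _ hvS]
          simp
        · exact Submodule.mem_span_singleton_self z
    | zero => simp [Matrix.mulVec_zero]
    | add a b _ _ ha hb =>
      rw [Matrix.mulVec_add, Matrix.mulVec_add]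
      exact Submodule.add_mem _ ha hb
    | smul c a _ ha =>
      rw [Matrix.mulVec_smul, Matrix.mulVec_smul]
      exact Submodule.smul_mem _ _ ha
  -- each column of U₂ is in S
  have hcolS : ∀ i : Fin m, (fun j => U₂ j i) ∈ S :=
    fun i => Submodule.subset_span ⟨i, rfl⟩
  have hex : ∀ i : Fin m, ∃ c : ℝ, P *ᵥ (A *ᵥ (fun j => U₂ j i)) = c • z := by
    intro i
    obtain ⟨c, hc⟩ := Submodule.mem_span_singleton.mp (key _ (hcolS i))
    exact ⟨c, hc.symm⟩
  choose qhat hqhat using hex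
  refine ⟨qhat, ?_⟩
  show P * A * U₂ = vecMulVec (P *ᵥ (A *ᵥ w)) qhat
  ext i j
  rw [colapp (P * A) U₂ i j, ← Matrix.mulVec_mulVec, hqhat j]
  simp [Matrix.vecMulVec_apply, hz, mul_comm]
end

section
/- Let U be an n×r real matrix with orthonormal columns, w, v ∈ ℝⁿ, q ∈ ℝʳ, and s ∈ ℝ be such that (I − UUᵀ)AU = wqᵀ, the matrix A + sI is invertible, and v = (A + sI)⁻¹w. Let U₂ be an n×m real matrix with orthonormal columns whose column span equals the span of the columns of U together with v and w. Then (I − U₂U₂ᵀ) A U = 0 and (I − U₂U₂ᵀ) A v = 0. -/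
open Matrix MeasureTheory
open scoped Kronecker

theorem enriched_projection_annihilates {n r m : ℕ}
    (A : Matrix (Fin n) (Fin n) ℝ)
    (U : Matrix (Fin n) (Fin r) ℝ) (hU : Uᵀ * U = 1)
    (w v : Fin n → ℝ) (q : Fin r → ℝ) (s : ℝ)
    (hres : (1 - U * Uᵀ) * A * U = vecMulVec w q)
    (hinv : IsUnit (A + s • (1 : Matrix (Fin n) (Fin n) ℝ)))
    (hv : v = (A + s • (1 : Matrix (Fin n) (Fin n) ℝ))⁻¹ *ᵥ w)
    (U₂ : Matrix (Fin n) (Fin m) ℝ) (hU₂ : U₂ᵀ * U₂ = 1)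
    (hspan : Submodule.span ℝ (Set.range (fun i : Fin m => (fun j => U₂ j i : Fin n → ℝ)))
      = Submodule.span ℝ
          (Set.range (fun i : Fin r => (fun j => U j i : Fin n → ℝ)) ∪ {v, w})) :
    (1 - U₂ * U₂ᵀ) * A * U = 0 ∧ (1 - U₂ * U₂ᵀ) *ᵥ (A *ᵥ v) = 0 := by
  -- P₂ annihilates anything in the span of the columns of U₂
  have key : ∀ x : Fin n → ℝ,
      x ∈ Submodule.span ℝ (Set.range (fun i : Fin m => (fun j => U₂ j i : Fin n → ℝ))) →
      (1 - U₂ * U₂ᵀ) *ᵥ x = 0 := by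
    intro x hx
    have hrange : Set.range (fun i : Fin m => (fun j => U₂ j i : Fin n → ℝ))
        = Set.range U₂.col := by
      ext y
      constructor
      · rintro ⟨i, hi⟩; exact ⟨i, by funext j; exact congrFun hi j⟩
      · rintro ⟨i, hi⟩; exact ⟨i, by funext j; exact congrFun hi j⟩
    rw [hrange, ← Matrix.range_mulVecLin] at hx
    obtain ⟨c, hc⟩ := hx
    simp only [Matrix.mulVecLin_apply] at hc
    rw [← hc, Matrix.sub_mulVec, Matrix.one_mulVec, Matrix.mulVec_mulVec,
      Matrix.mul_assoc, hU₂, Matrix.mul_one, sub_self]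
  have hw : w ∈ Submodule.span ℝ
      (Set.range (fun i : Fin m => (fun j => U₂ j i : Fin n → ℝ))) := by
    rw [hspan]; exact Submodule.subset_span (Or.inr (Or.inr rfl))
  have hvm : v ∈ Submodule.span ℝ
      (Set.range (fun i : Fin m => (fun j => U₂ j i : Fin n → ℝ))) := by
    rw [hspan]; exact Submodule.subset_span (Or.inr (Or.inl rfl))
  have hP2w : (1 - U₂ * U₂ᵀ) *ᵥ w = 0 := key w hw
  have hP2v : (1 - U₂ * U₂ᵀ) *ᵥ v = 0 := key v hvm
  have hP2U : (1 - U₂ * U₂ᵀ) * U = 0 := by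
    ext i j
    have hmem : (fun k => U k j) ∈ Submodule.span ℝ
        (Set.range (fun i : Fin m => (fun j => U₂ j i : Fin n → ℝ))) := by
      rw [hspan]; exact Submodule.subset_span (Or.inl ⟨j, rfl⟩)
    have h2 := congrFun (key _ hmem) i
    simpa [Matrix.mulVec, Matrix.mul_apply, dotProduct] using h2
  constructor
  · have hexp : (1 - U * Uᵀ) * A * U = A * U - U * (Uᵀ * A * U) := by
      simp only [Matrix.sub_mul, Matrix.one_mul, Matrix.mul_assoc]
    have hAU : A * U = vecMulVec w q + U * (Uᵀ * A * U) := by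
      have := hres
      rw [hexp] at this
      exact eq_add_of_sub_eq this
    rw [Matrix.mul_assoc, hAU, Matrix.mul_add, ← Matrix.mul_assoc, hP2U, Matrix.zero_mul,
      add_zero]
    ext i j
    have hwi := congrFun hP2w i
    simp only [Matrix.mulVec, dotProduct, Pi.zero_apply] at hwi
    simp only [Matrix.mul_apply, Matrix.vecMulVec_apply, Matrix.zero_apply]
    calc ∑ k, ((1 - U₂ * U₂ᵀ) : Matrix (Fin n) (Fin n) ℝ) i k * (w k * q j)
        = (∑ k, ((1 - U₂ * U₂ᵀ) : Matrix (Fin n) (Fin n) ℝ) i k * w k) * q j := by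
          rw [Finset.sum_mul]; exact Finset.sum_congr rfl fun k _ => by ring
      _ = 0 := by rw [hwi, zero_mul]
  · have hmul : (A + s • (1 : Matrix (Fin n) (Fin n) ℝ)) *ᵥ v = w := by
      rw [hv, Matrix.mulVec_mulVec,
        Matrix.mul_nonsing_inv _ ((Matrix.isUnit_iff_isUnit_det _).mp hinv), Matrix.one_mulVec]
    have hAv : A *ᵥ v = w - s • v := by
      have h : A *ᵥ v + s • v = w := by
        rw [← hmul, Matrix.add_mulVec, Matrix.smul_mulVec, Matrix.one_mulVec]
      exact eq_sub_of_add_eq h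
    rw [hAv, Matrix.mulVec_sub, hP2w, Matrix.mulVec_smul, hP2v, smul_zero, sub_zero]
end
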